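/- arXiv:1203.4315 — 6 statements merged into one kernel-verified Lean document; each statement's English description precedes it below -/
import Mathlib

section
/- Let u₀ ∈ L^∞(ℝ) and let u(x,t) = (1/(2√(πt))) ∫_ℝ exp(−(x−y)²/(4t)) u₀(y) dy be the solution of the heat equation u_t = u_xx with initial value u₀. Then for all L > 0, t > 0 and a, b ∈ ℝ: sup_{x∈[−L,L]} |u(√t·x, t) − (a·F(−x) + b·F(x))| ≤ (1/(2√π)) ∫_0^∞ ρ_L(z)·(|u₀(−√t·z) − a| + |u₀(√t·z) − b|) dz, where F(z) = (1/(2√π)) ∫_{−∞}^z e^{−y²/4} dy and ρ_L(z) = sup_{z₀∈[−L,L]} e^{−(z−z₀)²/4}. -/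
open Filter Real MeasureTheory Set

lemma my_gauss_int {b : ℝ} (hb : 0 < b) (c : ℝ) :
    Integrable (fun z : ℝ => Real.exp (-(z - c)^2 / b)) := by
  have h := (integrable_exp_neg_mul_sq (b := 1/b) (by positivity)).comp_sub_right c
  convert h using 2 with z
  ring_nf

lemma my_gauss_mul_int {u : ℝ → ℝ} (hm : Measurable u) {C : ℝ} (hbd : ∀ x, |u x| ≤ C)
    {b : ℝ} (hb : 0 < b) (c : ℝ) :
    Integrable (fun z : ℝ => Real.exp (-(z - c)^2 / b) * u z) := by
  refine Integrable.mono' ((my_gauss_int hb c).const_mul C) ?_ ?_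
  · have : Measurable fun z : ℝ => Real.exp (-(z - c)^2 / b) * u z := by
      apply Measurable.mul _ hm
      exact Real.measurable_exp.comp ((((measurable_id.sub_const c).pow_const 2).neg).div_const b)
    exact this.aestronglyMeasurable
  · refine Filter.Eventually.of_forall fun z => ?_
    have h0 : (0:ℝ) < Real.exp (-(z - c)^2 / b) := Real.exp_pos _
    have hC : 0 ≤ C := (abs_nonneg _).trans (hbd 0)
    rw [Real.norm_eq_abs, abs_mul, abs_of_pos h0]
    calc Real.exp (-(z - c)^2 / b) * |u z| ≤ Real.exp (-(z - c)^2 / b) * C :=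
          mul_le_mul_of_nonneg_left (hbd z) h0.le
      _ = C * Real.exp (-(z - c)^2 / b) := mul_comm _ _

lemma my_shift (f : ℝ → ℝ) (c : ℝ) :
    ∫ y in Iio c, f y = ∫ z in Ioi (0:ℝ), f (c - z) := by
  rw [← integral_indicator measurableSet_Iio, ← integral_indicator measurableSet_Ioi]
  have h1 : ∀ z : ℝ, (Ioi (0:ℝ)).indicator (fun z => f (c - z)) z
      = (Iio c).indicator f (c - z) := by
    intro z
    by_cases hz : (0:ℝ) < z
    · rw [Set.indicator_of_mem (show z ∈ Ioi (0:ℝ) from hz),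
        Set.indicator_of_mem (show c - z ∈ Iio c by simp [hz])]
    · rw [Set.indicator_of_notMem (show z ∉ Ioi (0:ℝ) from hz),
        Set.indicator_of_notMem (show c - z ∉ Iio c by simpa using hz)]
  simp_rw [h1]
  exact (integral_sub_left_eq_self ((Iio c).indicator f) volume c).symm

set_option maxHeartbeats 1000000 in
theorem stmt_3 (u₀ : ℝ → ℝ) (hmeas : Measurable u₀) (C : ℝ) (hbd : ∀ x, |u₀ x| ≤ C)
    (u : ℝ → ℝ → ℝ)
    (hu : ∀ x t, 0 < t →
      u x t = (1 / (2 * Real.sqrt (π * t))) * ∫ y : ℝ, Real.exp (-(x - y)^2 / (4 * t)) * u₀ y)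
    (F : ℝ → ℝ) (hF : ∀ z, F z = (1 / (2 * Real.sqrt π)) * ∫ y in Iio z, Real.exp (-y^2 / 4))
    (ρ : ℝ → ℝ → ℝ)
    (hρ : ∀ L z, ρ L z = ⨆ z₀ : Icc (-L) L, Real.exp (-(z - (z₀ : ℝ))^2 / 4)) :
    ∀ L > 0, ∀ t > 0, ∀ a b : ℝ, ∀ x ∈ Icc (-L) L,
      |u (Real.sqrt t * x) t - (a * F (-x) + b * F x)| ≤
        (1 / (2 * Real.sqrt π)) *
          ∫ z in Ioi (0:ℝ),
            ρ L z * (|u₀ (-(Real.sqrt t) * z) - a| + |u₀ (Real.sqrt t * z) - b|) := by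
  intro L hL t ht a b x hx
  have hC : 0 ≤ C := (abs_nonneg _).trans (hbd 0)
  set s := Real.sqrt t with hs_def
  have hs : 0 < s := Real.sqrt_pos.mpr ht
  have hsqt : s^2 = t := Real.sq_sqrt ht.le
  have hπ : 0 < Real.sqrt π := Real.sqrt_pos.mpr Real.pi_pos
  set c0 : ℝ := 1 / (2 * Real.sqrt π) with hc0_def
  have hc0 : 0 < c0 := by positivity
  have h4 : (0:ℝ) < 4 := by norm_num
  -- ρ facts
  have hLL : -L ≤ L := by linarith
  have hne : Nonempty (Icc (-L) L) := ⟨⟨-L, by constructor <;> linarith⟩⟩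
  have hbdd : ∀ z : ℝ, BddAbove (range fun z₀ : Icc (-L) L => Real.exp (-(z - (z₀:ℝ))^2/4)) := by
    intro z
    refine ⟨1, ?_⟩
    rintro v ⟨⟨z₀, hz₀⟩, rfl⟩
    have : (0:ℝ) ≤ (z - z₀)^2 := sq_nonneg _
    exact Real.exp_le_one_iff.mpr (by linarith)
  have hρ_le : ∀ z : ℝ, ∀ y ∈ Icc (-L) L, Real.exp (-(z - y)^2/4) ≤ ρ L z := by
    intro z y hy
    rw [hρ]
    exact le_ciSup (hbdd z) ⟨y, hy⟩
  have hρ_nonneg : ∀ z : ℝ, 0 ≤ ρ L z := fun z =>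
    (Real.exp_pos _).le.trans (hρ_le z (-L) ⟨le_refl _, hLL⟩)
  have hρ_bound : ∀ z : ℝ, 0 ≤ z → ρ L z ≤ Real.exp (L^2/4) * Real.exp (-(z - L)^2/4) := by
    intro z hz
    rw [hρ, ← Real.exp_add]
    apply ciSup_le
    rintro ⟨z₀, hz₀⟩
    apply Real.exp_le_exp.mpr
    have h1 := hz₀.1
    have h2 := hz₀.2
    nlinarith [mul_nonneg hz (sub_nonneg.mpr h2), sq_nonneg z₀]
  have hρ_eq : ∀ z : ℝ, ρ L z = Real.exp (-(z - max (-L) (min L z))^2/4) := by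
    intro z
    set c := max (-L) (min L z) with hc_def
    have hcm : c ∈ Icc (-L) L := ⟨le_max_left _ _, max_le hLL (min_le_left _ _)⟩
    refine le_antisymm ?_ (hρ_le z c hcm)
    rw [hρ]
    apply ciSup_le
    rintro ⟨z₀, hz₀⟩
    apply Real.exp_le_exp.mpr
    have h1 := hz₀.1
    have h2 := hz₀.2
    rcases le_total z (-L) with hz1 | hz1
    · have hmin : min L z = z := min_eq_right (by linarith)
      have : c = -L := by rw [hc_def, hmin]; exact max_eq_left (by linarith)
      rw [this]; nlinarith
    · rcases le_total L z with hz2 | hz2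
      · have hmin : min L z = L := min_eq_left hz2
        have : c = L := by rw [hc_def, hmin]; exact max_eq_right hLL
        rw [this]; nlinarith
      · have hmin : min L z = z := min_eq_right hz2
        have : c = z := by rw [hc_def, hmin]; exact max_eq_right hz1
        rw [this]; nlinarith [sq_nonneg (z - z₀)]
  have hρ_meas : Measurable (ρ L) := by
    have : (ρ L) = fun z => Real.exp (-(z - max (-L) (min L z))^2/4) := funext hρ_eq
    rw [this]
    apply Real.measurable_exp.comp
    apply Measurable.div_const _ 4
    apply Measurable.neg
    apply Measurable.pow_const _ 2
    exact measurable_id.sub (measurable_const.max (measurable_const.min measurable_id))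
  -- Step 1 : rewrite u
  have key1 : u (s * x) t = c0 * ∫ z : ℝ, Real.exp (-(z - x)^2/4) * u₀ (s * z) := by
    rw [hu _ t ht]
    have h2 := Measure.integral_comp_mul_left (fun y => Real.exp (-(s*x - y)^2/(4*t)) * u₀ y) s
    have h3 : ∀ z : ℝ, Real.exp (-(s*x - s*z)^2/(4*t)) * u₀ (s*z)
        = Real.exp (-(z - x)^2/4) * u₀ (s*z) := by
      intro z
      congr 2
      have hst : (s*x - s*z)^2 = (z - x)^2 * t := by rw [← hsqt]; ring
      rw [hst]
      field_simp
    simp_rw [h3, smul_eq_mul] at h2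
    have habs : |s⁻¹| = s⁻¹ := abs_of_pos (inv_pos.mpr hs)
    rw [habs] at h2
    have h5 : (∫ y : ℝ, Real.exp (-(s*x - y)^2/(4*t)) * u₀ y)
        = s * ∫ z : ℝ, Real.exp (-(z - x)^2/4) * u₀ (s * z) := by
      rw [h2]; field_simp
    rw [h5, hc0_def, Real.sqrt_mul Real.pi_pos.le, ← hs_def]
    field_simp
  -- Integrability of the full-line integrand
  have hint_full : Integrable (fun z : ℝ => Real.exp (-(z - x)^2/4) * u₀ (s * z)) :=
    my_gauss_mul_int (hmeas.comp (measurable_const_mul s)) (fun z => hbd (s * z)) h4 x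
  -- Step 2 : split and reflect
  have key2 : (∫ z : ℝ, Real.exp (-(z - x)^2/4) * u₀ (s * z))
      = (∫ z in Ioi (0:ℝ), Real.exp (-(z + x)^2/4) * u₀ (-s * z))
        + ∫ z in Ioi (0:ℝ), Real.exp (-(z - x)^2/4) * u₀ (s * z) := by
    rw [← intervalIntegral.integral_Iic_add_Ioi
      (hint_full.integrableOn : IntegrableOn _ (Iic (0:ℝ)) volume)
      (hint_full.integrableOn : IntegrableOn _ (Ioi (0:ℝ)) volume)]
    congr 1
    have := integral_comp_neg_Ioi (0:ℝ) (fun z => Real.exp (-(z - x)^2/4) * u₀ (s * z))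
    rw [neg_zero] at this
    rw [← this]
    refine setIntegral_congr_fun measurableSet_Ioi fun z _ => ?_
    beta_reduce
    rw [show (-z - x)^2 = (z + x)^2 from by ring, show s * -z = -s * z from by ring]
  -- Step 3 : F values
  have keyF : ∀ c : ℝ, F c = c0 * ∫ z in Ioi (0:ℝ), Real.exp (-(c - z)^2/4) := by
    intro c
    rw [hF c]
    congr 1
    exact my_shift (fun y => Real.exp (-y^2/4)) c
  have hFx : F x = c0 * ∫ z in Ioi (0:ℝ), Real.exp (-(z - x)^2/4) := by
    rw [keyF x]
    congr 1
    refine setIntegral_congr_fun measurableSet_Ioi fun z _ => ?_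
    rw [show (x - z)^2 = (z - x)^2 from by ring]
  have hFnx : F (-x) = c0 * ∫ z in Ioi (0:ℝ), Real.exp (-(z + x)^2/4) := by
    rw [keyF (-x)]
    congr 1
    refine setIntegral_congr_fun measurableSet_Ioi fun z _ => ?_
    rw [show (-x - z)^2 = (z + x)^2 from by ring]
  -- integrability on Ioi 0 of the pieces
  have hip : ∀ c : ℝ, IntegrableOn (fun z : ℝ => Real.exp (-(z - c)^2/4)) (Ioi 0) :=
    fun c => (my_gauss_int h4 c).integrableOn
  have hi1 : IntegrableOn (fun z : ℝ => Real.exp (-(z + x)^2/4) * u₀ (-s * z)) (Ioi 0) := by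
    have := (my_gauss_mul_int (hmeas.comp (measurable_const_mul (-s)))
      (fun z => hbd (-s * z)) h4 (-x)).integrableOn (s := Ioi 0)
    refine this.congr_fun (fun z _ => ?_) measurableSet_Ioi
    beta_reduce
    rw [show (z - -x)^2 = (z + x)^2 from by ring]
    rfl
  have hi2 : IntegrableOn (fun z : ℝ => Real.exp (-(z - x)^2/4) * u₀ (s * z)) (Ioi 0) :=
    hint_full.integrableOn
  have hj1 : IntegrableOn (fun z : ℝ => Real.exp (-(z + x)^2/4)) (Ioi 0) := by
    refine (hip (-x)).congr_fun (fun z _ => ?_) measurableSet_Ioi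
    beta_reduce
    rw [show (z - -x)^2 = (z + x)^2 from by ring]
  have hj2 : IntegrableOn (fun z : ℝ => Real.exp (-(z - x)^2/4)) (Ioi 0) := hip x
  -- Step 4 : the difference as a single integral
  set D : ℝ → ℝ := fun z => Real.exp (-(z + x)^2/4) * (u₀ (-s * z) - a)
      + Real.exp (-(z - x)^2/4) * (u₀ (s * z) - b) with hD_def
  have hj1a : IntegrableOn (fun z : ℝ => a * Real.exp (-(z + x)^2/4)) (Ioi 0) volume :=
    hj1.const_mul a
  have hj2b : IntegrableOn (fun z : ℝ => b * Real.exp (-(z - x)^2/4)) (Ioi 0) volume :=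
    hj2.const_mul b
  have hPQ1 : IntegrableOn (fun z : ℝ => Real.exp (-(z + x)^2/4) * u₀ (-s * z)
      - a * Real.exp (-(z + x)^2/4)) (Ioi 0) volume := hi1.sub hj1a
  have hPQ2 : IntegrableOn (fun z : ℝ => Real.exp (-(z - x)^2/4) * u₀ (s * z)
      - b * Real.exp (-(z - x)^2/4)) (Ioi 0) volume := hi2.sub hj2b
  have hD_int : IntegrableOn D (Ioi 0) volume := by
    have : IntegrableOn (fun z : ℝ => (Real.exp (-(z + x)^2/4) * u₀ (-s * z)
        - a * Real.exp (-(z + x)^2/4)) + (Real.exp (-(z - x)^2/4) * u₀ (s * z)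
        - b * Real.exp (-(z - x)^2/4))) (Ioi 0) volume := hPQ1.add hPQ2
    refine this.congr_fun (fun z _ => ?_) measurableSet_Ioi
    rw [hD_def]
    ring
  have hadd : ∫ z in Ioi (0:ℝ), D z
      = ((∫ z in Ioi (0:ℝ), Real.exp (-(z + x)^2/4) * u₀ (-s * z))
          - a * ∫ z in Ioi (0:ℝ), Real.exp (-(z + x)^2/4))
        + ((∫ z in Ioi (0:ℝ), Real.exp (-(z - x)^2/4) * u₀ (s * z))
          - b * ∫ z in Ioi (0:ℝ), Real.exp (-(z - x)^2/4)) := by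
    rw [show (∫ z in Ioi (0:ℝ), D z) = ∫ z in Ioi (0:ℝ),
        ((Real.exp (-(z + x)^2/4) * u₀ (-s * z) - a * Real.exp (-(z + x)^2/4))
         + (Real.exp (-(z - x)^2/4) * u₀ (s * z) - b * Real.exp (-(z - x)^2/4))) from
      setIntegral_congr_fun measurableSet_Ioi (fun z _ => by rw [hD_def]; ring)]
    rw [integral_add hPQ1 hPQ2, integral_sub hi1 hj1a, integral_sub hi2 hj2b,
      integral_const_mul, integral_const_mul]
  have key4 : u (s * x) t - (a * F (-x) + b * F x) = c0 * ∫ z in Ioi (0:ℝ), D z := by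
    rw [key1, key2, hFx, hFnx, hadd]
    ring
  -- Step 5 : the bound
  rw [key4]
  have hRint : IntegrableOn
      (fun z : ℝ => ρ L z * (|u₀ (-s * z) - a| + |u₀ (s * z) - b|)) (Ioi 0) := by
    refine Integrable.mono'
      (((my_gauss_int h4 L).const_mul (Real.exp (L^2/4))).mul_const
        (2*C + |a| + |b|)).integrableOn ?_ ?_
    · apply Measurable.aestronglyMeasurable
      apply hρ_meas.mul
      apply Measurable.add
      · exact ((hmeas.comp (measurable_const_mul (-s))).sub_const a).abs
      · exact ((hmeas.comp (measurable_const_mul s)).sub_const b).abs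
    · filter_upwards [ae_restrict_mem measurableSet_Ioi] with z hz
      have hz' : (0:ℝ) ≤ z := le_of_lt hz
      have hsum : |u₀ (-s * z) - a| + |u₀ (s * z) - b| ≤ 2*C + |a| + |b| := by
        have h1 : |u₀ (-s * z) - a| ≤ C + |a| := (abs_sub _ _).trans (by
          have := hbd (-s * z); linarith)
        have h2 : |u₀ (s * z) - b| ≤ C + |b| := (abs_sub _ _).trans (by
          have := hbd (s * z); linarith)
        linarith
      have hsum0 : 0 ≤ |u₀ (-s * z) - a| + |u₀ (s * z) - b| :=
        add_nonneg (abs_nonneg _) (abs_nonneg _)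
      rw [Real.norm_eq_abs, abs_of_nonneg (mul_nonneg (hρ_nonneg z) hsum0)]
      calc ρ L z * (|u₀ (-s * z) - a| + |u₀ (s * z) - b|)
          ≤ (Real.exp (L^2/4) * Real.exp (-(z - L)^2/4)) * (2*C + |a| + |b|) :=
            mul_le_mul (hρ_bound z hz') hsum hsum0
              (by positivity)
        _ = Real.exp (L^2/4) * Real.exp (-(z - L)^2/4) * (2*C + |a| + |b|) := by ring
  have hptwise : ∀ z ∈ Ioi (0:ℝ),
      |D z| ≤ ρ L z * (|u₀ (-s * z) - a| + |u₀ (s * z) - b|) := by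
    intro z _
    have e1 : Real.exp (-(z + x)^2/4) ≤ ρ L z := by
      have := hρ_le z (-x) ⟨by linarith [hx.2], by linarith [hx.1]⟩
      calc Real.exp (-(z + x)^2/4) = Real.exp (-(z - (-x))^2/4) := by congr 1; ring
        _ ≤ ρ L z := this
    have e2 : Real.exp (-(z - x)^2/4) ≤ ρ L z := hρ_le z x hx
    calc |D z| ≤ Real.exp (-(z + x)^2/4) * |u₀ (-s * z) - a|
        + Real.exp (-(z - x)^2/4) * |u₀ (s * z) - b| := by
          rw [hD_def]
          refine (abs_add_le _ _).trans ?_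
          rw [abs_mul, abs_mul, abs_of_pos (Real.exp_pos _), abs_of_pos (Real.exp_pos _)]
      _ ≤ ρ L z * |u₀ (-s * z) - a| + ρ L z * |u₀ (s * z) - b| :=
          add_le_add (mul_le_mul_of_nonneg_right e1 (abs_nonneg _))
            (mul_le_mul_of_nonneg_right e2 (abs_nonneg _))
      _ = ρ L z * (|u₀ (-s * z) - a| + |u₀ (s * z) - b|) := by ring
  calc |c0 * ∫ z in Ioi (0:ℝ), D z| = c0 * |∫ z in Ioi (0:ℝ), D z| := by
        rw [abs_mul, abs_of_pos hc0]
    _ ≤ c0 * ∫ z in Ioi (0:ℝ), |D z| := by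
        apply mul_le_mul_of_nonneg_left _ hc0.le
        exact (norm_integral_le_integral_norm D)
    _ ≤ c0 * ∫ z in Ioi (0:ℝ), ρ L z * (|u₀ (-s * z) - a| + |u₀ (s * z) - b|) := by
        apply mul_le_mul_of_nonneg_left _ hc0.le
        exact setIntegral_mono_on hD_int.abs hRint measurableSet_Ioi hptwise
end

section
/- Let u₀ ∈ L^∞(ℝ) be C¹ on ℝ \ {0} with lim_{|x|→∞} |x·u₀'(x)| = 0, and let u(x,t) be the heat-kernel convolution solution of u_t = u_xx with initial value u₀. Then for every L > 0, lim_{t→∞} sup_{x∈[−L,L]} |u(√t·x, t) − (F(−x)·u₀(−√t) + F(x)·u₀(√t))| = 0, where F(z) = (1/(2√π)) ∫_{−∞}^z e^{−y²/4} dy. -/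
open Filter Real MeasureTheory Set

-- Gaussian kernel basics
lemma hw6_phi_eq : (fun w : ℝ => Real.exp (-w^2/4)) = (fun w : ℝ => Real.exp (-(4⁻¹:ℝ) * w^2)) := by
  funext w; congr 1; ring

lemma hw6_phi_int : Integrable (fun w : ℝ => Real.exp (-w^2/4)) := by
  rw [hw6_phi_eq]; exact integrable_exp_neg_mul_sq (by norm_num)

lemma hw6_phi_le_one (w : ℝ) : Real.exp (-w^2/4) ≤ 1 := by
  rw [show (1:ℝ) = Real.exp 0 by simp]
  exact Real.exp_le_exp.mpr (by nlinarith [sq_nonneg w])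

lemma hw6_phi_int_shift (x : ℝ) : Integrable (fun z : ℝ => Real.exp (-(x - z)^2/4)) := by
  have h : (fun z : ℝ => Real.exp (-(x - z)^2/4)) = fun z => Real.exp (-(z - x)^2/4) := by
    funext z; congr 1; ring
  rw [h]; exact hw6_phi_int.comp_sub_right x

lemma hw6_phi_abs_int : Integrable (fun w : ℝ => |w| * Real.exp (-w^2/4)) := by
  have h := (integrable_mul_exp_neg_mul_sq (b := (4⁻¹:ℝ)) (by norm_num)).abs
  have he : (fun w : ℝ => |w * Real.exp (-(4⁻¹:ℝ) * w^2)|) = fun w : ℝ => |w| * Real.exp (-w^2/4) := by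
    funext w
    rw [abs_mul, abs_of_pos (Real.exp_pos _)]
    congr 2; ring
  rwa [he] at h

-- translation on half-lines
lemma hw6_shift_Iic (g : ℝ → ℝ) (a c : ℝ) : ∫ w in Iic c, g (w + a) = ∫ w in Iic (c + a), g w := by
  rw [← integral_indicator measurableSet_Iic, ← integral_indicator measurableSet_Iic,
    ← integral_add_right_eq_self (fun w => (Iic (c+a)).indicator g w) a]
  congr 1; funext w
  by_cases h : w ≤ c
  · simp [Set.indicator_apply, h, add_le_add_iff_right]
  · simp [Set.indicator_apply, h, add_le_add_iff_right]

lemma hw6_shift_Ioi (g : ℝ → ℝ) (a c : ℝ) : ∫ w in Ioi c, g (w + a) = ∫ w in Ioi (c + a), g w := by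
  rw [← integral_indicator measurableSet_Ioi, ← integral_indicator measurableSet_Ioi,
    ← integral_add_right_eq_self (fun w => (Ioi (c+a)).indicator g w) a]
  congr 1; funext w
  by_cases h : c < w
  · simp [Set.indicator_apply, h, add_lt_add_iff_right]
  · simp [Set.indicator_apply, h, add_lt_add_iff_right]

lemma hw6_ker_Iio (x : ℝ) :
    ∫ z in Iio (0:ℝ), Real.exp (-(x - z)^2/4) = ∫ y in Iio (-x), Real.exp (-y^2/4) := by
  rw [← integral_Iic_eq_integral_Iio, ← integral_Iic_eq_integral_Iio]
  have h1 : ∫ z in Iic (0:ℝ), Real.exp (-(x - z)^2/4)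
      = ∫ z in Iic (0:ℝ), (fun y : ℝ => Real.exp (-y^2/4)) (z + (-x)) := by
    apply setIntegral_congr_fun measurableSet_Iic
    intro z _; simp only; congr 1; ring
  rw [h1]
  calc ∫ z in Iic (0:ℝ), (fun y : ℝ => Real.exp (-y^2/4)) (z + (-x))
      = ∫ y in Iic ((0:ℝ) + (-x)), Real.exp (-y^2/4) :=
        hw6_shift_Iic (fun y : ℝ => Real.exp (-y^2/4)) (-x) 0
    _ = ∫ t in Iic (-x), Real.exp (-t^2/4) := by norm_num

lemma hw6_ker_Ici (x : ℝ) :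
    ∫ z in Ici (0:ℝ), Real.exp (-(x - z)^2/4) = ∫ y in Iio x, Real.exp (-y^2/4) := by
  rw [integral_Ici_eq_integral_Ioi]
  have h1 : ∫ z in Ioi (0:ℝ), Real.exp (-(x - z)^2/4)
      = ∫ z in Ioi (0:ℝ), (fun y : ℝ => Real.exp (-(y + x)^2/4)) (-z) := by
    apply setIntegral_congr_fun measurableSet_Ioi
    intro z _; simp only; congr 1; ring
  rw [h1, integral_comp_neg_Ioi (0:ℝ) (fun y : ℝ => Real.exp (-(y + x)^2/4))]
  have h2 : ∫ y in Iic (-(0:ℝ)), Real.exp (-(y + x)^2/4)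
      = ∫ y in Iic (0:ℝ), (fun w : ℝ => Real.exp (-w^2/4)) (y + x) := by
    norm_num
  rw [h2]
  calc ∫ y in Iic (0:ℝ), (fun w : ℝ => Real.exp (-w^2/4)) (y + x)
      = ∫ w in Iic ((0:ℝ) + x), Real.exp (-w^2/4) :=
        hw6_shift_Iic (fun w : ℝ => Real.exp (-w^2/4)) x 0
    _ = ∫ w in Iio x, Real.exp (-w^2/4) := by
        rw [zero_add, integral_Iic_eq_integral_Iio]

lemma hw6_int_mul (x : ℝ) (v : ℝ → ℝ) (hv : Measurable v) (c : ℝ) (hc : ∀ z, |v z| ≤ c) :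
    Integrable (fun z : ℝ => Real.exp (-(x - z)^2/4) * v z) := by
  have h := (hw6_phi_int_shift x).bdd_mul hv.aestronglyMeasurable
    (Filter.Eventually.of_forall fun z => by simpa [Real.norm_eq_abs] using hc z)
  have he : (fun z : ℝ => v z * Real.exp (-(x - z)^2/4))
      = fun z : ℝ => Real.exp (-(x - z)^2/4) * v z := by funext z; ring
  rwa [he] at h

lemma hw6_step_integral (x a b : ℝ) :
    ∫ z : ℝ, Real.exp (-(x - z)^2/4) * (if z < 0 then a else b)
      = (∫ z in Iio (0:ℝ), Real.exp (-(x - z)^2/4)) * a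
        + (∫ z in Ici (0:ℝ), Real.exp (-(x - z)^2/4)) * b := by
  have hv : Measurable (fun z : ℝ => if z < 0 then a else b) := by
    apply Measurable.ite _ measurable_const measurable_const
    exact measurableSet_Iio (a := (0:ℝ))
  have hint : Integrable (fun z : ℝ => Real.exp (-(x - z)^2/4) * (if z < 0 then a else b)) :=
    hw6_int_mul x _ hv (max |a| |b|) (fun z => by
      by_cases h : z < 0 <;> simp [h, le_max_left, le_max_right])
  rw [← intervalIntegral.integral_Iio_add_Ici (b := (0:ℝ)) hint.integrableOn hint.integrableOn]
  congr 1
  · rw [← integral_mul_const]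
    apply setIntegral_congr_fun measurableSet_Iio
    intro z hz; simp [if_pos (mem_Iio.mp hz)]
  · rw [← integral_mul_const]
    apply setIntegral_congr_fun measurableSet_Ici
    intro z hz
    simp [if_neg (not_lt.mpr (mem_Ici.mp hz))]

lemma hw6_gauss_weight_int' (x a : ℝ) (ha : 0 ≤ a) :
    Integrable (fun w : ℝ => Real.exp (-w^2/4) * (a + |w + x|)) := by
    have hg : Integrable (fun w : ℝ => Real.exp (-w^2/4) * (a + |x|) + |w| * Real.exp (-w^2/4)) :=
      (hw6_phi_int.mul_const _).add hw6_phi_abs_int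
    apply hg.mono
    · apply Measurable.aestronglyMeasurable
      apply Measurable.mul
      · exact (measurable_id.pow_const 2).neg.div_const 4 |>.exp
      · exact measurable_const.add ((measurable_id.add_const x).abs)
    · filter_upwards with w
      have h1 : |w + x| ≤ |w| + |x| := abs_add_le _ _
      have h2 : (0:ℝ) < Real.exp (-w^2/4) := Real.exp_pos _
      have h3 : (0:ℝ) ≤ Real.exp (-w^2/4) * (a + |w + x|) :=
        mul_nonneg h2.le (add_nonneg ha (abs_nonneg _))
      have h4 : (0:ℝ) ≤ Real.exp (-w^2/4) * (a + |x|) + |w| * Real.exp (-w^2/4) :=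
        add_nonneg (mul_nonneg h2.le (add_nonneg ha (abs_nonneg _)))
          (mul_nonneg (abs_nonneg _) h2.le)
      rw [Real.norm_eq_abs, Real.norm_eq_abs, abs_of_nonneg h3, abs_of_nonneg h4]
      nlinarith [abs_nonneg w]

lemma hw6_gauss_weight_int (x a : ℝ) (ha : 0 ≤ a) :
    Integrable (fun z : ℝ => Real.exp (-(x - z)^2/4) * (a + |z|)) := by
  have h := (hw6_gauss_weight_int' x a ha).comp_sub_right x
  have he : (fun z : ℝ => (fun w : ℝ => Real.exp (-w^2/4) * (a + |w + x|)) (z - x))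
      = fun z : ℝ => Real.exp (-(x - z)^2/4) * (a + |z|) := by
    funext z; simp only
    rw [sub_add_cancel]
    congr 2; ring
  rwa [he] at h

-- FTC estimates
lemma hw6_ftc_pos (u₀ : ℝ → ℝ) (hC1 : ContDiffOn ℝ 1 u₀ {(0:ℝ)}ᶜ) {ε r a b : ℝ}
    (hε : 0 ≤ ε) (hr : 0 < r) (h : ∀ s : ℝ, r ≤ |s| → |s * deriv u₀ s| ≤ ε)
    (ha : r ≤ a) (hab : a ≤ b) :
    |u₀ b - u₀ a| ≤ ε * Real.log (b / a) := by
  have ha0 : 0 < a := hr.trans_le ha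
  have hb0 : 0 < b := ha0.trans_le hab
  have hsub : uIcc a b ⊆ {(0:ℝ)}ᶜ := by
    intro y hy
    rw [uIcc_of_le hab] at hy
    exact mem_compl_singleton_iff.mpr (ne_of_gt (ha0.trans_le hy.1))
  have hdiff : ∀ y ∈ uIcc a b, DifferentiableAt ℝ u₀ y := fun y hy =>
    (hC1.differentiableOn one_ne_zero).differentiableAt
      (IsOpen.mem_nhds isOpen_compl_singleton (hsub hy))
  have hcont : ContinuousOn (deriv u₀) (uIcc a b) :=
    (hC1.continuousOn_deriv_of_isOpen isOpen_compl_singleton le_rfl).mono hsub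
  have hftc : ∫ y in a..b, deriv u₀ y = u₀ b - u₀ a :=
    intervalIntegral.integral_deriv_eq_sub' u₀ rfl hdiff hcont
  rw [← hftc]
  have hg : ContinuousOn (fun s : ℝ => ε * (1/s)) (uIcc a b) := by
    apply continuousOn_const.mul
    apply ContinuousOn.div continuousOn_const continuousOn_id
    intro y hy
    rw [uIcc_of_le hab] at hy
    exact ne_of_gt (ha0.trans_le hy.1)
  have hInt : IntervalIntegrable (fun s : ℝ => ε * (1/s)) volume a b := hg.intervalIntegrable
  have hbound : ∀ᵐ s ∂(volume.restrict (Set.uIoc a b)), ‖deriv u₀ s‖ ≤ ε * (1/s) := by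
    rw [ae_restrict_iff' measurableSet_uIoc]
    filter_upwards with s hs
    rw [uIoc_of_le hab] at hs
    obtain ⟨hsa, hsb⟩ := hs
    have hs0 : 0 < s := ha0.trans hsa
    have hh := h s (by rw [abs_of_pos hs0]; linarith)
    rw [abs_mul, abs_of_pos hs0] at hh
    rw [Real.norm_eq_abs, mul_one_div, le_div_iff₀ hs0]
    nlinarith [abs_nonneg (deriv u₀ s)]
  calc ‖∫ y in a..b, deriv u₀ y‖ ≤ |∫ s in a..b, ε * (1/s)| :=
        intervalIntegral.norm_integral_le_abs_of_norm_le hbound hInt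
    _ = ε * Real.log (b / a) := by
        rw [intervalIntegral.integral_const_mul, integral_one_div]
        · rw [abs_mul, abs_of_nonneg hε, abs_of_nonneg (Real.log_nonneg ((one_le_div ha0).mpr hab))]
        · intro h0
          rw [uIcc_of_le hab] at h0
          exact absurd rfl (ne_of_gt (ha0.trans_le h0.1))

lemma hw6_ftc_neg (u₀ : ℝ → ℝ) (hC1 : ContDiffOn ℝ 1 u₀ {(0:ℝ)}ᶜ) {ε r a b : ℝ}
    (hε : 0 ≤ ε) (hr : 0 < r) (h : ∀ s : ℝ, r ≤ |s| → |s * deriv u₀ s| ≤ ε)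
    (hb : b ≤ -r) (hab : a ≤ b) :
    |u₀ b - u₀ a| ≤ ε * Real.log (a / b) := by
  have hb0 : b < 0 := lt_of_le_of_lt hb (by linarith)
  have ha0 : a < 0 := lt_of_le_of_lt hab hb0
  have hsub : uIcc a b ⊆ {(0:ℝ)}ᶜ := by
    intro y hy
    rw [uIcc_of_le hab] at hy
    exact mem_compl_singleton_iff.mpr (ne_of_lt (lt_of_le_of_lt hy.2 hb0))
  have hdiff : ∀ y ∈ uIcc a b, DifferentiableAt ℝ u₀ y := fun y hy =>
    (hC1.differentiableOn one_ne_zero).differentiableAt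
      (IsOpen.mem_nhds isOpen_compl_singleton (hsub hy))
  have hcont : ContinuousOn (deriv u₀) (uIcc a b) :=
    (hC1.continuousOn_deriv_of_isOpen isOpen_compl_singleton le_rfl).mono hsub
  have hftc : ∫ y in a..b, deriv u₀ y = u₀ b - u₀ a :=
    intervalIntegral.integral_deriv_eq_sub' u₀ rfl hdiff hcont
  rw [← hftc]
  have hg : ContinuousOn (fun s : ℝ => ε * (1/(-s))) (uIcc a b) := by
    apply continuousOn_const.mul
    apply ContinuousOn.div continuousOn_const continuousOn_id.neg
    intro y hy h0
    rw [uIcc_of_le hab] at hy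
    have hy0 : y < 0 := lt_of_le_of_lt hy.2 hb0
    simp only [Pi.neg_apply, id_eq, neg_eq_zero] at h0
    exact absurd h0 (ne_of_lt hy0)
  have hInt : IntervalIntegrable (fun s : ℝ => ε * (1/(-s))) volume a b := hg.intervalIntegrable
  have hbound : ∀ᵐ s ∂(volume.restrict (Set.uIoc a b)), ‖deriv u₀ s‖ ≤ ε * (1/(-s)) := by
    rw [ae_restrict_iff' measurableSet_uIoc]
    filter_upwards with s hs
    rw [uIoc_of_le hab] at hs
    obtain ⟨hsa, hsb⟩ := hs
    have hs0 : s < 0 := lt_of_le_of_lt hsb hb0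
    have hh := h s (by rw [abs_of_neg hs0]; linarith)
    rw [abs_mul, abs_of_neg hs0] at hh
    rw [Real.norm_eq_abs, mul_one_div, le_div_iff₀ (by linarith : (0:ℝ) < -s)]
    nlinarith [abs_nonneg (deriv u₀ s)]
  calc ‖∫ y in a..b, deriv u₀ y‖ ≤ |∫ s in a..b, ε * (1/(-s))| :=
        intervalIntegral.norm_integral_le_abs_of_norm_le hbound hInt
    _ = ε * Real.log (a / b) := by
        have hcomp : ∫ s in a..b, ε * (1/(-s)) = ε * ∫ s in a..b, (fun y : ℝ => 1/y) (-s) :=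
          intervalIntegral.integral_const_mul _ _
        rw [hcomp, intervalIntegral.integral_comp_neg (fun y : ℝ => 1/y), integral_one_div]
        · rw [neg_div_neg_eq, abs_mul, abs_of_nonneg hε,
            abs_of_nonneg (Real.log_nonneg ?_)]
          rw [le_div_iff_of_neg hb0]; linarith
        · intro h0
          rw [uIcc_of_le (by linarith : -b ≤ -a)] at h0
          have : (0:ℝ) < -b := by linarith
          linarith [h0.1]
set_option maxHeartbeats 1000000 in
theorem stmt_6 (u₀ : ℝ → ℝ) (hmeas : Measurable u₀) (C : ℝ) (hbd : ∀ x, |u₀ x| ≤ C)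
    (hC1 : ContDiffOn ℝ 1 u₀ {(0:ℝ)}ᶜ)
    (hosc : Tendsto (fun x => |x * deriv u₀ x|) (cocompact ℝ) (nhds 0))
    (u : ℝ → ℝ → ℝ)
    (hu : ∀ x t, 0 < t →
      u x t = (1 / (2 * Real.sqrt (π * t))) * ∫ y : ℝ, Real.exp (-(x - y)^2 / (4 * t)) * u₀ y)
    (F : ℝ → ℝ) (hF : ∀ z, F z = (1 / (2 * Real.sqrt π)) * ∫ y in Iio z, Real.exp (-y^2 / 4)) :
    ∀ L > 0,
      Tendsto
        (fun t => ⨆ x : Icc (-L) L,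
          |u (Real.sqrt t * (x : ℝ)) t -
            (F (-(x : ℝ)) * u₀ (-(Real.sqrt t)) + F (x : ℝ) * u₀ (Real.sqrt t))|)
        atTop (nhds 0) := by
  intro L hL
  have hL0 : (0:ℝ) < (L:ℝ) := by exact_mod_cast hL
  have hC0 : 0 ≤ C := (abs_nonneg _).trans (hbd 0)
  have hπ : 0 < Real.sqrt π := Real.sqrt_pos.mpr Real.pi_pos
  -- key decomposition
  have key : ∀ t : ℝ, 0 < t → ∀ x : ℝ,
      u (Real.sqrt t * x) t - (F (-x) * u₀ (-Real.sqrt t) + F x * u₀ (Real.sqrt t))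
        = (1 / (2 * Real.sqrt π)) * ∫ z : ℝ, Real.exp (-(x - z)^2/4) *
            (u₀ (Real.sqrt t * z) - (if z < 0 then u₀ (-Real.sqrt t) else u₀ (Real.sqrt t))) := by
    intro t ht x
    set s := Real.sqrt t with hs
    have hs0 : 0 < s := Real.sqrt_pos.mpr ht
    have hs2 : s^2 = t := Real.sq_sqrt ht.le
    have hmeas2 : Measurable (fun z : ℝ => u₀ (s * z)) := hmeas.comp (measurable_const_mul s)
    have hA : Integrable (fun z : ℝ => Real.exp (-(x - z)^2/4) * u₀ (s * z)) :=
      hw6_int_mul x _ hmeas2 C (fun z => hbd _)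
    have hstepmeas : Measurable (fun z : ℝ => if z < 0 then u₀ (-s) else u₀ s) := by
      apply Measurable.ite _ measurable_const measurable_const
      exact measurableSet_Iio (a := (0:ℝ))
    have hB : Integrable (fun z : ℝ => Real.exp (-(x - z)^2/4) *
        (if z < 0 then u₀ (-s) else u₀ s)) :=
      hw6_int_mul x _ hstepmeas C (fun z => by by_cases h : z < 0 <;> simp [h, hbd])
    have hu1 : u (s * x) t = (1 / (2 * Real.sqrt π)) *
        ∫ z : ℝ, Real.exp (-(x - z)^2/4) * u₀ (s * z) := by
      rw [hu _ t ht]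
      have hmul := MeasureTheory.Measure.integral_comp_mul_left
        (fun y => Real.exp (-(s*x - y)^2/(4*t)) * u₀ y) s
      have heq : (fun z : ℝ => Real.exp (-(s*x - s*z)^2/(4*t)) * u₀ (s*z))
          = fun z : ℝ => Real.exp (-(x - z)^2/4) * u₀ (s * z) := by
        funext z
        congr 2
        rw [show s*x - s*z = s*(x-z) by ring, mul_pow, hs2]
        field_simp
      rw [heq] at hmul
      rw [abs_of_pos (inv_pos.mpr hs0), smul_eq_mul] at hmul
      have h2 : ∫ y : ℝ, Real.exp (-(s*x - y)^2/(4*t)) * u₀ y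
          = s * ∫ z : ℝ, Real.exp (-(x - z)^2/4) * u₀ (s * z) := by
        rw [hmul]; field_simp
      rw [h2, show π * t = π * s^2 by rw [hs2], Real.sqrt_mul Real.pi_pos.le,
        Real.sqrt_sq hs0.le]
      field_simp
    have hF1 : F (-x) * u₀ (-s) + F x * u₀ s = (1 / (2 * Real.sqrt π)) *
        ∫ z : ℝ, Real.exp (-(x - z)^2/4) * (if z < 0 then u₀ (-s) else u₀ s) := by
      rw [hF, hF, hw6_step_integral x (u₀ (-s)) (u₀ s), hw6_ker_Iio x, hw6_ker_Ici x]
      ring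
    rw [hu1, hF1, ← mul_sub, ← integral_sub hA hB]
    have hfe : (fun z : ℝ => Real.exp (-(x - z)^2/4) * u₀ (s * z)
          - Real.exp (-(x - z)^2/4) * (if z < 0 then u₀ (-s) else u₀ s))
        = fun z : ℝ => Real.exp (-(x - z)^2/4) *
            (u₀ (s * z) - (if z < 0 then u₀ (-s) else u₀ s)) := by
      funext z; ring
    rw [hfe]
  rw [Metric.tendsto_atTop]
  intro ε₀ hε₀
  -- choose δ
  set δ : ℝ := min 1 (ε₀ * Real.sqrt π / (8 * C + 8)) with hδdef
  have hδpos : 0 < δ := lt_min one_pos (by positivity)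
  have hδ1 : δ ≤ 1 := min_le_left _ _
  have hδle : δ ≤ ε₀ * Real.sqrt π / (8 * C + 8) := min_le_right _ _
  set A : ℝ := |Real.log δ| with hA
  have hA0 : 0 ≤ A := abs_nonneg _
  set K : ℝ := ∫ w : ℝ, Real.exp (-w^2/4) * (A + |w| + L) with hKdef
  have hKint : Integrable (fun w : ℝ => Real.exp (-w^2/4) * (A + |w| + L)) := by
    have h1 : Integrable (fun w : ℝ => Real.exp (-w^2/4) * (A + L) + |w| * Real.exp (-w^2/4)) :=
      (hw6_phi_int.mul_const _).add hw6_phi_abs_int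
    have he : (fun w : ℝ => Real.exp (-w^2/4) * (A + L) + |w| * Real.exp (-w^2/4))
        = fun w : ℝ => Real.exp (-w^2/4) * (A + |w| + L) := by funext w; ring
    rwa [he] at h1
  have hK0 : 0 ≤ K := integral_nonneg (fun w =>
    mul_nonneg (Real.exp_pos _).le (add_nonneg (add_nonneg hA0 (abs_nonneg _)) hL0.le))
  set ε' : ℝ := ε₀ * Real.sqrt π / (2 * (K + 1)) with hε'def
  have hε'pos : 0 < ε' := by positivity
  -- find R
  obtain ⟨R, hRpos, hR⟩ : ∃ R : ℝ, 0 < R ∧ ∀ s : ℝ, R ≤ |s| → |s * deriv u₀ s| ≤ ε' := by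
    have hev : ∀ᶠ x in cocompact ℝ, |x * deriv u₀ x| < ε' := by
      have := Metric.tendsto_nhds.mp hosc ε' hε'pos
      filter_upwards [this] with x hx
      rwa [Real.dist_eq, sub_zero, abs_abs] at hx
    rw [Filter.eventually_iff, mem_cocompact] at hev
    obtain ⟨Kc, hKc, hsub⟩ := hev
    obtain ⟨r, hr⟩ := hKc.isBounded.subset_closedBall 0
    refine ⟨|r| + 1, by positivity, fun s hs => ?_⟩
    have : s ∉ Kc := by
      intro hmem
      have := hr hmem
      rw [Metric.mem_closedBall, Real.dist_eq, sub_zero] at this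
      have : |s| ≤ |r| := this.trans (le_abs_self r)
      linarith
    exact (hsub this).le
  -- choose T
  refine ⟨max 1 ((R/δ)^2), fun t ht => ?_⟩
  have ht1 : (1:ℝ) ≤ t := le_trans (le_max_left _ _) ht
  have ht0 : 0 < t := lt_of_lt_of_le one_pos ht1
  set s := Real.sqrt t with hs
  have hs0 : 0 < s := Real.sqrt_pos.mpr ht0
  have hsR : R ≤ s * δ := by
    have h1 : Real.sqrt ((R/δ)^2) ≤ s := Real.sqrt_le_sqrt (le_trans (le_max_right _ _) ht)
    rw [Real.sqrt_sq (by positivity)] at h1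
    rw [div_le_iff₀ hδpos] at h1
    linarith
  have hsR' : R ≤ s := le_trans hsR (by nlinarith)
  -- pointwise Δ bound outside [-δ, δ]
  have hΔ : ∀ z : ℝ, z ∉ Icc (-δ) δ →
      |u₀ (s * z) - (if z < 0 then u₀ (-s) else u₀ s)| ≤ ε' * (A + |z|) := by
    intro z hz
    rw [mem_Icc, not_and_or, not_le, not_le] at hz
    rcases hz with hz | hz
    · -- z < -δ
      have hz0 : z < 0 := by linarith
      rw [if_pos hz0]
      have hz0' : z ≠ 0 := ne_of_lt hz0
      rcases le_or_gt z (-1) with hz1 | hz1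
      · -- z ≤ -1 : compare on [s*z, -s]
        have hord : s * z ≤ -s := by nlinarith
        have h := hw6_ftc_neg u₀ hC1 hε'pos.le hRpos hR
          (b := -s) (a := s * z) (by linarith) hord
        rw [abs_sub_comm] at h
        have hgoal : Real.log (s * z / (-s)) ≤ A + |z| := by
          have hsz : s * z / (-s) = -z := by
            rw [div_neg, mul_comm s z, mul_div_assoc, div_self hs0.ne', mul_one]
          rw [hsz]
          have h1 : Real.log (-z) ≤ -z - 1 := Real.log_le_sub_one_of_pos (by linarith)
          have h2 : |z| = -z := abs_of_neg hz0
          linarith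
        calc |u₀ (s * z) - u₀ (-s)| ≤ ε' * Real.log (s * z / (-s)) := h
          _ ≤ ε' * (A + |z|) := mul_le_mul_of_nonneg_left hgoal hε'pos.le
      · -- -1 < z < -δ : compare on [-s, s*z]
        have hb' : s * z ≤ -(s * δ) := by nlinarith
        have hord : -s ≤ s * z := by nlinarith
        have h := hw6_ftc_neg u₀ hC1 hε'pos.le hRpos hR
          (b := s * z) (a := -s) (by linarith) hord
        have hgoal : Real.log (-s / (s * z)) ≤ A + |z| := by
          have heq : -s / (s * z) = (-z)⁻¹ := by
            rw [show s * z = (-s) * (-z) by ring, div_mul_eq_div_div,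
              div_self (neg_ne_zero.mpr hs0.ne'), one_div]
          rw [heq, Real.log_inv]
          have h1 : Real.log δ ≤ Real.log (-z) :=
            (Real.log_le_log_iff hδpos (by linarith)).mpr (by linarith)
          have h2 : Real.log δ ≤ 0 := Real.log_nonpos hδpos.le hδ1
          have h3 : A = -Real.log δ := abs_of_nonpos h2
          have h4 : 0 ≤ |z| := abs_nonneg z
          linarith
        calc |u₀ (s * z) - u₀ (-s)| ≤ ε' * Real.log (-s / (s * z)) := h
          _ ≤ ε' * (A + |z|) := mul_le_mul_of_nonneg_left hgoal hε'pos.le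
    · -- δ < z
      have hz0 : ¬ z < 0 := by linarith
      rw [if_neg hz0]
      rcases le_or_gt 1 z with hz1 | hz1
      · -- 1 ≤ z : compare on [s, s*z]
        have hord : s ≤ s * z := by nlinarith
        have h := hw6_ftc_pos u₀ hC1 hε'pos.le hRpos hR
          (a := s) (b := s * z) hsR' hord
        have hgoal : Real.log (s * z / s) ≤ A + |z| := by
          have : s * z / s = z := by field_simp
          rw [this]
          have h1 : Real.log z ≤ z - 1 := Real.log_le_sub_one_of_pos (by linarith)
          have h2 : |z| = z := abs_of_pos (by linarith)
          linarith
        calc |u₀ (s * z) - u₀ s| ≤ ε' * Real.log (s * z / s) := h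
          _ ≤ ε' * (A + |z|) := mul_le_mul_of_nonneg_left hgoal hε'pos.le
      · -- δ < z < 1 : compare on [s*z, s]
        have ha' : s * δ ≤ s * z := by nlinarith
        have hord : s * z ≤ s := by nlinarith
        have h := hw6_ftc_pos u₀ hC1 hε'pos.le hRpos hR
          (a := s * z) (b := s) (by linarith) hord
        rw [abs_sub_comm] at h
        have hgoal : Real.log (s / (s * z)) ≤ A + |z| := by
          have hzpos : (0:ℝ) < z := by linarith
          have heq : s / (s * z) = z⁻¹ := by
            rw [div_mul_eq_div_div, div_self hs0.ne', one_div]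
          rw [heq, Real.log_inv]
          have h1 : Real.log δ ≤ Real.log z :=
            (Real.log_le_log_iff hδpos (by linarith)).mpr (by linarith)
          have h2 : Real.log δ ≤ 0 := Real.log_nonpos hδpos.le hδ1
          have h3 : A = -Real.log δ := abs_of_nonpos h2
          have h4 : 0 ≤ |z| := abs_nonneg z
          linarith
        calc |u₀ (s * z) - u₀ s| ≤ ε' * Real.log (s / (s * z)) := h
          _ ≤ ε' * (A + |z|) := mul_le_mul_of_nonneg_left hgoal hε'pos.le
  -- per-point integral bound
  have hpt : ∀ x : ℝ, |x| ≤ (L:ℝ) →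
      |u (s * x) t - (F (-x) * u₀ (-s) + F x * u₀ s)| ≤ ε₀ / 2 := by
    intro x hxL
    rw [key t ht0 x]
    set Δ : ℝ → ℝ := fun z => u₀ (s * z) - (if z < 0 then u₀ (-s) else u₀ s) with hΔdef
    have hΔmeas : Measurable Δ := by
      apply (hmeas.comp (measurable_const_mul s)).sub
      apply Measurable.ite _ measurable_const measurable_const
      exact measurableSet_Iio (a := (0:ℝ))
    have hΔbd : ∀ z, |Δ z| ≤ 2 * C := by
      intro z
      have h1 := hbd (s * z)
      have h2 : |(if z < 0 then u₀ (-s) else u₀ s)| ≤ C := by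
        by_cases h : z < 0 <;> simp [h, hbd]
      calc |Δ z| ≤ |u₀ (s * z)| + |(if z < 0 then u₀ (-s) else u₀ s)| := abs_sub _ _
        _ ≤ 2 * C := by linarith
    have hfint : Integrable (fun z : ℝ => Real.exp (-(x - z)^2/4) * Δ z) :=
      hw6_int_mul x Δ hΔmeas (2*C) hΔbd
    have hwint : Integrable (fun z : ℝ => Real.exp (-(x - z)^2/4) * (A + |z|)) :=
      hw6_gauss_weight_int x A hA0
    have habs : |∫ z : ℝ, Real.exp (-(x - z)^2/4) * Δ z|
        ≤ ∫ z : ℝ, |Real.exp (-(x - z)^2/4) * Δ z| := by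
      have hh := norm_integral_le_integral_norm (μ := volume)
        (fun z : ℝ => Real.exp (-(x - z)^2/4) * Δ z)
      simp only [Real.norm_eq_abs] at hh
      exact hh
    have hsplit : ∫ z : ℝ, |Real.exp (-(x - z)^2/4) * Δ z|
        = (∫ z in Icc (-δ) δ, |Real.exp (-(x - z)^2/4) * Δ z|)
          + ∫ z in (Icc (-δ) δ)ᶜ, |Real.exp (-(x - z)^2/4) * Δ z| :=
      (integral_add_compl measurableSet_Icc hfint.abs).symm
    have hin : ∫ z in Icc (-δ) δ, |Real.exp (-(x - z)^2/4) * Δ z| ≤ 2 * C * (2 * δ) := by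
      have h1 : ∫ z in Icc (-δ) δ, |Real.exp (-(x - z)^2/4) * Δ z|
          ≤ ∫ _z in Icc (-δ) δ, 2 * C := by
        apply setIntegral_mono_on hfint.abs.integrableOn
          (integrableOn_const measure_Icc_lt_top.ne) measurableSet_Icc
        intro z _
        rw [abs_mul]
        calc |Real.exp (-(x - z)^2/4)| * |Δ z| ≤ 1 * (2*C) := by
              apply mul_le_mul _ (hΔbd z) (abs_nonneg _) zero_le_one
              rw [abs_of_pos (Real.exp_pos _)]
              exact hw6_phi_le_one _
          _ = 2 * C := one_mul _
      rw [setIntegral_const, measureReal_def, Real.volume_Icc, smul_eq_mul] at h1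
      rw [ENNReal.toReal_ofReal (by linarith)] at h1
      calc ∫ z in Icc (-δ) δ, |Real.exp (-(x - z)^2/4) * Δ z| ≤ (δ - (-δ)) * (2*C) := h1
        _ = 2 * C * (2 * δ) := by ring
    have hout : ∫ z in (Icc (-δ) δ)ᶜ, |Real.exp (-(x - z)^2/4) * Δ z| ≤ ε' * K := by
      have h1 : ∫ z in (Icc (-δ) δ)ᶜ, |Real.exp (-(x - z)^2/4) * Δ z|
          ≤ ∫ z in (Icc (-δ) δ)ᶜ, ε' * (Real.exp (-(x - z)^2/4) * (A + |z|)) := by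
        apply setIntegral_mono_on hfint.abs.integrableOn
          ((hwint.const_mul ε').integrableOn) measurableSet_Icc.compl
        intro z hz
        rw [abs_mul, abs_of_pos (Real.exp_pos _)]
        have := hΔ z hz
        have hexp := (Real.exp_pos (-(x - z)^2/4)).le
        calc Real.exp (-(x - z)^2/4) * |Δ z|
            ≤ Real.exp (-(x - z)^2/4) * (ε' * (A + |z|)) :=
              mul_le_mul_of_nonneg_left this hexp
          _ = ε' * (Real.exp (-(x - z)^2/4) * (A + |z|)) := by ring
      have h2 : ∫ z in (Icc (-δ) δ)ᶜ, ε' * (Real.exp (-(x - z)^2/4) * (A + |z|))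
          ≤ ∫ z : ℝ, ε' * (Real.exp (-(x - z)^2/4) * (A + |z|)) := by
        apply setIntegral_le_integral (hwint.const_mul ε')
        filter_upwards with z
        positivity
      have h3 : ∫ z : ℝ, ε' * (Real.exp (-(x - z)^2/4) * (A + |z|))
          = ε' * ∫ z : ℝ, Real.exp (-(x - z)^2/4) * (A + |z|) := integral_const_mul _ _
      have h4 : ∫ z : ℝ, Real.exp (-(x - z)^2/4) * (A + |z|) ≤ K := by
        have hshift : ∫ z : ℝ, Real.exp (-(x - z)^2/4) * (A + |z|)
            = ∫ w : ℝ, Real.exp (-w^2/4) * (A + |w + x|) := by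
          rw [← integral_sub_right_eq_self (fun w : ℝ => Real.exp (-w^2/4) * (A + |w + x|)) x]
          congr 1
          funext z
          simp only [sub_add_cancel]
          congr 2
          ring
        rw [hshift, hKdef]
        apply integral_mono _ hKint
        · intro w
          have h5 : |w + x| ≤ |w| + L := (abs_add_le _ _).trans (by linarith [abs_nonneg w])
          have h6 := (Real.exp_pos (-w^2/4)).le
          dsimp only
          nlinarith
        · exact hw6_gauss_weight_int' x A hA0
      calc ∫ z in (Icc (-δ) δ)ᶜ, |Real.exp (-(x - z)^2/4) * Δ z|
          ≤ ∫ z : ℝ, ε' * (Real.exp (-(x - z)^2/4) * (A + |z|)) := le_trans h1 h2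
        _ = ε' * ∫ z : ℝ, Real.exp (-(x - z)^2/4) * (A + |z|) := h3
        _ ≤ ε' * K := mul_le_mul_of_nonneg_left h4 hε'pos.le
    -- combine
    have hδbound : 2 * C * (2 * δ) ≤ ε₀ * Real.sqrt π / 2 := by
      have h1 : δ * (8*C + 8) ≤ ε₀ * Real.sqrt π :=
        (le_div_iff₀ (by positivity : (0:ℝ) < 8*C+8)).mp hδle
      nlinarith [hδpos.le]
    have hεK : ε' * K ≤ ε₀ * Real.sqrt π / 2 := by
      rw [hε'def, div_mul_eq_mul_div,
        div_le_div_iff₀ (by positivity) (by norm_num : (0:ℝ) < 2)]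
      nlinarith [hK0, mul_pos hε₀ hπ]
    calc |1 / (2 * Real.sqrt π) * ∫ z : ℝ, Real.exp (-(x - z)^2/4) * Δ z|
        = 1 / (2 * Real.sqrt π) * |∫ z : ℝ, Real.exp (-(x - z)^2/4) * Δ z| := by
          rw [abs_mul, abs_of_pos (by positivity)]
      _ ≤ 1 / (2 * Real.sqrt π) * (2 * C * (2 * δ) + ε' * K) := by
          apply mul_le_mul_of_nonneg_left _ (by positivity)
          calc |∫ z : ℝ, Real.exp (-(x - z)^2/4) * Δ z|
              ≤ ∫ z : ℝ, |Real.exp (-(x - z)^2/4) * Δ z| := habs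
            _ = _ := hsplit
            _ ≤ 2 * C * (2 * δ) + ε' * K := add_le_add hin hout
      _ ≤ 1 / (2 * Real.sqrt π) * (ε₀ * Real.sqrt π / 2 + ε₀ * Real.sqrt π / 2) := by
          apply mul_le_mul_of_nonneg_left (add_le_add hδbound hεK) (by positivity)
      _ = ε₀ / 2 := by field_simp; ring
  -- conclude
  rw [Real.dist_eq, sub_zero,
    abs_of_nonneg (Real.iSup_nonneg (fun x => abs_nonneg _))]
  have hne : Nonempty (Icc (-L) L) := ⟨⟨0, mem_Icc.mpr ⟨by omega, by omega⟩⟩⟩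
  have hsup : (⨆ x : Icc (-L) L,
      |u (Real.sqrt t * (x:ℝ)) t - (F (-(x:ℝ)) * u₀ (-Real.sqrt t) + F (x:ℝ) * u₀ (Real.sqrt t))|)
      ≤ ε₀ / 2 := by
    apply Real.iSup_le _ (by positivity)
    intro x
    have hx1 : -(L:ℝ) ≤ ((x:ℤ):ℝ) := by exact_mod_cast x.2.1
    have hx2 : ((x:ℤ):ℝ) ≤ (L:ℝ) := by exact_mod_cast x.2.2
    exact hpt _ (abs_le.mpr ⟨hx1, hx2⟩)
  linarith
end

section
/- Let u₀ ∈ L^∞(ℝ) be C¹ on ℝ \ {0} with lim_{|x|→0} |x·u₀'(x)| = 0, and let u(x,t) be the heat-kernel convolution solution of u_t = u_xx with initial value u₀. Then for every L > 0, lim_{t→0⁺} sup_{x∈[−L,L]} |u(√t·x, t) − (F(−x)·u₀(−√t) + F(x)·u₀(√t))| = 0, where F(z) = (1/(2√π)) ∫_{−∞}^z e^{−y²/4} dy. -/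
open Filter Real MeasureTheory Set



lemma K_integrable (x : ℝ) : Integrable (fun z : ℝ => rexp (-(x - z)^2 / 4)) := by
  have h : Integrable (fun z : ℝ => rexp (-(4⁻¹:ℝ) * z^2)) :=
    integrable_exp_neg_mul_sq (by norm_num)
  have h2 := h.comp_sub_right x
  have h3 : (fun z : ℝ => rexp (-(4⁻¹:ℝ) * (z - x)^2)) = fun z : ℝ => rexp (-(x - z)^2 / 4) := by
    funext z; congr 1; ring
  rwa [h3] at h2

lemma K_integral (x : ℝ) : ∫ z : ℝ, rexp (-(x - z)^2 / 4) = 2 * Real.sqrt π := by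
  have h1 : (fun z : ℝ => rexp (-(x - z)^2 / 4))
      = fun z : ℝ => (fun w : ℝ => rexp (-(4⁻¹:ℝ) * w^2)) (z - x) := by
    funext z; congr 1; ring
  rw [h1, integral_sub_right_eq_self (fun w : ℝ => rexp (-(4⁻¹:ℝ) * w^2)) x,
    integral_gaussian, show π / (4⁻¹:ℝ) = 2^2 * π by ring,
    Real.sqrt_mul (by positivity), Real.sqrt_sq (by norm_num)]

lemma K_le_one (x z : ℝ) : rexp (-(x - z)^2 / 4) ≤ 1 :=
  Real.exp_le_one_iff.mpr (by nlinarith [sq_nonneg (x - z)])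

lemma K_Ioi (x : ℝ) :
    ∫ z in Ioi (0:ℝ), rexp (-(x - z)^2 / 4) = ∫ y in Iio x, rexp (-y^2 / 4) := by
  set h : ℝ → ℝ := (Iio x).indicator (fun y => rexp (-y^2 / 4)) with hh
  have h1 : ∀ z : ℝ, (Ioi (0:ℝ)).indicator (fun z => rexp (-(x - z)^2 / 4)) z
      = h (-(z - x)) := by
    intro z
    rcases lt_or_ge 0 z with hz | hz
    · rw [indicator_of_mem (mem_Ioi.mpr hz), hh, indicator_of_mem (by simp only [mem_Iio]; linarith)]
      congr 1; ring
    · rw [indicator_of_notMem (by simpa using hz), hh,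
        indicator_of_notMem (by simp [mem_Iio]; linarith)]
  calc ∫ z in Ioi (0:ℝ), rexp (-(x - z)^2 / 4)
      = ∫ z, (Ioi (0:ℝ)).indicator (fun z => rexp (-(x - z)^2 / 4)) z :=
        (integral_indicator measurableSet_Ioi).symm
    _ = ∫ z, (fun w => h (-w)) (z - x) := by simp_rw [h1]
    _ = ∫ z, h (-z) := integral_sub_right_eq_self (fun w => h (-w)) x
    _ = ∫ z, h z := integral_neg_eq_self h volume
    _ = ∫ y in Iio x, rexp (-y^2 / 4) := integral_indicator measurableSet_Iio

lemma K_Iio (x : ℝ) :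
    ∫ z in Iio (0:ℝ), rexp (-(x - z)^2 / 4) = ∫ y in Iio (-x), rexp (-y^2 / 4) := by
  set h : ℝ → ℝ := (Iio (-x)).indicator (fun y => rexp (-y^2 / 4)) with hh
  have h1 : ∀ z : ℝ, (Iio (0:ℝ)).indicator (fun z => rexp (-(x - z)^2 / 4)) z
      = h (z - x) := by
    intro z
    rcases lt_or_ge z 0 with hz | hz
    · rw [indicator_of_mem (mem_Iio.mpr hz), hh, indicator_of_mem (by simp only [mem_Iio]; linarith)]
      congr 1; ring
    · rw [indicator_of_notMem (by simpa using hz), hh,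
        indicator_of_notMem (by simp [mem_Iio]; linarith)]
  calc ∫ z in Iio (0:ℝ), rexp (-(x - z)^2 / 4)
      = ∫ z, (Iio (0:ℝ)).indicator (fun z => rexp (-(x - z)^2 / 4)) z :=
        (integral_indicator measurableSet_Iio).symm
    _ = ∫ z, h (z - x) := by simp_rw [h1]
    _ = ∫ z, h z := integral_sub_right_eq_self h x
    _ = ∫ y in Iio (-x), rexp (-y^2 / 4) := integral_indicator measurableSet_Iio

-- tail bounds
lemma K_tail_Ioi {x L R : ℝ} (hx : |x| ≤ L) (hR : L + 1 < R) :
    ∫ z in Ioi R, rexp (-(x - z)^2 / 4) ≤ rexp (1 + L - R) := by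
  have hxL : x ≤ L := (abs_le.mp hx).2
  have hint : IntegrableOn (fun z : ℝ => rexp (1 + L) * rexp (-z)) (Ioi R) := by
    have := (exp_neg_integrableOn_Ioi R (by norm_num : (0:ℝ) < 1))
    exact IntegrableOn.congr_fun (this.const_mul (rexp (1 + L))) (fun z _ => by simp) measurableSet_Ioi
  calc ∫ z in Ioi R, rexp (-(x - z)^2 / 4)
      ≤ ∫ z in Ioi R, rexp (1 + L) * rexp (-z) := by
        refine setIntegral_mono_on ((K_integrable x).integrableOn) hint measurableSet_Ioi ?_
        intro z hz
        rw [← Real.exp_add]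
        apply Real.exp_le_exp.mpr
        have hz' : R < z := hz
        nlinarith [sq_nonneg (z - L - 2), mul_nonneg (show (0:ℝ) ≤ L - x by linarith)
          (show (0:ℝ) ≤ 2*z - x - L by linarith)]
    _ = rexp (1 + L) * rexp (-R) := by rw [integral_const_mul, integral_exp_neg_Ioi]
    _ = rexp (1 + L - R) := by rw [← Real.exp_add]; ring_nf

lemma K_tail_Iio {x L R : ℝ} (hx : |x| ≤ L) (hR : L + 1 < R) :
    ∫ z in Iio (-R), rexp (-(x - z)^2 / 4) ≤ rexp (1 + L - R) := by
  have hxL : -L ≤ x := (abs_le.mp hx).1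
  have hint : IntegrableOn (fun z : ℝ => rexp (1 + L) * rexp z) (Iio (-R)) := by
    have := (integrableOn_exp_Iic (-R)).mono_set Iio_subset_Iic_self
    exact this.const_mul (rexp (1 + L))
  calc ∫ z in Iio (-R), rexp (-(x - z)^2 / 4)
      ≤ ∫ z in Iio (-R), rexp (1 + L) * rexp z := by
        refine setIntegral_mono_on ((K_integrable x).integrableOn) hint measurableSet_Iio ?_
        intro z hz
        rw [← Real.exp_add]
        apply Real.exp_le_exp.mpr
        have hz' : z < -R := hz
        nlinarith [sq_nonneg (L + z + 2), mul_nonneg (show (0:ℝ) ≤ x + L by linarith)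
          (show (0:ℝ) ≤ x - 2*z - L by linarith)]
    _ = rexp (1 + L) * rexp (-R) := by
        rw [integral_const_mul,
          show (∫ a in Iio (-R), rexp a) = rexp (-R) from by
            rw [setIntegral_congr_set Iio_ae_eq_Iic]; exact integral_exp_Iic _]
    _ = rexp (1 + L - R) := by rw [← Real.exp_add]; ring_nf
lemma osc_lemma (u₀ : ℝ → ℝ) (hC1 : ContDiffOn ℝ 1 u₀ {(0:ℝ)}ᶜ)
    (hosc : Tendsto (fun x => |x * deriv u₀ x|) (nhdsWithin 0 {(0:ℝ)}ᶜ) (nhds 0)) :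
    ∀ ε > 0, ∃ δ > 0, ∀ a b : ℝ, a ≤ b → (0 < a ∨ b < 0) → |a| ≤ δ → |b| ≤ δ →
      |u₀ b - u₀ a| ≤ ε * |Real.log (b / a)| := by
  intro ε hε
  obtain ⟨δ₀, hδ₀, h0⟩ := Metric.tendsto_nhdsWithin_nhds.mp hosc ε hε
  refine ⟨δ₀ / 2, by linarith, ?_⟩
  intro a b hab hsign ha hb
  have hder : ∀ w : ℝ, w ≠ 0 → |w| ≤ δ₀ / 2 → |deriv u₀ w| ≤ ε / |w| := by
    intro w hw hwδ
    have hmem : w ∈ ({(0:ℝ)}ᶜ : Set ℝ) := by simpa using hw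
    have hd : dist w 0 < δ₀ := by rw [Real.dist_eq, sub_zero]; linarith
    have := h0 hmem hd
    rw [Real.dist_eq, sub_zero, abs_abs, abs_mul] at this
    rw [le_div_iff₀ (abs_pos.mpr hw), mul_comm]
    exact this.le
  -- FTC machinery valid whenever Icc a b avoids 0
  have main : ∀ (hsub : Icc a b ⊆ ({(0:ℝ)}ᶜ : Set ℝ)) (φ : ℝ → ℝ)
      (hφcont : ContinuousOn φ (Icc a b))
      (hφbd : ∀ w ∈ Icc a b, |deriv u₀ w| ≤ φ w),
      |u₀ b - u₀ a| ≤ ∫ w in a..b, φ w := by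
    intro hsub φ hφcont hφbd
    have hdiffAt : ∀ w ∈ uIcc a b, DifferentiableAt ℝ u₀ w := by
      intro w hw
      rw [uIcc_of_le hab] at hw
      exact (hC1.differentiableOn one_ne_zero).differentiableAt
        (isOpen_compl_singleton.mem_nhds (hsub hw))
    have hderiv_cont : ContinuousOn (deriv u₀) (Icc a b) :=
      (hC1.continuousOn_deriv_of_isOpen isOpen_compl_singleton le_rfl).mono hsub
    have hII : IntervalIntegrable (deriv u₀) volume a b := by
      apply ContinuousOn.intervalIntegrable
      rwa [uIcc_of_le hab]
    have hφII : IntervalIntegrable φ volume a b := by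
      apply ContinuousOn.intervalIntegrable
      rwa [uIcc_of_le hab]
    have hftc : ∫ w in a..b, deriv u₀ w = u₀ b - u₀ a :=
      intervalIntegral.integral_deriv_eq_sub hdiffAt hII
    calc |u₀ b - u₀ a| = |∫ w in a..b, deriv u₀ w| := by rw [hftc]
      _ ≤ ∫ w in a..b, |deriv u₀ w| := by
          simpa [Real.norm_eq_abs] using
            intervalIntegral.norm_integral_le_integral_norm (f := deriv u₀) (μ := volume) hab
      _ ≤ ∫ w in a..b, φ w := intervalIntegral.integral_mono_on hab hII.abs hφII hφbd
  rcases hsign with hpos | hneg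
  · -- 0 < a ≤ b
    have hbpos : 0 < b := lt_of_lt_of_le hpos hab
    have hsub : Icc a b ⊆ ({(0:ℝ)}ᶜ : Set ℝ) := by
      intro w hw; simp only [mem_compl_iff, mem_singleton_iff]
      have := hw.1; intro h; rw [h] at this; linarith
    have hcont : ContinuousOn (fun w : ℝ => ε * (1 / w)) (Icc a b) := by
      apply ContinuousOn.mul continuousOn_const
      exact ContinuousOn.div continuousOn_const continuousOn_id
        (fun w hw => ne_of_gt (lt_of_lt_of_le hpos hw.1))
    have hbd : ∀ w ∈ Icc a b, |deriv u₀ w| ≤ ε * (1 / w) := by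
      intro w hw
      have hw0 : 0 < w := lt_of_lt_of_le hpos hw.1
      have habs : |w| = w := abs_of_pos hw0
      have := hder w (ne_of_gt hw0) (by rw [habs]; exact le_trans hw.2 (by rwa [abs_of_pos hbpos] at hb))
      rwa [habs, div_eq_mul_one_div] at this
    have h1 := main hsub _ hcont hbd
    have h2 : ∫ w in a..b, ε * (1 / w) = ε * Real.log (b / a) := by
      rw [intervalIntegral.integral_const_mul, integral_one_div]
      rw [uIcc_of_le hab]
      intro h; exact absurd h.1 (by linarith)
    have h3 : Real.log (b / a) = |Real.log (b / a)| := by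
      rw [abs_of_nonneg (Real.log_nonneg ((one_le_div hpos).mpr hab))]
    rw [h2, h3] at h1; exact h1
  · -- a ≤ b < 0
    have haneg : a < 0 := lt_of_le_of_lt hab hneg
    have hsub : Icc a b ⊆ ({(0:ℝ)}ᶜ : Set ℝ) := by
      intro w hw; simp only [mem_compl_iff, mem_singleton_iff]
      have := hw.2; intro h; rw [h] at this; linarith
    have hcont : ContinuousOn (fun w : ℝ => ε * (1 / (-w))) (Icc a b) := by
      apply ContinuousOn.mul continuousOn_const
      apply ContinuousOn.div continuousOn_const
      · exact continuousOn_id.neg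
      · intro w hw
        have := hw.2
        have : w < 0 := lt_of_le_of_lt this hneg
        simp only [ne_eq, neg_eq_zero]
        linarith
    have hbd : ∀ w ∈ Icc a b, |deriv u₀ w| ≤ ε * (1 / (-w)) := by
      intro w hw
      have hw0 : w < 0 := lt_of_le_of_lt hw.2 hneg
      have habs : |w| = -w := abs_of_neg hw0
      have := hder w (ne_of_lt hw0) (by
        rw [habs]
        have h4 : -w ≤ -a := by linarith [hw.1]
        have h5 : -a ≤ δ₀ / 2 := by rwa [abs_of_neg haneg] at ha
        linarith)
      rwa [habs, div_eq_mul_one_div] at this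
    have h1 := main hsub _ hcont hbd
    have h2 : ∫ w in a..b, ε * (1 / (-w)) = ε * (-Real.log (b / a)) := by
      have : (fun w : ℝ => ε * (1 / (-w))) = fun w : ℝ => -(ε * (1 / w)) := by
        funext w; rw [div_neg]; ring
      rw [this, intervalIntegral.integral_neg, intervalIntegral.integral_const_mul,
        integral_one_div, neg_mul_eq_mul_neg]
      rw [uIcc_of_le hab]
      intro h; exact absurd h.2 (by linarith)
    have hba0 : 0 < b / a := by
      rw [show b / a = (-b) / (-a) by rw [neg_div_neg_eq]]
      exact div_pos (by linarith) (by linarith)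
    have hba1 : b / a ≤ 1 := by
      rw [show b / a = (-b) / (-a) by rw [neg_div_neg_eq]]
      rw [div_le_one (by linarith)]
      linarith
    have h3 : -Real.log (b / a) = |Real.log (b / a)| :=
      (abs_of_nonpos (Real.log_nonpos hba0.le hba1)).symm
    rw [h2, h3] at h1; exact h1


lemma KG_integrable (u₀ : ℝ → ℝ) (hmeas : Measurable u₀) (C : ℝ) (hbd : ∀ x, |u₀ x| ≤ C)
    (x : ℝ) {g : ℝ → ℝ} (hg : Measurable g) (hgbd : ∀ z, |g z| ≤ C) :
    Integrable (fun z : ℝ => rexp (-(x - z)^2 / 4) * g z) := by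
  have h := (K_integrable x).bdd_mul hg.aestronglyMeasurable
    (Filter.Eventually.of_forall fun z => by rw [Real.norm_eq_abs]; exact hgbd z)
  exact h.congr (Filter.Eventually.of_forall fun z => mul_comm _ _)

lemma rep_lemma (u₀ : ℝ → ℝ) (hmeas : Measurable u₀) (C : ℝ) (hbd : ∀ x, |u₀ x| ≤ C)
    (u : ℝ → ℝ → ℝ)
    (hu : ∀ x t, 0 < t →
      u x t = (1 / (2 * Real.sqrt (π * t))) * ∫ y : ℝ, Real.exp (-(x - y)^2 / (4 * t)) * u₀ y)
    (F : ℝ → ℝ) (hF : ∀ z, F z = (1 / (2 * Real.sqrt π)) * ∫ y in Iio z, Real.exp (-y^2 / 4))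
    (t : ℝ) (ht0 : 0 < t) (x : ℝ) :
    u (Real.sqrt t * x) t - (F (-x) * u₀ (-Real.sqrt t) + F x * u₀ (Real.sqrt t))
      = (2 * Real.sqrt π)⁻¹ * ∫ z : ℝ, rexp (-(x - z)^2 / 4) *
          (u₀ (Real.sqrt t * z) - (if z < 0 then u₀ (-Real.sqrt t) else u₀ (Real.sqrt t))) := by
  obtain ⟨s, hs, hspos, hst⟩ : ∃ s : ℝ, s = Real.sqrt t ∧ 0 < s ∧ t = s^2 :=
    ⟨Real.sqrt t, rfl, Real.sqrt_pos.mpr ht0, (Real.sq_sqrt ht0.le).symm⟩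
  rw [← hs]
  have hs0 : s ≠ 0 := ne_of_gt hspos
  have hgm : Measurable fun z : ℝ => u₀ (s * z) :=
    hmeas.comp (measurable_const.mul measurable_id)
  have hstm : Measurable fun z : ℝ => if z < 0 then u₀ (-s) else u₀ s :=
    Measurable.ite measurableSet_Iio measurable_const measurable_const
  have hKg : Integrable (fun z : ℝ => rexp (-(x - z)^2 / 4) * u₀ (s * z)) :=
    KG_integrable u₀ hmeas C hbd x hgm (fun z => hbd _)
  have hKst : Integrable (fun z : ℝ =>
      rexp (-(x - z)^2 / 4) * (if z < 0 then u₀ (-s) else u₀ s)) :=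
    KG_integrable u₀ hmeas C hbd x hstm (fun z => by split <;> exact hbd _)
  have hrep : u (s * x) t = (2 * Real.sqrt π)⁻¹ *
      ∫ z : ℝ, rexp (-(x - z)^2 / 4) * u₀ (s * z) := by
    rw [hu (s * x) t ht0]
    have hexp : ∀ z : ℝ, -(s * x - s * z)^2 / (4 * t) = -(x - z)^2 / 4 := by
      intro z
      rw [hst]
      field_simp
    have hcomp := MeasureTheory.Measure.integral_comp_mul_left
      (fun y : ℝ => rexp (-(s * x - y)^2 / (4 * t)) * u₀ y) s
    simp only [smul_eq_mul, hexp, abs_of_pos (inv_pos.mpr hspos)] at hcomp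
    have horig : (∫ y : ℝ, rexp (-(s * x - y)^2 / (4 * t)) * u₀ y)
        = s * ∫ z : ℝ, rexp (-(x - z)^2 / 4) * u₀ (s * z) := by
      rw [hcomp]; field_simp
    rw [horig, show Real.sqrt (π * t) = Real.sqrt π * s from by
      rw [hst, Real.sqrt_mul Real.pi_pos.le, Real.sqrt_sq hspos.le]]
    have hsqπ : Real.sqrt π ≠ 0 := ne_of_gt (Real.sqrt_pos.mpr Real.pi_pos)
    field_simp
  have hFx : F x = (2 * Real.sqrt π)⁻¹ * ∫ z in Ioi (0:ℝ), rexp (-(x - z)^2 / 4) := by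
    rw [hF x, ← K_Ioi x, one_div]
  have hFmx : F (-x) = (2 * Real.sqrt π)⁻¹ * ∫ z in Iio (0:ℝ), rexp (-(x - z)^2 / 4) := by
    rw [hF (-x), ← K_Iio x, one_div]
  have hsplit : (∫ z : ℝ, rexp (-(x - z)^2 / 4) * (if z < 0 then u₀ (-s) else u₀ s))
      = (∫ z in Iio (0:ℝ), rexp (-(x - z)^2 / 4)) * u₀ (-s)
        + (∫ z in Ioi (0:ℝ), rexp (-(x - z)^2 / 4)) * u₀ s := by
    rw [← intervalIntegral.integral_Iic_add_Ioi hKst.integrableOn hKst.integrableOn]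
    congr 1
    · rw [← setIntegral_congr_set Iio_ae_eq_Iic,
        setIntegral_congr_fun measurableSet_Iio
          (fun z (hz : z ∈ Iio (0:ℝ)) => by rw [if_pos (mem_Iio.mp hz)]),
        integral_mul_const]
    · rw [setIntegral_congr_fun measurableSet_Ioi
          (fun z (hz : z ∈ Ioi (0:ℝ)) => by
            rw [if_neg (not_lt.mpr (le_of_lt (mem_Ioi.mp hz)))]),
        integral_mul_const]
  have hsub : (∫ z : ℝ, rexp (-(x - z)^2 / 4) *
        (u₀ (s * z) - (if z < 0 then u₀ (-s) else u₀ s)))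
      = (∫ z : ℝ, rexp (-(x - z)^2 / 4) * u₀ (s * z))
        - ∫ z : ℝ, rexp (-(x - z)^2 / 4) * (if z < 0 then u₀ (-s) else u₀ s) := by
    rw [← integral_sub hKg hKst]
    congr 1; funext z; ring
  rw [hrep, hFx, hFmx, hsub, hsplit]; ring


lemma bound_lemma (u₀ : ℝ → ℝ) (hmeas : Measurable u₀) (C : ℝ) (hbd : ∀ x, |u₀ x| ≤ C)
    (hC0 : 0 ≤ C) (s x L r R E : ℝ) (hx : |x| ≤ L) (hRL : L + 1 < R)
    (hE0 : 0 ≤ E) (hr0 : 0 < r)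
    (hmid : ∀ z : ℝ, r ≤ |z| → |z| ≤ R →
      |u₀ (s * z) - (if z < 0 then u₀ (-s) else u₀ s)| ≤ E) :
    |∫ z : ℝ, rexp (-(x - z)^2 / 4) *
        (u₀ (s * z) - (if z < 0 then u₀ (-s) else u₀ s))|
      ≤ (2 * r) * (2 * C) + 2 * C * rexp (1 + L - R) + 2 * C * rexp (1 + L - R)
        + E * (2 * Real.sqrt π) := by
  have hgm : Measurable fun z : ℝ => u₀ (s * z) :=
    hmeas.comp (measurable_const.mul measurable_id)
  have hstm : Measurable fun z : ℝ => if z < 0 then u₀ (-s) else u₀ s :=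
    Measurable.ite measurableSet_Iio measurable_const measurable_const
  have hKg : Integrable (fun z : ℝ => rexp (-(x - z)^2 / 4) * u₀ (s * z)) :=
    KG_integrable u₀ hmeas C hbd x hgm (fun z => hbd _)
  have hKst : Integrable (fun z : ℝ =>
      rexp (-(x - z)^2 / 4) * (if z < 0 then u₀ (-s) else u₀ s)) :=
    KG_integrable u₀ hmeas C hbd x hstm (fun z => by split <;> exact hbd _)
  have hKd : Integrable (fun z : ℝ => rexp (-(x - z)^2 / 4) *
      (u₀ (s * z) - (if z < 0 then u₀ (-s) else u₀ s))) := by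
    have h := hKg.sub hKst
    exact h.congr (Filter.Eventually.of_forall fun z => (mul_sub _ _ _).symm)
  have hKint : Integrable (fun z : ℝ => rexp (-(x - z)^2 / 4)) := K_integrable x
  have hF1int : Integrable ((Ioo (-r) r).indicator (fun _ : ℝ => 2 * C)) :=
    (integrable_indicator_iff measurableSet_Ioo).mpr
      ((integrableOn_const_iff).mpr (Or.inr measure_Ioo_lt_top))
  have hF2int : Integrable ((Iio (-R)).indicator
      (fun z : ℝ => 2 * C * rexp (-(x - z)^2 / 4))) :=
    (hKint.const_mul (2 * C)).indicator measurableSet_Iio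
  have hF3int : Integrable ((Ioi R).indicator
      (fun z : ℝ => 2 * C * rexp (-(x - z)^2 / 4))) :=
    (hKint.const_mul (2 * C)).indicator measurableSet_Ioi
  have hF4int : Integrable (fun z : ℝ => E * rexp (-(x - z)^2 / 4)) :=
    hKint.const_mul _
  have hF1nn : ∀ z, 0 ≤ (Ioo (-r) r).indicator (fun _ : ℝ => 2 * C) z :=
    fun z => indicator_nonneg (fun _ _ => by linarith) z
  have hF2nn : ∀ z, 0 ≤ (Iio (-R)).indicator
      (fun z : ℝ => 2 * C * rexp (-(x - z)^2 / 4)) z :=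
    fun z => indicator_nonneg (fun w _ => mul_nonneg (by linarith) (Real.exp_pos _).le) z
  have hF3nn : ∀ z, 0 ≤ (Ioi R).indicator
      (fun z : ℝ => 2 * C * rexp (-(x - z)^2 / 4)) z :=
    fun z => indicator_nonneg (fun w _ => mul_nonneg (by linarith) (Real.exp_pos _).le) z
  have hpt : ∀ z : ℝ,
      |rexp (-(x - z)^2 / 4) * (u₀ (s * z) - (if z < 0 then u₀ (-s) else u₀ s))|
      ≤ (Ioo (-r) r).indicator (fun _ : ℝ => 2 * C) z
        + (Iio (-R)).indicator (fun z : ℝ => 2 * C * rexp (-(x - z)^2 / 4)) z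
        + (Ioi R).indicator (fun z : ℝ => 2 * C * rexp (-(x - z)^2 / 4)) z
        + E * rexp (-(x - z)^2 / 4) := by
    intro z
    have hK0 : (0:ℝ) ≤ rexp (-(x - z)^2 / 4) := (Real.exp_pos _).le
    have hK1 : rexp (-(x - z)^2 / 4) ≤ 1 := K_le_one x z
    have hd2C : |u₀ (s * z) - (if z < 0 then u₀ (-s) else u₀ s)| ≤ 2 * C := by
      have h1 := hbd (s * z)
      have h2 : |(if z < 0 then u₀ (-s) else u₀ s)| ≤ C := by split <;> exact hbd _
      have h3 := abs_sub (u₀ (s * z)) (if z < 0 then u₀ (-s) else u₀ s)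
      linarith
    have hF4nn : (0:ℝ) ≤ E * rexp (-(x - z)^2 / 4) := mul_nonneg hE0 hK0
    rw [abs_mul, abs_of_nonneg hK0]
    rcases lt_or_ge |z| r with h1 | h1
    · have hmem : z ∈ Ioo (-r) r := by
        have h := abs_lt.mp h1
        exact mem_Ioo.mpr ⟨h.1, h.2⟩
      have he1 : (Ioo (-r) r).indicator (fun _ : ℝ => 2 * C) z = 2 * C :=
        indicator_of_mem hmem _
      have hb : rexp (-(x - z)^2 / 4) *
          |u₀ (s * z) - (if z < 0 then u₀ (-s) else u₀ s)| ≤ 2 * C := by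
        calc rexp (-(x - z)^2 / 4) * |u₀ (s * z) - (if z < 0 then u₀ (-s) else u₀ s)|
            ≤ 1 * |u₀ (s * z) - (if z < 0 then u₀ (-s) else u₀ s)| :=
              mul_le_mul_of_nonneg_right hK1 (abs_nonneg _)
          _ = |u₀ (s * z) - (if z < 0 then u₀ (-s) else u₀ s)| := one_mul _
          _ ≤ 2 * C := hd2C
      linarith [hF2nn z, hF3nn z]
    rcases lt_or_ge z (-R) with h2 | h2
    · have he2 : (Iio (-R)).indicator (fun z : ℝ => 2 * C * rexp (-(x - z)^2 / 4)) z
          = 2 * C * rexp (-(x - z)^2 / 4) := indicator_of_mem (mem_Iio.mpr h2) _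
      have hb : rexp (-(x - z)^2 / 4) * |u₀ (s * z) - (if z < 0 then u₀ (-s) else u₀ s)|
          ≤ 2 * C * rexp (-(x - z)^2 / 4) := by
        calc rexp (-(x - z)^2 / 4) * |u₀ (s * z) - (if z < 0 then u₀ (-s) else u₀ s)|
            ≤ rexp (-(x - z)^2 / 4) * (2 * C) := mul_le_mul_of_nonneg_left hd2C hK0
          _ = 2 * C * rexp (-(x - z)^2 / 4) := by ring
      linarith [hF1nn z, hF3nn z]
    rcases lt_or_ge R z with h3 | h3
    · have he3 : (Ioi R).indicator (fun z : ℝ => 2 * C * rexp (-(x - z)^2 / 4)) z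
          = 2 * C * rexp (-(x - z)^2 / 4) := indicator_of_mem (mem_Ioi.mpr h3) _
      have hb : rexp (-(x - z)^2 / 4) * |u₀ (s * z) - (if z < 0 then u₀ (-s) else u₀ s)|
          ≤ 2 * C * rexp (-(x - z)^2 / 4) := by
        calc rexp (-(x - z)^2 / 4) * |u₀ (s * z) - (if z < 0 then u₀ (-s) else u₀ s)|
            ≤ rexp (-(x - z)^2 / 4) * (2 * C) := mul_le_mul_of_nonneg_left hd2C hK0
          _ = 2 * C * rexp (-(x - z)^2 / 4) := by ring
      linarith [hF1nn z, hF2nn z]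
    · have hzR : |z| ≤ R := abs_le.mpr ⟨by linarith, h3⟩
      have hdm := hmid z h1 hzR
      have hb : rexp (-(x - z)^2 / 4) * |u₀ (s * z) - (if z < 0 then u₀ (-s) else u₀ s)|
          ≤ E * rexp (-(x - z)^2 / 4) := by
        calc rexp (-(x - z)^2 / 4) * |u₀ (s * z) - (if z < 0 then u₀ (-s) else u₀ s)|
            ≤ rexp (-(x - z)^2 / 4) * E := mul_le_mul_of_nonneg_left hdm hK0
          _ = E * rexp (-(x - z)^2 / 4) := by ring
      linarith [hF1nn z, hF2nn z, hF3nn z]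
  have hIle : |∫ z : ℝ, rexp (-(x - z)^2 / 4) *
        (u₀ (s * z) - (if z < 0 then u₀ (-s) else u₀ s))|
      ≤ ∫ z : ℝ, |rexp (-(x - z)^2 / 4) *
        (u₀ (s * z) - (if z < 0 then u₀ (-s) else u₀ s))| := by
    have h := norm_integral_le_integral_norm (μ := volume)
      (fun z : ℝ => rexp (-(x - z)^2 / 4) *
        (u₀ (s * z) - (if z < 0 then u₀ (-s) else u₀ s)))
    simp only [Real.norm_eq_abs] at h
    exact h
  have hsum : (∫ z : ℝ, |rexp (-(x - z)^2 / 4) *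
        (u₀ (s * z) - (if z < 0 then u₀ (-s) else u₀ s))|)
      ≤ ∫ z : ℝ, ((Ioo (-r) r).indicator (fun _ : ℝ => 2 * C) z
        + (Iio (-R)).indicator (fun z : ℝ => 2 * C * rexp (-(x - z)^2 / 4)) z
        + (Ioi R).indicator (fun z : ℝ => 2 * C * rexp (-(x - z)^2 / 4)) z
        + E * rexp (-(x - z)^2 / 4)) :=
    integral_mono (g := fun z : ℝ => ((Ioo (-r) r).indicator (fun _ : ℝ => 2 * C) z
        + (Iio (-R)).indicator (fun z : ℝ => 2 * C * rexp (-(x - z)^2 / 4)) z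
        + (Ioi R).indicator (fun z : ℝ => 2 * C * rexp (-(x - z)^2 / 4)) z
        + E * rexp (-(x - z)^2 / 4)))
      hKd.abs (((hF1int.add hF2int).add hF3int).add hF4int) hpt
  have hsplit4 : (∫ z : ℝ, ((Ioo (-r) r).indicator (fun _ : ℝ => 2 * C) z
        + (Iio (-R)).indicator (fun z : ℝ => 2 * C * rexp (-(x - z)^2 / 4)) z
        + (Ioi R).indicator (fun z : ℝ => 2 * C * rexp (-(x - z)^2 / 4)) z
        + E * rexp (-(x - z)^2 / 4)))
      = (∫ z : ℝ, (Ioo (-r) r).indicator (fun _ : ℝ => 2 * C) z)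
        + (∫ z : ℝ, (Iio (-R)).indicator (fun z : ℝ => 2 * C * rexp (-(x - z)^2 / 4)) z)
        + (∫ z : ℝ, (Ioi R).indicator (fun z : ℝ => 2 * C * rexp (-(x - z)^2 / 4)) z)
        + ∫ z : ℝ, E * rexp (-(x - z)^2 / 4) := by
    have h12 : Integrable (fun z : ℝ => (Ioo (-r) r).indicator (fun _ : ℝ => 2 * C) z
        + (Iio (-R)).indicator (fun z : ℝ => 2 * C * rexp (-(x - z)^2 / 4)) z) :=
      hF1int.add hF2int
    have h123 : Integrable (fun z : ℝ => (Ioo (-r) r).indicator (fun _ : ℝ => 2 * C) z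
        + (Iio (-R)).indicator (fun z : ℝ => 2 * C * rexp (-(x - z)^2 / 4)) z
        + (Ioi R).indicator (fun z : ℝ => 2 * C * rexp (-(x - z)^2 / 4)) z) :=
      h12.add hF3int
    rw [integral_add h123 hF4int, integral_add h12 hF3int, integral_add hF1int hF2int]
  have hI1 : (∫ z : ℝ, (Ioo (-r) r).indicator (fun _ : ℝ => 2 * C) z)
      ≤ (2 * r) * (2 * C) := by
    rw [integral_indicator_const _ measurableSet_Ioo, Real.volume_real_Ioo_of_le (by linarith), smul_eq_mul]
    exact le_of_eq (by ring)
  have hI2 : (∫ z : ℝ, (Iio (-R)).indicator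
        (fun z : ℝ => 2 * C * rexp (-(x - z)^2 / 4)) z)
      ≤ 2 * C * rexp (1 + L - R) := by
    rw [integral_indicator measurableSet_Iio, integral_const_mul]
    exact mul_le_mul_of_nonneg_left (K_tail_Iio hx hRL) (by linarith)
  have hI3 : (∫ z : ℝ, (Ioi R).indicator
        (fun z : ℝ => 2 * C * rexp (-(x - z)^2 / 4)) z)
      ≤ 2 * C * rexp (1 + L - R) := by
    rw [integral_indicator measurableSet_Ioi, integral_const_mul]
    exact mul_le_mul_of_nonneg_left (K_tail_Ioi hx hRL) (by linarith)
  have hI4 : (∫ z : ℝ, E * rexp (-(x - z)^2 / 4)) = E * (2 * Real.sqrt π) := by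
    rw [integral_const_mul, K_integral]
  linarith [hIle, hsum, hsplit4, hI1, hI2, hI3, hI4]


set_option maxHeartbeats 1000000 in
lemma mid_lemma (u₀ : ℝ → ℝ) (s r R ε M δ : ℝ)
    (hspos : 0 < s) (hs0 : s ≠ 0) (hrpos : 0 < r) (hr1 : r < 1) (hR1 : 1 < R)
    (hM : M = Real.log R - Real.log r) (hlogR : 0 ≤ Real.log R) (hlogr : Real.log r ≤ 0)
    (hεpos : 0 < ε) (hsδ : s ≤ δ) (hsR : s * R ≤ δ)
    (hδ : ∀ a b : ℝ, a ≤ b → (0 < a ∨ b < 0) → |a| ≤ δ → |b| ≤ δ →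
      |u₀ b - u₀ a| ≤ ε * |Real.log (b / a)|) :
    ∀ z : ℝ, r ≤ |z| → |z| ≤ R →
      |u₀ (s * z) - (if z < 0 then u₀ (-s) else u₀ s)| ≤ ε * M := by
    intro z hrz hzR
    have hz0 : z ≠ 0 := by
      intro h; rw [h, abs_zero] at hrz; linarith
    have hlogz : |Real.log z| ≤ M := by
      rw [← Real.log_abs]
      rcases le_total 1 |z| with h1 | h1
      · rw [abs_of_nonneg (Real.log_nonneg h1)]
        have := Real.log_le_log (by linarith) hzR
        rw [hM]; linarith
      · rw [abs_of_nonpos (Real.log_nonpos (abs_nonneg z) h1)]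
        have := Real.log_le_log hrpos hrz
        rw [hM]; linarith
    have h0 : s / (s * z) = z⁻¹ := by rw [div_mul_eq_div_div, div_self hs0, one_div]
    rcases lt_or_ge z 0 with hzneg | hzpos
    · have hzabs : |z| = -z := abs_of_neg hzneg
      have hzR' : -z ≤ R := by rwa [hzabs] at hzR
      have hrz' : r ≤ -z := by rwa [hzabs] at hrz
      rw [if_pos hzneg]
      rcases le_total z (-1) with h1 | h1
      · have h := hδ (s * z) (-s)
          (by nlinarith [mul_nonneg hspos.le (show (0:ℝ) ≤ -z - 1 by linarith)])
          (Or.inr (by linarith))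
          (by rw [abs_mul, abs_of_pos hspos, hzabs]
              nlinarith [mul_le_mul_of_nonneg_left hzR' hspos.le])
          (by rw [abs_neg, abs_of_pos hspos]; exact hsδ)
        have hratio : (-s) / (s * z) = (-z)⁻¹ := by
          rw [neg_div, h0, inv_neg]
        calc |u₀ (s * z) - u₀ (-s)| = |u₀ (-s) - u₀ (s * z)| := abs_sub_comm _ _
          _ ≤ ε * |Real.log ((-s) / (s * z))| := h
          _ = ε * |Real.log z| := by
              rw [hratio, Real.log_inv, Real.log_neg_eq_log, abs_neg]
          _ ≤ ε * M := mul_le_mul_of_nonneg_left hlogz hεpos.le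
      · have h := hδ (-s) (s * z)
          (by nlinarith [mul_nonneg hspos.le (show (0:ℝ) ≤ z + 1 by linarith)])
          (Or.inr (mul_neg_of_pos_of_neg hspos hzneg))
          (by rw [abs_neg, abs_of_pos hspos]; exact hsδ)
          (by rw [abs_mul, abs_of_pos hspos, hzabs]
              nlinarith [mul_le_mul_of_nonneg_left (show -z ≤ 1 by linarith) hspos.le])
        have hratio : (s * z) / (-s) = -z := by
          rw [div_neg, mul_comm s z, mul_div_cancel_right₀ z hs0]
        calc |u₀ (s * z) - u₀ (-s)|
            ≤ ε * |Real.log ((s * z) / (-s))| := h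
          _ = ε * |Real.log z| := by rw [hratio, Real.log_neg_eq_log]
          _ ≤ ε * M := mul_le_mul_of_nonneg_left hlogz hεpos.le
    · have hz0' : 0 < z := lt_of_le_of_ne hzpos (Ne.symm hz0)
      have hzabs : |z| = z := abs_of_pos hz0'
      have hzR' : z ≤ R := by rwa [hzabs] at hzR
      have hrz' : r ≤ z := by rwa [hzabs] at hrz
      rw [if_neg (not_lt.mpr hzpos)]
      rcases le_total 1 z with h1 | h1
      · have h := hδ s (s * z)
          (by nlinarith [mul_nonneg hspos.le (show (0:ℝ) ≤ z - 1 by linarith)])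
          (Or.inl hspos)
          (by rw [abs_of_pos hspos]; exact hsδ)
          (by rw [abs_mul, abs_of_pos hspos, hzabs]
              nlinarith [mul_le_mul_of_nonneg_left hzR' hspos.le])
        have hratio : (s * z) / s = z := by
          rw [mul_comm s z, mul_div_cancel_right₀ z hs0]
        calc |u₀ (s * z) - u₀ s|
            ≤ ε * |Real.log ((s * z) / s)| := h
          _ = ε * |Real.log z| := by rw [hratio]
          _ ≤ ε * M := mul_le_mul_of_nonneg_left hlogz hεpos.le
      · have h := hδ (s * z) s
          (by nlinarith [mul_nonneg hspos.le (show (0:ℝ) ≤ 1 - z by linarith)])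
          (Or.inl (mul_pos hspos hz0'))
          (by rw [abs_mul, abs_of_pos hspos, hzabs]
              nlinarith [mul_le_mul_of_nonneg_left h1 hspos.le])
          (by rw [abs_of_pos hspos]; exact hsδ)
        have hratio : s / (s * z) = z⁻¹ := h0
        calc |u₀ (s * z) - u₀ s| = |u₀ s - u₀ (s * z)| := abs_sub_comm _ _
          _ ≤ ε * |Real.log (s / (s * z))| := h
          _ = ε * |Real.log z| := by rw [hratio, Real.log_inv, abs_neg]
          _ ≤ ε * M := mul_le_mul_of_nonneg_left hlogz hεpos.le




set_option maxHeartbeats 1000000 in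
theorem stmt_7 (u₀ : ℝ → ℝ) (hmeas : Measurable u₀) (C : ℝ) (hbd : ∀ x, |u₀ x| ≤ C)
    (hC1 : ContDiffOn ℝ 1 u₀ {(0:ℝ)}ᶜ)
    (hosc : Tendsto (fun x => |x * deriv u₀ x|) (nhdsWithin 0 {(0:ℝ)}ᶜ) (nhds 0))
    (u : ℝ → ℝ → ℝ)
    (hu : ∀ x t, 0 < t →
      u x t = (1 / (2 * Real.sqrt (π * t))) * ∫ y : ℝ, Real.exp (-(x - y)^2 / (4 * t)) * u₀ y)
    (F : ℝ → ℝ) (hF : ∀ z, F z = (1 / (2 * Real.sqrt π)) * ∫ y in Iio z, Real.exp (-y^2 / 4)) :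
    ∀ L > 0,
      Tendsto
        (fun t => ⨆ x : Icc (-L) L,
          |u (Real.sqrt t * (x : ℝ)) t -
            (F (-(x : ℝ)) * u₀ (-(Real.sqrt t)) + F (x : ℝ) * u₀ (Real.sqrt t))|)
        (nhdsWithin 0 (Ioi 0)) (nhds 0) := by
  have hC0 : (0:ℝ) ≤ C := le_trans (abs_nonneg _) (hbd 0)
  have hπ1 : (1:ℝ) ≤ Real.sqrt π := Real.one_le_sqrt.mpr (by nlinarith [Real.pi_gt_three])
  have h2π : (0:ℝ) < 2 * Real.sqrt π := by linarith
  have hcpos : 0 < (2 * Real.sqrt π)⁻¹ := inv_pos.mpr h2π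
  have hc1 : (2 * Real.sqrt π)⁻¹ ≤ 1 := inv_le_one_of_one_le₀ (by linarith)
  have hcc : (2 * Real.sqrt π) * (2 * Real.sqrt π)⁻¹ = 1 := mul_inv_cancel₀ (ne_of_gt h2π)
  intro L hL
  have hLr1 : (1:ℝ) ≤ (L : ℝ) := by exact_mod_cast hL
  rw [Metric.tendsto_nhdsWithin_nhds]
  intro η hη
  obtain ⟨D, hD⟩ : ∃ D : ℝ, D = 2 * C + 1 := ⟨_, rfl⟩
  have hDpos : 0 < D := by rw [hD]; linarith
  have hDC : 2 * C ≤ D := by rw [hD]; linarith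
  -- choose R explicitly
  obtain ⟨A, hA⟩ : ∃ A : ℝ, A = min (η / (16 * D)) 1 := ⟨_, rfl⟩
  have hApos : 0 < A := by rw [hA]; exact lt_min (by positivity) one_pos
  have hA1 : A ≤ 1 := by rw [hA]; exact min_le_right _ _
  have hAη : A ≤ η / (16 * D) := by rw [hA]; exact min_le_left _ _
  obtain ⟨R, hR⟩ : ∃ R : ℝ, R = (L : ℝ) + 2 - Real.log A := ⟨_, rfl⟩
  have hlogA : Real.log A ≤ 0 := Real.log_nonpos hApos.le hA1
  have hRL : (L : ℝ) + 1 < R := by rw [hR]; linarith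
  have hR1 : 1 < R := by linarith
  have hRpos : 0 < R := by linarith
  have hRtail : rexp (1 + (L : ℝ) - R) < η / (16 * D) := by
    have h1 : 1 + (L : ℝ) - R = Real.log A - 1 := by rw [hR]; ring
    have h2 : (1:ℝ) < rexp 1 := by
      have := Real.add_one_lt_exp (x := 1) (by norm_num)
      linarith
    rw [h1, Real.exp_sub, Real.exp_log hApos]
    calc A / rexp 1 < A := by
          rw [div_lt_iff₀ (by positivity)]; nlinarith
      _ ≤ η / (16 * D) := hAη
  -- choose r
  obtain ⟨r, hr⟩ : ∃ r : ℝ, r = min (1/2) (η / (16 * D)) := ⟨_, rfl⟩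
  have hrpos : 0 < r := by rw [hr]; exact lt_min (by norm_num) (by positivity)
  have hr1 : r < 1 := by
    have : r ≤ 1/2 := by rw [hr]; exact min_le_left _ _
    linarith
  have hr2 : r ≤ η / (16 * D) := by rw [hr]; exact min_le_right _ _
  -- M and ε
  obtain ⟨M, hM⟩ : ∃ M : ℝ, M = Real.log R - Real.log r := ⟨_, rfl⟩
  have hlogR : 0 ≤ Real.log R := Real.log_nonneg hR1.le
  have hlogr : Real.log r ≤ 0 := Real.log_nonpos hrpos.le hr1.le
  have hM0 : 0 ≤ M := by rw [hM]; linarith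
  obtain ⟨ε, hε⟩ : ∃ ε : ℝ, ε = η / (8 * (M + 1)) := ⟨_, rfl⟩
  have hεpos : 0 < ε := by rw [hε]; positivity
  obtain ⟨δ, hδpos, hδ⟩ := osc_lemma u₀ hC1 hosc ε hεpos
  refine ⟨(δ / R)^2, by positivity, ?_⟩
  intro t ht hdist
  have ht0 : 0 < t := ht
  rw [Real.dist_eq, sub_zero, abs_of_pos ht0] at hdist
  have hspos : 0 < Real.sqrt t := Real.sqrt_pos.mpr ht0
  obtain ⟨s, hs⟩ : ∃ s : ℝ, s = Real.sqrt t := ⟨_, rfl⟩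
  rw [← hs] at hspos ⊢
  have hs0 : s ≠ 0 := ne_of_gt hspos
  have hsδR : s < δ / R := by
    rw [hs, show δ / R = Real.sqrt ((δ / R)^2) from (Real.sqrt_sq (by positivity)).symm]
    exact Real.sqrt_lt_sqrt ht0.le hdist
  have hsR : s * R ≤ δ := (le_div_iff₀ hRpos).mp hsδR.le
  have hsδ : s ≤ δ := by nlinarith
  -- the middle estimate
  have hmid := mid_lemma u₀ s r R ε M δ hspos hs0 hrpos hr1 hR1 hM hlogR hlogr hεpos hsδ hsR hδ
  -- numeric bounds
  have hr3 : r * (16 * D) ≤ η := by rwa [le_div_iff₀ (by positivity)] at hr2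
  have hr5 : (16 * r) * (2 * C) ≤ (16 * r) * D := mul_le_mul_of_nonneg_left hDC (by positivity)
  have hA4 : (2 * r) * (2 * C) ≤ η / 4 := by
    linarith [hr3, hr5, mul_nonneg hrpos.le hC0]
  have hB : 2 * C * rexp (1 + (L : ℝ) - R) ≤ η / 16 := by
    have h1 : 2 * C * rexp (1 + (L : ℝ) - R) ≤ 2 * C * (η / (16 * D)) :=
      mul_le_mul_of_nonneg_left hRtail.le (by linarith)
    have h2 : 2 * C * (η / (16 * D)) ≤ D * (η / (16 * D)) :=
      mul_le_mul_of_nonneg_right hDC (by positivity)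
    have h3 : D * (η / (16 * D)) = η / 16 := by field_simp
    linarith
  have hεM : ε * M ≤ η / 8 := by
    rw [hε, div_mul_eq_mul_div, div_le_div_iff₀ (by positivity) (by norm_num)]
    nlinarith
  have hεM0 : 0 ≤ ε * M := mul_nonneg hεpos.le hM0
  -- per-point bound
  have key : ∀ x : ℝ, |x| ≤ (L : ℝ) →
      |u (s * x) t - (F (-x) * u₀ (-s) + F x * u₀ s)| ≤ η / 2 := by
    intro x hx
    have hrep := rep_lemma u₀ hmeas C hbd u hu F hF t ht0 x
    rw [← hs] at hrep
    have hbnd := bound_lemma u₀ hmeas C hbd hC0 s x (L : ℝ) r R (ε * M) hx hRL hεM0 hrpos hmid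
    rw [hrep, abs_mul, abs_of_pos hcpos]
    have hstep : |∫ z : ℝ, rexp (-(x - z)^2 / 4) *
          (u₀ (s * z) - (if z < 0 then u₀ (-s) else u₀ s))|
        ≤ η / 4 + η / 16 + η / 16 + ε * M * (2 * Real.sqrt π) := by
      have := mul_le_mul_of_nonneg_left hεM0 h2π.le
      linarith [hbnd, hA4, hB]
    have hfin : (2 * Real.sqrt π)⁻¹ * (η / 4 + η / 16 + η / 16 + ε * M * (2 * Real.sqrt π))
        ≤ η / 2 := by
      have h1 : (2 * Real.sqrt π)⁻¹ * (η / 4 + η / 16 + η / 16)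
          ≤ η / 4 + η / 16 + η / 16 :=
        mul_le_of_le_one_left (by linarith) hc1
      have h2 : (2 * Real.sqrt π)⁻¹ * (ε * M * (2 * Real.sqrt π)) = ε * M := by
        rw [show (2 * Real.sqrt π)⁻¹ * (ε * M * (2 * Real.sqrt π))
          = ε * M * ((2 * Real.sqrt π) * (2 * Real.sqrt π)⁻¹) by ring, hcc, mul_one]
      have h3 : (2 * Real.sqrt π)⁻¹ * (η / 4 + η / 16 + η / 16 + ε * M * (2 * Real.sqrt π))
          = (2 * Real.sqrt π)⁻¹ * (η / 4 + η / 16 + η / 16)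
            + (2 * Real.sqrt π)⁻¹ * (ε * M * (2 * Real.sqrt π)) := by ring
      rw [h3, h2]
      linarith
    calc (2 * Real.sqrt π)⁻¹ * |∫ z : ℝ, rexp (-(x - z)^2 / 4) *
          (u₀ (s * z) - (if z < 0 then u₀ (-s) else u₀ s))|
        ≤ (2 * Real.sqrt π)⁻¹ * (η / 4 + η / 16 + η / 16 + ε * M * (2 * Real.sqrt π)) :=
          mul_le_mul_of_nonneg_left hstep hcpos.le
      _ ≤ η / 2 := hfin
  -- conclude
  have hne : Nonempty (Icc (-L) L) :=
    ⟨⟨0, mem_Icc.mpr ⟨neg_nonpos.mpr hL.le, hL.le⟩⟩⟩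
  have hnonneg : 0 ≤ ⨆ x : Icc (-L) L,
      |u (s * ((x : ℤ) : ℝ)) t - (F (-((x : ℤ) : ℝ)) * u₀ (-s) + F ((x : ℤ) : ℝ) * u₀ s)| :=
    Real.iSup_nonneg fun x => abs_nonneg _
  have hsup : (⨆ x : Icc (-L) L,
      |u (s * ((x : ℤ) : ℝ)) t - (F (-((x : ℤ) : ℝ)) * u₀ (-s) + F ((x : ℤ) : ℝ) * u₀ s)|)
      ≤ η / 2 := by
    refine ciSup_le fun x => key _ ?_
    have h := mem_Icc.mp x.2
    rw [abs_le]
    constructor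
    · have : ((-L : ℤ) : ℝ) ≤ ((x : ℤ) : ℝ) := Int.cast_le.mpr h.1
      push_cast at this
      linarith
    · exact_mod_cast Int.cast_le.mpr h.2
  rw [Real.dist_eq, sub_zero, abs_of_nonneg hnonneg]
  linarith
end

section
/- Let u₀ : ℝ → ℝ be C¹ on ℝ \ {0} with M₋ := sup_{y<0} |y·u₀'(y)| < ∞ and M₊ := sup_{y>0} |y·u₀'(y)| < ∞, and let u(x,t) be the heat-kernel convolution solution of u_t = u_xx with initial value u₀. Then for all x ∈ ℝ and t > 0: |u(√t·x, t) − (F(−x)·u₀(−√t) + F(x)·u₀(√t))| ≤ G(−x)·M₋ + G(x)·M₊, where F(z) = (1/(2√π)) ∫_{−∞}^z e^{−y²/4} dy and G(z) = (1/(2√π)) ∫_0^∞ e^{−(z−y)²/4} |log y| dy. -/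
open Filter Real MeasureTheory Set

-- |log y| ≤ 2 y^{1/2} + 2 y^{-1/2} for y > 0
lemma aux_abs_log_le {y : ℝ} (hy : 0 < y) :
    |Real.log y| ≤ 2 * y ^ (1/2:ℝ) + 2 * y ^ (-(1/2):ℝ) := by
  have p1 : (0:ℝ) < y ^ (1/2:ℝ) := Real.rpow_pos_of_pos hy _
  have p2 : (0:ℝ) < y ^ (-(1/2):ℝ) := Real.rpow_pos_of_pos hy _
  have h1 : (1/2:ℝ) * Real.log y ≤ y ^ (1/2:ℝ) - 1 := by
    have := Real.log_le_sub_one_of_pos p1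
    rwa [Real.log_rpow hy] at this
  have h2 : (-(1/2):ℝ) * Real.log y ≤ y ^ (-(1/2):ℝ) - 1 := by
    have := Real.log_le_sub_one_of_pos p2
    rwa [Real.log_rpow hy] at this
  rw [abs_le]
  constructor <;> nlinarith

-- shifted gaussian bound
lemma aux_gauss_shift (c y : ℝ) :
    Real.exp (-(c - y)^2 / 4) ≤ Real.exp (c^2/4) * Real.exp (-(1/8) * y^2) := by
  rw [← Real.exp_add]
  apply Real.exp_le_exp.2
  nlinarith [sq_nonneg (y - 2*c), sq_nonneg y]

-- key integrability: gaussian times |log| on (0,∞)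
lemma aux_key_integrable (c : ℝ) :
    IntegrableOn (fun y => Real.exp (-(c - y)^2 / 4) * |Real.log y|) (Ioi (0:ℝ)) := by
  have hi1 : IntegrableOn (fun y : ℝ => y ^ (1/2:ℝ) * Real.exp (-(1/8) * y^2)) (Ioi 0) :=
    integrableOn_rpow_mul_exp_neg_mul_sq (by norm_num) (by norm_num)
  have hi2 : IntegrableOn (fun y : ℝ => y ^ (-(1/2):ℝ) * Real.exp (-(1/8) * y^2)) (Ioi 0) :=
    integrableOn_rpow_mul_exp_neg_mul_sq (by norm_num) (by norm_num)
  have hg : IntegrableOn (fun y : ℝ => Real.exp (c^2/4) *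
      (2 * (y ^ (1/2:ℝ) * Real.exp (-(1/8) * y^2)) + 2 * (y ^ (-(1/2):ℝ) * Real.exp (-(1/8) * y^2))))
      (Ioi 0) :=
    (((hi1.const_mul 2).add (hi2.const_mul 2)).const_mul _)
  apply Integrable.mono' hg
  · apply ContinuousOn.aestronglyMeasurable _ measurableSet_Ioi
    apply ContinuousOn.mul
    · exact (Real.continuous_exp.comp (by continuity)).continuousOn
    · exact (continuous_abs.comp_continuousOn
        (Real.continuousOn_log.mono (fun y hy => ne_of_gt hy)))
  · filter_upwards [ae_restrict_mem measurableSet_Ioi] with y hy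
    have hy0 : (0:ℝ) < y := hy
    have h1 : Real.exp (-(c - y)^2 / 4) ≤ Real.exp (c^2/4) * Real.exp (-(1/8) * y^2) :=
      aux_gauss_shift c y
    have h2 : |Real.log y| ≤ 2 * y ^ (1/2:ℝ) + 2 * y ^ (-(1/2):ℝ) := aux_abs_log_le hy0
    have e1 : (0:ℝ) < Real.exp (-(c - y)^2 / 4) := Real.exp_pos _
    have e2 : (0:ℝ) < Real.exp (-(1/8) * y^2) := Real.exp_pos _
    have e3 : (0:ℝ) < Real.exp (c^2/4) := Real.exp_pos _
    have p1 : (0:ℝ) < y ^ (1/2:ℝ) := Real.rpow_pos_of_pos hy0 _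
    have p2 : (0:ℝ) < y ^ (-(1/2):ℝ) := Real.rpow_pos_of_pos hy0 _
    rw [Real.norm_eq_abs, abs_mul, abs_of_pos e1, abs_abs]
    nlinarith [abs_nonneg (Real.log y)]

-- reflection for integrability
lemma aux_integrableOn_comp_neg {g : ℝ → ℝ} {a : ℝ} (h : IntegrableOn g (Ioi a)) :
    IntegrableOn (fun z => g (-z)) (Iio (-a)) := by
  have m : MeasurableEmbedding (fun x : ℝ => -x) :=
    (Homeomorph.neg ℝ).measurableEmbedding
  have h' : IntegrableOn g (Ioi a) (Measure.map (fun x : ℝ => -x) volume) := by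
    rwa [Measure.map_neg_eq_self (volume : Measure ℝ)]
  have := (m.integrableOn_map_iff).1 h'
  simpa [Function.comp_def, neg_preimage, neg_Ioi] using this

-- translation for set integrals over Iic
lemma aux_integral_Iic_shift (f : ℝ → ℝ) (c a : ℝ) :
    ∫ z in Iic (c + a), f z = ∫ z in Iic c, f (z + a) := by
  have m : MeasurableEmbedding (fun x : ℝ => x + a) :=
    (Homeomorph.addRight a).measurableEmbedding
  have h1 : ∫ z in Iic (c + a), f z
      = ∫ z in Iic (c + a), f z ∂(Measure.map (fun x : ℝ => x + a) volume) := by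
    rw [map_add_right_eq_self (volume : Measure ℝ) a]
  rw [h1, m.setIntegral_map]
  congr 1
  ext z
  simp [add_comm]

lemma aux_integral_Ioi_shift (f : ℝ → ℝ) (c a : ℝ) :
    ∫ z in Ioi (c + a), f z = ∫ z in Ioi c, f (z + a) := by
  have m : MeasurableEmbedding (fun x : ℝ => x + a) :=
    (Homeomorph.addRight a).measurableEmbedding
  have h1 : ∫ z in Ioi (c + a), f z
      = ∫ z in Ioi (c + a), f z ∂(Measure.map (fun x : ℝ => x + a) volume) := by
    rw [map_add_right_eq_self (volume : Measure ℝ) a]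
  rw [h1, m.setIntegral_map]
  congr 1
  ext z
  simp
set_option maxHeartbeats 1000000 in
theorem stmt_8 (u₀ : ℝ → ℝ) (hC1 : ContDiffOn ℝ 1 u₀ {(0:ℝ)}ᶜ)
    (Mneg Mpos : ℝ)
    (hMneg : ∀ y < (0:ℝ), |y * deriv u₀ y| ≤ Mneg)
    (hMpos : ∀ y > (0:ℝ), |y * deriv u₀ y| ≤ Mpos)
    (u : ℝ → ℝ → ℝ)
    (hu : ∀ x t, 0 < t →
      u x t = (1 / (2 * Real.sqrt (π * t))) * ∫ y : ℝ, Real.exp (-(x - y)^2 / (4 * t)) * u₀ y)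
    (F : ℝ → ℝ) (hF : ∀ z, F z = (1 / (2 * Real.sqrt π)) * ∫ y in Iio z, Real.exp (-y^2 / 4))
    (G : ℝ → ℝ)
    (hG : ∀ z, G z = (1 / (2 * Real.sqrt π)) *
      ∫ y in Ioi (0:ℝ), Real.exp (-(z - y)^2 / 4) * |Real.log y|) :
    ∀ x : ℝ, ∀ t > 0,
      |u (Real.sqrt t * x) t -
        (F (-x) * u₀ (-(Real.sqrt t)) + F x * u₀ (Real.sqrt t))| ≤
      G (-x) * Mneg + G x * Mpos := by
  intro x t ht
  set σ := Real.sqrt t with hσdef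
  have hσ : 0 < σ := Real.sqrt_pos.2 ht
  have hσne : σ ≠ 0 := ne_of_gt hσ
  have hσt : σ^2 = t := Real.sq_sqrt ht.le
  have hπ : (0:ℝ) < Real.sqrt π := Real.sqrt_pos.2 Real.pi_pos
  -- differentiability away from 0
  have hdiff : ∀ y : ℝ, y ≠ 0 → HasDerivAt u₀ (deriv u₀ y) y := by
    intro y hy
    have h1 : DifferentiableAt ℝ u₀ y :=
      (hC1.contDiffAt (isOpen_compl_singleton.mem_nhds (by simpa using hy))).differentiableAt
        one_ne_zero
    exact h1.hasDerivAt
  -- key pointwise bounds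
  have keypos : ∀ z : ℝ, 0 < z → |u₀ (σ * z) - u₀ σ| ≤ Mpos * |Real.log z| := by
    intro z hz
    have hφ : ∀ r : ℝ, HasDerivAt (fun r => u₀ (Real.exp r))
        (deriv u₀ (Real.exp r) * Real.exp r) r := fun r =>
      (hdiff _ (Real.exp_pos r).ne').comp r (Real.hasDerivAt_exp r)
    have hb : ∀ r ∈ (univ : Set ℝ), ‖deriv u₀ (Real.exp r) * Real.exp r‖ ≤ Mpos := by
      intro r _
      rw [Real.norm_eq_abs, mul_comm]
      exact hMpos _ (Real.exp_pos r)
    have h := convex_univ.norm_image_sub_le_of_norm_hasDerivWithin_le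
      (fun r _ => (hφ r).hasDerivWithinAt) hb (mem_univ (Real.log σ))
      (mem_univ (Real.log (σ * z)))
    simp only [Real.exp_log (mul_pos hσ hz), Real.exp_log hσ, Real.norm_eq_abs] at h
    rwa [Real.log_mul hσne hz.ne', add_sub_cancel_left] at h
  have keyneg : ∀ z : ℝ, z < 0 → |u₀ (σ * z) - u₀ (-σ)| ≤ Mneg * |Real.log (-z)| := by
    intro z hz
    have hφ : ∀ r : ℝ, HasDerivAt (fun r => u₀ (-Real.exp r))
        (deriv u₀ (-Real.exp r) * -Real.exp r) r := fun r =>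
      (hdiff _ (by simpa using (Real.exp_pos r).ne')).comp r (Real.hasDerivAt_exp r).neg
    have hb : ∀ r ∈ (univ : Set ℝ), ‖deriv u₀ (-Real.exp r) * -Real.exp r‖ ≤ Mneg := by
      intro r _
      rw [Real.norm_eq_abs, mul_comm]
      exact hMneg _ (by simpa using Real.exp_pos r)
    have h := convex_univ.norm_image_sub_le_of_norm_hasDerivWithin_le
      (fun r _ => (hφ r).hasDerivWithinAt) hb (mem_univ (Real.log σ))
      (mem_univ (Real.log (σ * (-z))))
    simp only [Real.exp_log (mul_pos hσ (neg_pos.2 hz)), Real.exp_log hσ,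
      Real.norm_eq_abs] at h
    rw [Real.log_mul hσne (neg_pos.2 hz).ne', add_sub_cancel_left] at h
    simpa [neg_neg] using h
  have hM0pos : 0 ≤ Mpos := le_trans (abs_nonneg _) (hMpos 1 one_pos)
  have hM0neg : 0 ≤ Mneg := le_trans (abs_nonneg _) (hMneg (-1) (by norm_num))
  -- the rescaled heat kernel
  set K : ℝ → ℝ := fun z => Real.exp (-(x - z)^2 / 4) with hK
  have hKcont : Continuous K := Real.continuous_exp.comp (by continuity)
  have hKpos : ∀ z, 0 < K z := fun z => Real.exp_pos _
  have hKint : Integrable K := by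
    have h1 : Integrable (fun z : ℝ => Real.exp (-(1/4 : ℝ) * z^2)) :=
      integrable_exp_neg_mul_sq (by norm_num)
    have h2 := h1.comp_sub_right x
    have heq : (fun z : ℝ => Real.exp (-(1/4:ℝ) * (z - x)^2)) = K := by
      funext z
      rw [hK]
      congr 1
      ring
    rwa [heq] at h2
  -- measurability
  have hmem0 : ∀ᵐ (y : ℝ), y ∈ ({(0:ℝ)}ᶜ : Set ℝ) := by
    rw [ae_iff]
    simpa using Real.volume_singleton (a := (0:ℝ))
  have hrestrict : (volume : Measure ℝ).restrict {(0:ℝ)}ᶜ = volume :=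
    Measure.restrict_eq_self_of_ae_mem hmem0
  have hvm : AEStronglyMeasurable (fun z => u₀ (σ * z)) volume := by
    have hc : ContinuousOn (fun z => u₀ (σ * z)) {(0:ℝ)}ᶜ := by
      apply hC1.continuousOn.comp ((continuous_const.mul continuous_id).continuousOn)
      intro z hz
      simp only [mem_compl_iff, mem_singleton_iff] at hz ⊢
      exact mul_ne_zero hσne hz
    have := hc.aestronglyMeasurable (μ := volume) isOpen_compl_singleton.measurableSet
    rwa [hrestrict] at this
  -- integrable bounds on half lines
  have hIpos : IntegrableOn (fun z => K z * |Real.log z|) (Ioi (0:ℝ)) := aux_key_integrable x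
  have hIneg : IntegrableOn (fun z => K z * |Real.log (-z)|) (Iio (0:ℝ)) := by
    have h2 := aux_integrableOn_comp_neg (aux_key_integrable (-x))
    rw [neg_zero] at h2
    have heq : (fun z : ℝ => Real.exp (-(-x - -z)^2 / 4) * |Real.log (-z)|)
        = fun z => K z * |Real.log (-z)| := by
      funext z
      rw [hK]
      congr 2
      ring
    rwa [heq] at h2
  have hBpos : IntegrableOn (fun z => K z * (Mpos * |Real.log z|)) (Ioi (0:ℝ)) := by
    have heq : (fun z => K z * (Mpos * |Real.log z|))
        = fun z => Mpos * (K z * |Real.log z|) := by funext z; ring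
    rw [heq]
    exact hIpos.const_mul Mpos
  have hBneg : IntegrableOn (fun z => K z * (Mneg * |Real.log (-z)|)) (Iio (0:ℝ)) := by
    have heq : (fun z => K z * (Mneg * |Real.log (-z)|))
        = fun z => Mneg * (K z * |Real.log (-z)|) := by funext z; ring
    rw [heq]
    exact hIneg.const_mul Mneg
  -- integrability of the centered integrands
  have hmeas_pos : AEStronglyMeasurable (fun z => K z * (u₀ (σ * z) - u₀ σ))
      ((volume : Measure ℝ).restrict (Ioi 0)) :=
    (hKcont.aestronglyMeasurable.restrict).mul ((hvm.sub aestronglyMeasurable_const).restrict)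
  have hmeas_neg : AEStronglyMeasurable (fun z => K z * (u₀ (σ * z) - u₀ (-σ)))
      ((volume : Measure ℝ).restrict (Iio 0)) :=
    (hKcont.aestronglyMeasurable.restrict).mul ((hvm.sub aestronglyMeasurable_const).restrict)
  have hC_pos : IntegrableOn (fun z => K z * (u₀ (σ * z) - u₀ σ)) (Ioi (0:ℝ)) := by
    apply Integrable.mono' hBpos hmeas_pos
    filter_upwards [ae_restrict_mem measurableSet_Ioi] with z hz
    rw [Real.norm_eq_abs, abs_mul, abs_of_pos (hKpos z)]
    exact mul_le_mul_of_nonneg_left (keypos z hz) (hKpos z).le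
  have hC_neg : IntegrableOn (fun z => K z * (u₀ (σ * z) - u₀ (-σ))) (Iio (0:ℝ)) := by
    apply Integrable.mono' hBneg hmeas_neg
    filter_upwards [ae_restrict_mem measurableSet_Iio] with z hz
    rw [Real.norm_eq_abs, abs_mul, abs_of_pos (hKpos z)]
    exact mul_le_mul_of_nonneg_left (keyneg z hz) (hKpos z).le
  -- integrability of K * v
  have hKv_pos : IntegrableOn (fun z => K z * u₀ (σ * z)) (Ioi (0:ℝ)) := by
    have h := hC_pos.add ((hKint.integrableOn).mul_const (u₀ σ))
    exact h.congr (Filter.Eventually.of_forall fun z => by simp only [Pi.add_apply]; ring)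
  have hKv_neg : IntegrableOn (fun z => K z * u₀ (σ * z)) (Iio (0:ℝ)) := by
    have h := hC_neg.add ((hKint.integrableOn).mul_const (u₀ (-σ)))
    exact h.congr (Filter.Eventually.of_forall fun z => by simp only [Pi.add_apply]; ring)
  have hKv : Integrable (fun z => K z * u₀ (σ * z)) := by
    have h := hKv_neg.union ((integrableOn_Ici_iff_integrableOn_Ioi enorm_ne_top).2 hKv_pos)
    rwa [Iio_union_Ici, integrableOn_univ] at h
  -- rescaling the solution formula
  have scale : (∫ y : ℝ, Real.exp (-(σ * x - y)^2 / (4 * t)) * u₀ y)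
      = σ * ∫ z : ℝ, K z * u₀ (σ * z) := by
    have h := MeasureTheory.Measure.integral_comp_mul_left
      (fun y => Real.exp (-(σ * x - y)^2 / (4 * t)) * u₀ y) σ
    have harg : (fun z : ℝ => Real.exp (-(σ * x - σ * z)^2 / (4 * t)) * u₀ (σ * z))
        = fun z => K z * u₀ (σ * z) := by
      funext z
      rw [hK]
      congr 2
      have h1 : (σ * x - σ * z)^2 = t * (x - z)^2 := by rw [← hσt]; ring
      rw [h1]
      field_simp
    rw [harg] at h
    rw [h, abs_of_pos (inv_pos.2 hσ), smul_eq_mul, ← mul_assoc, mul_inv_cancel₀ hσne, one_mul]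
  have hconst : 1 / (2 * Real.sqrt (π * t)) * σ = 1 / (2 * Real.sqrt π) := by
    rw [Real.sqrt_mul Real.pi_pos.le, ← hσdef]
    rw [div_mul_eq_mul_div, one_mul, div_eq_div_iff (by positivity) (by positivity)]
    ring
  -- F identities
  have hFneg : ∫ z in Iio (0:ℝ), K z = 2 * Real.sqrt π * F (-x) := by
    rw [hF, ← mul_assoc]
    rw [mul_one_div, div_self (by positivity), one_mul]
    rw [← integral_Iic_eq_integral_Iio, ← integral_Iic_eq_integral_Iio]
    have h := aux_integral_Iic_shift (fun y => Real.exp (-y^2 / 4)) 0 (-x)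
    rw [zero_add] at h
    rw [h]
    refine setIntegral_congr_fun measurableSet_Iic (fun z _ => ?_)
    simp only [hK]
    congr 1
    ring
  have hFpos : ∫ z in Ioi (0:ℝ), K z = 2 * Real.sqrt π * F x := by
    rw [hF, ← mul_assoc]
    rw [mul_one_div, div_self (by positivity), one_mul]
    rw [← integral_Iic_eq_integral_Iio]
    have heven : (fun y : ℝ => Real.exp (-y^2 / 4)) = fun y => Real.exp (-(-y)^2 / 4) := by
      funext y; congr 2; ring
    rw [heven]
    rw [integral_comp_neg_Iic x (fun y => Real.exp (-y^2/4))]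
    have h := aux_integral_Ioi_shift (fun y => Real.exp (-y^2 / 4)) 0 (-x)
    rw [zero_add] at h
    rw [h]
    refine setIntegral_congr_fun measurableSet_Ioi (fun z _ => ?_)
    simp only [hK]
    congr 1
    ring
  -- G identities
  have hGpos : ∫ z in Ioi (0:ℝ), K z * |Real.log z| = 2 * Real.sqrt π * G x := by
    rw [hG, ← mul_assoc, mul_one_div, div_self (by positivity), one_mul]
  have hGneg : ∫ z in Iio (0:ℝ), K z * |Real.log (-z)| = 2 * Real.sqrt π * G (-x) := by
    rw [hG, ← mul_assoc, mul_one_div, div_self (by positivity), one_mul]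
    rw [← integral_Iic_eq_integral_Iio]
    have h := integral_comp_neg_Ioi (0:ℝ) (fun z => K z * |Real.log (-z)|)
    rw [neg_zero] at h
    rw [← h]
    refine setIntegral_congr_fun measurableSet_Ioi (fun y _ => ?_)
    simp only [hK, neg_neg]
    congr 2
    ring
  -- splitting
  have hsplitv : (∫ z : ℝ, K z * u₀ (σ * z))
      = (∫ z in Iio (0:ℝ), K z * u₀ (σ * z)) + (∫ z in Ioi (0:ℝ), K z * u₀ (σ * z)) := by
    rw [← intervalIntegral.integral_Iio_add_Ici hKv_neg ((integrableOn_Ici_iff_integrableOn_Ioi enorm_ne_top).2 hKv_pos),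
      integral_Ici_eq_integral_Ioi]
  have hsub_neg : (∫ z in Iio (0:ℝ), K z * u₀ (σ * z))
      = (∫ z in Iio (0:ℝ), K z * (u₀ (σ * z) - u₀ (-σ))) + 2 * Real.sqrt π * F (-x) * u₀ (-σ) := by
    have h := integral_add hC_neg ((hKint.integrableOn (s := Iio 0)).mul_const (u₀ (-σ)))
    have heq : (fun z => K z * (u₀ (σ * z) - u₀ (-σ)) + K z * u₀ (-σ))
        = fun z => K z * u₀ (σ * z) := by funext z; ring
    rw [heq] at h
    rw [h, integral_mul_const (u₀ (-σ)) K, hFneg]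
  have hsub_pos : (∫ z in Ioi (0:ℝ), K z * u₀ (σ * z))
      = (∫ z in Ioi (0:ℝ), K z * (u₀ (σ * z) - u₀ σ)) + 2 * Real.sqrt π * F x * u₀ σ := by
    have h := integral_add hC_pos ((hKint.integrableOn (s := Ioi 0)).mul_const (u₀ σ))
    have heq : (fun z => K z * (u₀ (σ * z) - u₀ σ) + K z * u₀ σ)
        = fun z => K z * u₀ (σ * z) := by funext z; ring
    rw [heq] at h
    rw [h, integral_mul_const (u₀ σ) K, hFpos]
  -- bounds on the two error integrals
  have hAbound : |∫ z in Iio (0:ℝ), K z * (u₀ (σ * z) - u₀ (-σ))|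
      ≤ Mneg * (2 * Real.sqrt π * G (-x)) := by
    have h := norm_integral_le_of_norm_le (f := fun z => K z * (u₀ (σ * z) - u₀ (-σ))) hBneg ?_
    · rw [Real.norm_eq_abs] at h
      refine h.trans ?_
      have heq : (fun z => K z * (Mneg * |Real.log (-z)|))
          = fun z => Mneg * (K z * |Real.log (-z)|) := by funext z; ring
      rw [heq, integral_const_mul Mneg _, hGneg]
    · filter_upwards [ae_restrict_mem measurableSet_Iio] with z hz
      rw [Real.norm_eq_abs, abs_mul, abs_of_pos (hKpos z)]
      exact mul_le_mul_of_nonneg_left (keyneg z hz) (hKpos z).le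
  have hBbound : |∫ z in Ioi (0:ℝ), K z * (u₀ (σ * z) - u₀ σ)|
      ≤ Mpos * (2 * Real.sqrt π * G x) := by
    have h := norm_integral_le_of_norm_le (f := fun z => K z * (u₀ (σ * z) - u₀ σ)) hBpos ?_
    · rw [Real.norm_eq_abs] at h
      refine h.trans ?_
      have heq : (fun z => K z * (Mpos * |Real.log z|))
          = fun z => Mpos * (K z * |Real.log z|) := by funext z; ring
      rw [heq, integral_const_mul Mpos _, hGpos]
    · filter_upwards [ae_restrict_mem measurableSet_Ioi] with z hz
      rw [Real.norm_eq_abs, abs_mul, abs_of_pos (hKpos z)]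
      exact mul_le_mul_of_nonneg_left (keypos z hz) (hKpos z).le
  -- assemble
  rw [hu (σ * x) t ht, scale, ← mul_assoc, hconst]
  set A := ∫ z in Iio (0:ℝ), K z * (u₀ (σ * z) - u₀ (-σ)) with hA
  set B := ∫ z in Ioi (0:ℝ), K z * (u₀ (σ * z) - u₀ σ) with hB
  have hrw : 1 / (2 * Real.sqrt π) * (∫ z : ℝ, K z * u₀ (σ * z))
      - (F (-x) * u₀ (-σ) + F x * u₀ σ) = 1 / (2 * Real.sqrt π) * (A + B) := by
    rw [hsplitv, hsub_neg, hsub_pos]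
    field_simp
    ring
  rw [hrw]
  have hc0 : (0:ℝ) < 1 / (2 * Real.sqrt π) := by positivity
  rw [abs_mul, abs_of_pos hc0]
  have h1 : |A + B| ≤ Mneg * (2 * Real.sqrt π * G (-x)) + Mpos * (2 * Real.sqrt π * G x) :=
    (abs_add_le A B).trans (add_le_add hAbound hBbound)
  have h2 := mul_le_mul_of_nonneg_left h1 hc0.le
  refine h2.trans (le_of_eq ?_)
  field_simp
end

section
/- Let u₀ : ℝ → ℝ be C¹ on ℝ \ {0} with sup_{y≠0}|y·u₀'(y)| < ∞, and define u(x,t) by heat-kernel convolution. Then for all x ∈ ℝ, t > 0: u(√t·x,t) − (F(−x)u₀(−√t) + F(x)u₀(√t)) = (1/(2√π)) ∫_0^∞ e^{−(x+z)²/4} (∫_1^z (−√t·y)u₀'(−√t·y)/y dy) dz + (1/(2√π)) ∫_0^∞ e^{−(x−z)²/4} (∫_1^z (√t·y)u₀'(√t·y)/y dy) dz, where F(z) = (1/(2√π)) ∫_{−∞}^z e^{−y²/4} dy. -/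
open Filter Real MeasureTheory Set

lemma ftc_aux (u₀ : ℝ → ℝ) (hC1 : ContDiffOn ℝ 1 u₀ {(0:ℝ)}ᶜ)
    (c : ℝ) (hc : c ≠ 0) {z : ℝ} (hz : 0 < z) :
    ∫ y in (1:ℝ)..z, (c * y) * deriv u₀ (c * y) / y = u₀ (c * z) - u₀ c := by
  have hderivC : ContinuousOn (deriv u₀) {(0:ℝ)}ᶜ :=
    hC1.continuousOn_deriv_of_isOpen isOpen_compl_singleton le_rfl
  have hmem : ∀ y ∈ uIcc (1:ℝ) z, 0 < y := by
    intro y hy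
    exact lt_of_lt_of_le (lt_min one_pos hz) hy.1
  have h1 : ∀ y ∈ uIcc (1:ℝ) z, (c * y) * deriv u₀ (c * y) / y = c * deriv u₀ (c * y) := by
    intro y hy
    have hy0 : y ≠ 0 := (hmem y hy).ne'
    field_simp
  rw [intervalIntegral.integral_congr h1]
  have hmain := intervalIntegral.integral_eq_sub_of_hasDerivAt
    (f := fun y => u₀ (c * y)) (f' := fun y => c * deriv u₀ (c * y)) (a := 1) (b := z) ?_ ?_
  · simpa using hmain
  · intro y hy
    have hcy : c * y ≠ 0 := mul_ne_zero hc (hmem y hy).ne'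
    have hdiff : DifferentiableAt ℝ u₀ (c * y) :=
      (hC1.contDiffAt (isOpen_compl_singleton.mem_nhds hcy)).differentiableAt one_ne_zero
    have h2 : HasDerivAt (fun y : ℝ => c * y) c y := by
      simpa using (hasDerivAt_id y).const_mul c
    have h3 := (hdiff.hasDerivAt).comp y h2
    rw [mul_comm (deriv u₀ (c * y)) c] at h3
    exact h3
  · apply ContinuousOn.intervalIntegrable
    apply ContinuousOn.mul continuousOn_const
    apply hderivC.comp ((continuous_mul_left c).continuousOn)
    intro y hy
    simpa using mul_ne_zero hc (hmem y hy).ne'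

lemma bound_aux (u₀ : ℝ → ℝ) (hC1 : ContDiffOn ℝ 1 u₀ {(0:ℝ)}ᶜ)
    (M : ℝ) (hM : ∀ y : ℝ, y ≠ 0 → |y * deriv u₀ y| ≤ M)
    (c : ℝ) (hc : c ≠ 0) {z : ℝ} (hz : 0 < z) :
    |u₀ (c * z) - u₀ c| ≤ M * |Real.log z| := by
  have hM0 : 0 ≤ M := le_trans (abs_nonneg _) (hM 1 one_ne_zero)
  rw [← ftc_aux u₀ hC1 c hc hz]
  have hpos : ∀ y ∈ Set.uIoc (1:ℝ) z, 0 < y := by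
    intro y hy
    exact lt_of_le_of_lt (le_min zero_le_one hz.le) hy.1
  have key : ∀ y ∈ Set.uIoc (1:ℝ) z, ‖(c * y) * deriv u₀ (c * y) / y‖ ≤ M * (1 / y) := by
    intro y hy
    have hy0 : 0 < y := hpos y hy
    rw [Real.norm_eq_abs, abs_div, abs_of_pos hy0]
    rw [mul_one_div]
    gcongr
    exact hM (c * y) (mul_ne_zero hc hy0.ne')
  have hb : IntervalIntegrable (fun y : ℝ => M * (1 / y)) volume 1 z := by
    apply ContinuousOn.intervalIntegrable
    apply ContinuousOn.mul continuousOn_const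
    apply ContinuousOn.div continuousOn_const continuousOn_id
    intro y hy
    exact (lt_of_lt_of_le (lt_min one_pos hz) hy.1).ne'
  have hle : ‖∫ y in (1:ℝ)..z, (c * y) * deriv u₀ (c * y) / y‖ ≤ |∫ y in (1:ℝ)..z, M * (1 / y)| := by
    rcases le_total 1 z with h | h
    · exact (intervalIntegral.norm_integral_le_of_norm_le h
        (by filter_upwards with y hy; exact key y (by rw [Set.uIoc_of_le h]; exact hy)) hb).trans
        (le_abs_self _)
    · rw [intervalIntegral.integral_symm z 1, norm_neg, intervalIntegral.integral_symm z 1, abs_neg]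
      exact (intervalIntegral.norm_integral_le_of_norm_le h
        (by filter_upwards with y hy; exact key y (by rw [Set.uIoc_of_ge h]; exact hy)) hb.symm).trans
        (le_abs_self _)
  · have hcalc : (∫ y in (1:ℝ)..z, M * (1 / y)) = M * Real.log z := by
      rw [intervalIntegral.integral_const_mul]
      rw [integral_one_div]
      · rw [div_one]
      · intro h0
        exact absurd (lt_of_lt_of_le (lt_min one_pos hz) h0.1) (lt_irrefl 0)
    rw [hcalc] at hle
    calc |∫ y in (1:ℝ)..z, (c * y) * deriv u₀ (c * y) / y| ≤ |M * Real.log z| := hle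
      _ = M * |Real.log z| := by rw [abs_mul, abs_of_nonneg hM0]

lemma log_bound {z : ℝ} (hz : 0 < z) :
    |Real.log z| ≤ 2 * Real.sqrt z + 2 * (Real.sqrt z)⁻¹ := by
  have hs : 0 < Real.sqrt z := Real.sqrt_pos.mpr hz
  have hlog : Real.log z = 2 * Real.log (Real.sqrt z) := by
    rw [Real.log_sqrt hz.le]; ring
  have hinv : 0 < (Real.sqrt z)⁻¹ := inv_pos.mpr hs
  rcases le_or_gt 0 (Real.log z) with h | h
  · rw [abs_of_nonneg h]
    have h1 := Real.log_le_sub_one_of_pos hs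
    nlinarith
  · rw [abs_of_neg h]
    have h1 := Real.log_le_sub_one_of_pos hinv
    rw [Real.log_inv] at h1
    nlinarith

lemma gauss_rpow_int (x s : ℝ) (hs : -1 < s) :
    IntegrableOn (fun z : ℝ => z ^ s * Real.exp (-(x - z)^2 / 4)) (Ioi 0) := by
  have base := (integrableOn_rpow_mul_exp_neg_mul_sq (b := (1:ℝ)/8) (by norm_num) hs).const_mul
    (Real.exp (x^2/4))
  apply Integrable.mono' base
  · apply ContinuousOn.aestronglyMeasurable _ measurableSet_Ioi
    apply ContinuousOn.mul
    · exact continuousOn_id.rpow_const (fun z hz => Or.inl (ne_of_gt hz))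
    · exact (Real.continuous_exp.comp (by fun_prop)).continuousOn
  · filter_upwards [ae_restrict_mem measurableSet_Ioi] with z hz
    rw [Real.norm_eq_abs, abs_mul, abs_of_nonneg (Real.rpow_nonneg (le_of_lt hz) s),
      abs_of_nonneg (Real.exp_pos _).le]
    have hexp : Real.exp (-(x - z)^2 / 4) ≤ Real.exp (x^2/4) * Real.exp (-(1/8) * z^2) := by
      rw [← Real.exp_add]
      exact Real.exp_le_exp.mpr (by nlinarith [sq_nonneg (2*x - z)])
    calc z ^ s * Real.exp (-(x - z)^2 / 4)
        ≤ z ^ s * (Real.exp (x^2/4) * Real.exp (-(1/8) * z^2)) :=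
          mul_le_mul_of_nonneg_left hexp (Real.rpow_nonneg (le_of_lt hz) s)
      _ = Real.exp (x^2/4) * (z ^ s * Real.exp (-(1/8) * z^2)) := by ring

lemma gauss0 (x : ℝ) : IntegrableOn (fun z : ℝ => Real.exp (-(x - z)^2 / 4)) (Ioi 0) := by
  apply (gauss_rpow_int x 0 (by norm_num)).congr_fun _ measurableSet_Ioi
  intro z hz
  simp [Real.rpow_zero]

lemma key_int (u₀ : ℝ → ℝ) (hC1 : ContDiffOn ℝ 1 u₀ {(0:ℝ)}ᶜ)
    (M : ℝ) (hM : ∀ y : ℝ, y ≠ 0 → |y * deriv u₀ y| ≤ M)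
    (x c : ℝ) (hc : c ≠ 0) :
    IntegrableOn (fun z : ℝ => Real.exp (-(x - z)^2 / 4) * u₀ (c * z)) (Ioi 0) := by
  have hM0 : 0 ≤ M := le_trans (abs_nonneg _) (hM 1 one_ne_zero)
  have g0 := (gauss_rpow_int x 0 (by norm_num)).const_mul |u₀ c|
  have g1 := (gauss_rpow_int x ((1:ℝ)/2) (by norm_num)).const_mul (2*M)
  have g2 := (gauss_rpow_int x (-((1:ℝ)/2)) (by norm_num)).const_mul (2*M)
  have maj := (g0.add g1).add g2
  apply Integrable.mono' maj
  · apply ContinuousOn.aestronglyMeasurable _ measurableSet_Ioi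
    apply ContinuousOn.mul
    · exact (Real.continuous_exp.comp (by fun_prop)).continuousOn
    · apply hC1.continuousOn.comp (continuous_mul_left c).continuousOn
      intro z hz
      simpa using mul_ne_zero hc (ne_of_gt hz)
  · filter_upwards [ae_restrict_mem measurableSet_Ioi] with z hz
    have hz0 : (0:ℝ) < z := hz
    have hsq : 0 < Real.sqrt z := Real.sqrt_pos.mpr hz0
    have hE : 0 ≤ Real.exp (-(x - z)^2 / 4) := (Real.exp_pos _).le
    have hb1 : |u₀ (c * z)| ≤ |u₀ c| + M * |Real.log z| := by
      have h1 := bound_aux u₀ hC1 M hM c hc hz0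
      calc |u₀ (c * z)| = |u₀ c + (u₀ (c * z) - u₀ c)| := by ring_nf
        _ ≤ |u₀ c| + |u₀ (c * z) - u₀ c| := abs_add_le _ _
        _ ≤ |u₀ c| + M * |Real.log z| := by linarith
    have hb2 : M * |Real.log z| ≤ 2*M * Real.sqrt z + 2*M * (Real.sqrt z)⁻¹ := by
      have := log_bound hz0
      nlinarith
    have hrw1 : z ^ ((1:ℝ)/2) = Real.sqrt z := (Real.sqrt_eq_rpow z).symm
    have hrw2 : z ^ (-((1:ℝ)/2)) = (Real.sqrt z)⁻¹ := by
      rw [Real.rpow_neg hz0.le, hrw1]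
    rw [Real.norm_eq_abs, abs_mul, abs_of_nonneg hE]
    have hz00 : z ^ (0:ℝ) = 1 := Real.rpow_zero z
    calc Real.exp (-(x - z)^2 / 4) * |u₀ (c * z)|
        ≤ Real.exp (-(x - z)^2 / 4) * (|u₀ c| + (2*M * Real.sqrt z + 2*M * (Real.sqrt z)⁻¹)) := by
          apply mul_le_mul_of_nonneg_left _ hE
          linarith
      _ = |u₀ c| * (z ^ (0:ℝ) * Real.exp (-(x - z)^2 / 4))
          + 2*M * (z ^ ((1:ℝ)/2) * Real.exp (-(x - z)^2 / 4))
          + 2*M * (z ^ (-((1:ℝ)/2)) * Real.exp (-(x - z)^2 / 4)) := by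
          rw [hz00, hrw1, hrw2]; ring

theorem stmt_14 (u₀ : ℝ → ℝ) (hC1 : ContDiffOn ℝ 1 u₀ {(0:ℝ)}ᶜ)
    (M : ℝ) (hM : ∀ y : ℝ, y ≠ 0 → |y * deriv u₀ y| ≤ M)
    (u : ℝ → ℝ → ℝ)
    (hu : ∀ x t, 0 < t →
      u x t = (1 / (2 * Real.sqrt (π * t))) * ∫ y : ℝ, Real.exp (-(x - y)^2 / (4 * t)) * u₀ y)
    (F : ℝ → ℝ) (hF : ∀ z, F z = (1 / (2 * Real.sqrt π)) * ∫ y in Iio z, Real.exp (-y^2 / 4)) :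
    ∀ x : ℝ, ∀ t > 0,
      u (Real.sqrt t * x) t -
          (F (-x) * u₀ (-(Real.sqrt t)) + F x * u₀ (Real.sqrt t)) =
        (1 / (2 * Real.sqrt π)) *
            (∫ z in Ioi (0:ℝ), Real.exp (-(x + z)^2 / 4) *
              ∫ y in (1:ℝ)..z, (-(Real.sqrt t) * y) * deriv u₀ (-(Real.sqrt t) * y) / y) +
        (1 / (2 * Real.sqrt π)) *
            (∫ z in Ioi (0:ℝ), Real.exp (-(x - z)^2 / 4) *
              ∫ y in (1:ℝ)..z, (Real.sqrt t * y) * deriv u₀ (Real.sqrt t * y) / y) := by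
  intro x t ht
  set s := Real.sqrt t with hs_def
  have hs : 0 < s := Real.sqrt_pos.mpr ht
  have hst : s^2 = t := Real.sq_sqrt ht.le
  have hπ : 0 < Real.sqrt π := Real.sqrt_pos.mpr Real.pi_pos
  set k := 1 / (2 * Real.sqrt π) with hk
  -- integrability facts
  have hIpos : IntegrableOn (fun z : ℝ => Real.exp (-(x - z)^2 / 4) * u₀ (s * z)) (Ioi 0) :=
    key_int u₀ hC1 M hM x s hs.ne'
  have hIneg : IntegrableOn (fun z : ℝ => Real.exp (-(-x - z)^2 / 4) * u₀ (-s * z)) (Ioi 0) :=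
    key_int u₀ hC1 M hM (-x) (-s) (neg_ne_zero.mpr hs.ne')
  have hGpos : IntegrableOn (fun z : ℝ => Real.exp (-(x - z)^2 / 4)) (Ioi 0) := gauss0 x
  have hGneg : IntegrableOn (fun z : ℝ => Real.exp (-(-x - z)^2 / 4)) (Ioi 0) := gauss0 (-x)
  set f : ℝ → ℝ := fun z => Real.exp (-(x - z)^2 / 4) * u₀ (s * z) with hf_def
  have hfneg : ∀ z : ℝ, Real.exp (-(-x - z)^2 / 4) * u₀ (-s * z) = f (-z) := by
    intro z
    simp only [hf_def]
    rw [show -(-x - z)^2/4 = -(x - -z)^2/4 by ring, show -s*z = s * -z by ring]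
  have hIic : IntegrableOn f (Iic 0) := by
    rw [← (Measure.measurePreserving_neg (volume : Measure ℝ)).integrableOn_comp_preimage
      (Homeomorph.neg ℝ).measurableEmbedding]
    simp only [Function.comp_def, neg_preimage, neg_Iic, neg_zero]
    rw [integrableOn_Ici_iff_integrableOn_Ioi]
    exact hIneg.congr_fun (fun z _ => hfneg z) measurableSet_Ioi
  -- value of u
  have hu' : u (s * x) t = k * ((∫ z in Ioi (0:ℝ), Real.exp (-(-x - z)^2 / 4) * u₀ (-s * z))
      + ∫ z in Ioi (0:ℝ), Real.exp (-(x - z)^2 / 4) * u₀ (s * z)) := by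
    rw [hu (s * x) t ht]
    have hexp_eq : ∀ z : ℝ, Real.exp (-(s*x - s*z)^2/(4*t)) * u₀ (s*z) = f z := by
      intro z
      simp only [hf_def]
      congr 2
      rw [← hst]
      rw [show (s*x - s*z)^2 = s^2*(x-z)^2 from by ring]
      field_simp
    have hcm := MeasureTheory.Measure.integral_comp_mul_left
      (fun y => Real.exp (-(s*x - y)^2/(4*t)) * u₀ y) s
    rw [abs_of_pos (inv_pos.mpr hs), smul_eq_mul] at hcm
    simp only [hexp_eq] at hcm
    have hcm2 : (∫ y : ℝ, Real.exp (-(s*x - y)^2/(4*t)) * u₀ y) = s * ∫ z : ℝ, f z := by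
      rw [hcm, ← mul_assoc, mul_inv_cancel₀ hs.ne', one_mul]
    have hsplit := intervalIntegral.integral_Iic_add_Ioi hIic hIpos
    have hnegint : (∫ z in Iic (0:ℝ), f z)
        = ∫ z in Ioi (0:ℝ), Real.exp (-(-x - z)^2/4) * u₀ (-s*z) := by
      have h0 := integral_comp_neg_Ioi (0:ℝ) f
      rw [neg_zero] at h0
      rw [← h0]
      exact setIntegral_congr_fun measurableSet_Ioi (fun z _ => (hfneg z).symm)
    have hsq : Real.sqrt (π * t) = Real.sqrt π * s := by
      rw [Real.sqrt_mul Real.pi_pos.le, hs_def]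
    rw [hcm2, hsq, hk]
    rw [← hsplit, hnegint]
    have hIf : (∫ z in Ioi (0:ℝ), f z) = ∫ z in Ioi (0:ℝ), Real.exp (-(x - z)^2 / 4) * u₀ (s * z) := rfl
    rw [hIf]
    field_simp
  have hFgen : ∀ x' : ℝ, F x' = k * ∫ z in Ioi (0:ℝ), Real.exp (-(x' - z)^2 / 4) := by
    intro x'
    rw [hF x']
    congr 1
    have h1 : (∫ z in Ioi (0:ℝ), Real.exp (-(x' - z)^2/4))
        = ∫ w in Iic (0:ℝ), Real.exp (-(x' + w)^2/4) := by
      have h0 := integral_comp_neg_Ioi (0:ℝ) (fun w => Real.exp (-(x' + w)^2/4))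
      rw [neg_zero] at h0
      rw [← h0]
      refine setIntegral_congr_fun measurableSet_Ioi (fun z _ => ?_)
      rw [show x' + -z = x' - z from by ring]
    have h2 : (∫ w in Iic (0:ℝ), Real.exp (-(x' + w)^2/4))
        = ∫ y in Iic x', Real.exp (-y^2/4) := by
      have h3 := (measurePreserving_add_right (volume : Measure ℝ) x').setIntegral_preimage_emb
        (measurableEmbedding_addRight x') (fun y => Real.exp (-y^2/4)) (Iic x')
      rw [show ((· + x') ⁻¹' Iic x') = Iic (0:ℝ) from by ext w; simp] at h3
      rw [← h3]
      refine setIntegral_congr_fun measurableSet_Iic (fun w _ => ?_)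
      rw [show x' + w = w + x' from by ring]
    rw [h1, h2]
    exact integral_Iic_eq_integral_Iio.symm
  have hR2 : (∫ z in Ioi (0:ℝ), Real.exp (-(x - z)^2 / 4) *
        ∫ y in (1:ℝ)..z, (s * y) * deriv u₀ (s * y) / y)
      = (∫ z in Ioi (0:ℝ), Real.exp (-(x - z)^2 / 4) * u₀ (s * z))
        - (∫ z in Ioi (0:ℝ), Real.exp (-(x - z)^2 / 4)) * u₀ s := by
    rw [← integral_mul_const, ← integral_sub hIpos (hGpos.mul_const _)]
    apply setIntegral_congr_fun measurableSet_Ioi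
    intro z hz
    simp only [hf_def]
    rw [ftc_aux u₀ hC1 s hs.ne' hz]
    ring
  have hR1 : (∫ z in Ioi (0:ℝ), Real.exp (-(x + z)^2 / 4) *
        ∫ y in (1:ℝ)..z, (-s * y) * deriv u₀ (-s * y) / y)
      = (∫ z in Ioi (0:ℝ), Real.exp (-(-x - z)^2 / 4) * u₀ (-s * z))
        - (∫ z in Ioi (0:ℝ), Real.exp (-(-x - z)^2 / 4)) * u₀ (-s) := by
    rw [← integral_mul_const, ← integral_sub hIneg (hGneg.mul_const _)]
    apply setIntegral_congr_fun measurableSet_Ioi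
    intro z hz
    dsimp only
    rw [show (-(x + z)^2/4 : ℝ) = -(-x - z)^2/4 by ring]
    rw [show ∫ y in (1:ℝ)..z, (-s * y) * deriv u₀ (-s * y) / y
        = u₀ (-s * z) - u₀ (-s) from ftc_aux u₀ hC1 (-s) (neg_ne_zero.mpr hs.ne') hz]
    ring
  rw [hu', hFgen (-x), hFgen x, hR1, hR2]
  ring
end

section
/- Let u₀ ∈ L^∞(ℝ) be C¹ on ℝ \ {0} with lim_{|x|→∞} |x·u₀'(x)| = 0, and suppose (α, β) ∈ ℝ² is an accumulation point of {(u₀(−λ), u₀(λ))}_{λ>0} as λ → ∞, i.e., there is a sequence λₙ → ∞ with u₀(−λₙ) → α and u₀(λₙ) → β. Then with tₙ = λₙ², the rescaled heat solutions x ↦ u(√(tₙ)·x, tₙ) converge uniformly on compact subsets of ℝ to x ↦ α·F(−x) + β·F(x), where F(z) = (1/(2√π)) ∫_{−∞}^z e^{−y²/4} dy. -/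
open Filter Real MeasureTheory Set

lemma ftc_bound (u₀ : ℝ → ℝ) (hC1 : ContDiffOn ℝ 1 u₀ {(0:ℝ)}ᶜ) (ε' a b : ℝ)
    (hε' : 0 ≤ ε') (hab : a ≤ b) (hsign : 0 < a ∨ b < 0)
    (H : ∀ s ∈ Icc a b, |s * deriv u₀ s| ≤ ε') :
    |u₀ b - u₀ a| ≤ ε' * |Real.log (b / a)| := by
  have hne : ∀ s ∈ Icc a b, s ≠ 0 := by
    intro s hs h0
    rcases hsign with h | h
    · have := hs.1; rw [h0] at this; linarith
    · have := hs.2; rw [h0] at this; linarith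
  have hsub : Icc a b ⊆ {(0:ℝ)}ᶜ := fun s hs => hne s hs
  have hderiv : ∀ s ∈ uIcc a b, DifferentiableAt ℝ u₀ s := by
    intro s hs
    rw [uIcc_of_le hab] at hs
    exact (hC1.contDiffAt (isOpen_compl_singleton.mem_nhds (hne s hs))).differentiableAt one_ne_zero
  have hcont : ContinuousOn (deriv u₀) {(0:ℝ)}ᶜ :=
    hC1.continuousOn_deriv_of_isOpen isOpen_compl_singleton le_rfl
  have hcont' : ContinuousOn (deriv u₀) (uIcc a b) := by
    rw [uIcc_of_le hab]; exact hcont.mono hsub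
  have hint : IntervalIntegrable (deriv u₀) volume a b := hcont'.intervalIntegrable
  have heq : ∫ s in a..b, deriv u₀ s = u₀ b - u₀ a :=
    intervalIntegral.integral_deriv_eq_sub hderiv hint
  rw [← heq]
  have habs : |∫ s in a..b, deriv u₀ s| ≤ ∫ s in a..b, |deriv u₀ s| :=
    intervalIntegral.abs_integral_le_integral_abs hab
  have hb2 : ∀ s ∈ Icc a b, |deriv u₀ s| ≤ ε' * |s|⁻¹ := by
    intro s hs
    have h1 := H s hs
    have hp : 0 < |s| := abs_pos.mpr (hne s hs)
    rw [abs_mul] at h1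
    rw [mul_comm, ← div_eq_inv_mul, le_div_iff₀ hp]
    linarith [mul_comm |s| |deriv u₀ s|]
  have hintb : IntervalIntegrable (fun s => ε' * |s|⁻¹) volume a b := by
    apply ContinuousOn.intervalIntegrable
    rw [uIcc_of_le hab]
    exact continuousOn_const.mul ((continuous_abs.continuousOn.inv₀ (fun s hs => abs_ne_zero.mpr (hne s hs))))
  have hmono : ∫ s in a..b, |deriv u₀ s| ≤ ∫ s in a..b, ε' * |s|⁻¹ := by
    apply intervalIntegral.integral_mono_on hab hint.abs hintb hb2
  have hval : ∫ s in a..b, ε' * |s|⁻¹ = ε' * |Real.log (b / a)| := by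
    rw [intervalIntegral.integral_const_mul]
    congr 1
    rcases hsign with h | h
    · have ha : 0 < a := h
      have hbpos : 0 < b := lt_of_lt_of_le ha hab
      have : ∫ s in a..b, |s|⁻¹ = ∫ s in a..b, s⁻¹ := by
        apply intervalIntegral.integral_congr
        intro s hs
        rw [uIcc_of_le hab] at hs
        simp [abs_of_pos (lt_of_lt_of_le ha hs.1)]
      rw [this, integral_inv_of_pos ha hbpos,
        abs_of_nonneg (Real.log_nonneg ((le_div_iff₀ ha).mpr (by linarith)))]
    · have hbneg : b < 0 := h
      have haneg : a < 0 := lt_of_le_of_lt hab h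
      have h0 : (0:ℝ) ∉ uIcc a b := by
        rw [uIcc_of_le hab]; intro hc; exact absurd hc.2 (by linarith)
      have : ∫ s in a..b, |s|⁻¹ = ∫ s in a..b, -s⁻¹ := by
        apply intervalIntegral.integral_congr
        intro s hs
        rw [uIcc_of_le hab] at hs
        show |s|⁻¹ = -s⁻¹
        rw [abs_of_neg (lt_of_le_of_lt hs.2 hbneg), inv_neg]
      rw [this, intervalIntegral.integral_neg, integral_inv h0]
      have hratio : b / a ≤ 1 := by
        rw [div_le_one_of_neg haneg]; exact hab
      have hrpos : 0 < b / a := div_pos_iff.mpr (Or.inr ⟨hbneg, haneg⟩)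
      rw [abs_of_nonpos (Real.log_nonpos (le_of_lt hrpos) hratio)]
  calc |∫ s in a..b, deriv u₀ s| ≤ ∫ s in a..b, |deriv u₀ s| := habs
    _ ≤ ∫ s in a..b, ε' * |s|⁻¹ := hmono
    _ = ε' * |Real.log (b / a)| := hval

lemma log_abs_le (δ z : ℝ) (hδ : 0 < δ) (hδ1 : δ ≤ 1) (hz : δ ≤ |z|) :
    |Real.log (abs z)| ≤ Real.log δ⁻¹ + |z| := by
  have hz0 : 0 < |z| := lt_of_lt_of_le hδ hz
  rcases le_or_gt |z| 1 with h | h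
  · have h1 : Real.log |z| ≤ 0 := Real.log_nonpos (le_of_lt hz0) h
    rw [abs_of_nonpos h1]
    have : -Real.log |z| = Real.log |z|⁻¹ := (Real.log_inv _).symm
    rw [this]
    have h2 : |z|⁻¹ ≤ δ⁻¹ := by
      apply inv_anti₀ hδ hz
    calc Real.log |z|⁻¹ ≤ Real.log δ⁻¹ := Real.log_le_log (by positivity) h2
      _ ≤ Real.log δ⁻¹ + |z| := le_add_of_nonneg_right (abs_nonneg z)
  · have h1 : 0 ≤ Real.log |z| := Real.log_nonneg h.le
    rw [abs_of_nonneg h1]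
    have h2 : Real.log |z| ≤ |z| := by
      calc Real.log |z| ≤ |z| - 1 := Real.log_le_sub_one_of_pos hz0
        _ ≤ |z| := by linarith
    have h3 : 0 ≤ Real.log δ⁻¹ := Real.log_nonneg (one_le_inv_iff₀.mpr ⟨hδ, hδ1⟩)
    linarith

lemma osc_pos (u₀ : ℝ → ℝ) (hC1 : ContDiffOn ℝ 1 u₀ {(0:ℝ)}ᶜ) (lam δ ε' z : ℝ)
    (hl : 0 < lam) (hδ : 0 < δ) (hδ1 : δ ≤ 1) (hz : δ ≤ z) (hε' : 0 ≤ ε')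
    (H : ∀ s : ℝ, lam * δ ≤ |s| → |s * deriv u₀ s| ≤ ε') :
    |u₀ (lam * z) - u₀ lam| ≤ ε' * |Real.log (abs z)| := by
  have hz0 : 0 < z := lt_of_lt_of_le hδ hz
  have hza : |z| = z := abs_of_pos hz0
  rcases le_or_gt 1 z with h1 | h1
  · have := ftc_bound u₀ hC1 ε' lam (lam * z)
      hε' (by nlinarith) (Or.inl hl)
      (fun s hs => H s (by
        have : lam * δ ≤ s := by nlinarith [hs.1]
        rw [abs_of_pos (by nlinarith : (0:ℝ) < s)]; exact this))
    have heq : lam * z / lam = z := by field_simp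
    rw [heq] at this
    rw [hza]; exact this
  · have := ftc_bound u₀ hC1 ε' (lam * z) lam
      hε' (by nlinarith) (Or.inl (by positivity))
      (fun s hs => H s (by
        have : lam * δ ≤ s := by nlinarith [hs.1]
        rw [abs_of_pos (by nlinarith : (0:ℝ) < s)]; exact this))
    rw [abs_sub_comm]
    have heq : lam / (lam * z) = z⁻¹ := by
      field_simp
    rw [heq, Real.log_inv, abs_neg] at this
    rw [hza]; exact this

lemma osc_neg (u₀ : ℝ → ℝ) (hC1 : ContDiffOn ℝ 1 u₀ {(0:ℝ)}ᶜ) (lam δ ε' z : ℝ)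
    (hl : 0 < lam) (hδ : 0 < δ) (hδ1 : δ ≤ 1) (hz : z ≤ -δ) (hε' : 0 ≤ ε')
    (H : ∀ s : ℝ, lam * δ ≤ |s| → |s * deriv u₀ s| ≤ ε') :
    |u₀ (lam * z) - u₀ (-lam)| ≤ ε' * |Real.log (abs z)| := by
  have hz0 : z < 0 := lt_of_le_of_lt hz (by linarith)
  have hza : |z| = -z := abs_of_neg hz0
  rcases le_or_gt z (-1) with h1 | h1
  · have := ftc_bound u₀ hC1 ε' (lam * z) (-lam)
      hε' (by nlinarith) (Or.inr (by linarith))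
      (fun s hs => H s (by
        have hs2 : s ≤ -lam := hs.2
        rw [abs_of_neg (by nlinarith : s < (0:ℝ))]; nlinarith))
    have heq : -lam / (lam * z) = |z|⁻¹ := by
      have hzne : z ≠ 0 := ne_of_lt hz0
      rw [hza, div_eq_iff (mul_ne_zero (ne_of_gt hl) hzne), inv_neg, neg_mul, neg_inj,
        inv_mul_eq_div]
      rw [eq_div_iff hzne]
    rw [heq, Real.log_inv, abs_neg] at this
    rw [abs_sub_comm]
    exact this
  · have := ftc_bound u₀ hC1 ε' (-lam) (lam * z)
      hε' (by nlinarith) (Or.inr (by nlinarith))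
      (fun s hs => H s (by
        have hs2 : s ≤ lam * z := hs.2
        rw [abs_of_neg (by nlinarith : s < (0:ℝ))]; nlinarith))
    have heq : lam * z / (-lam) = |z| := by
      rw [hza, div_eq_iff (by linarith : -lam ≠ 0)]; ring
    rw [heq] at this
    exact this

noncomputable def hker (x z : ℝ) : ℝ := Real.exp (-(x - z)^2 / 4)

lemma ker_eq (x z : ℝ) : hker x z = (fun w => Real.exp (-(1/4) * w^2)) (z - x) := by
  unfold hker; congr 1; ring

lemma hker_nonneg (x z : ℝ) : 0 ≤ hker x z := le_of_lt (Real.exp_pos _)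

lemma hker_le_one (x z : ℝ) : hker x z ≤ 1 := by
  unfold hker
  rw [show (1:ℝ) = Real.exp 0 by simp]
  apply Real.exp_le_exp.mpr
  have : (0:ℝ) ≤ (x - z)^2 := sq_nonneg _
  linarith

lemma integrable_g0 : Integrable (fun w : ℝ => Real.exp (-(1/4) * w^2)) :=
  integrable_exp_neg_mul_sq (by norm_num)

lemma integrable_hker (x : ℝ) : Integrable (fun z => hker x z) := by
  have : (fun z => hker x z) = fun z => (fun w => Real.exp (-(1/4) * w^2)) (z - x) := by
    funext z; exact ker_eq x z
  rw [this]
  exact integrable_g0.comp_sub_right x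

lemma integral_hker (x : ℝ) : ∫ z, hker x z = ∫ w, Real.exp (-(1/4) * w^2) := by
  simp_rw [ker_eq]
  exact integral_sub_right_eq_self (fun w => Real.exp (-(1/4) * w^2)) x

lemma integrable_abs_g0 : Integrable (fun w : ℝ => |w| * Real.exp (-(1/4) * w^2)) := by
  have h := (integrable_mul_exp_neg_mul_sq (show (0:ℝ) < 1/4 by norm_num)).abs
  have : (fun w : ℝ => |w| * Real.exp (-(1/4) * w^2))
      = fun w : ℝ => |w * Real.exp (-(1/4) * w^2)| := by
    funext w
    rw [abs_mul, abs_of_pos (Real.exp_pos _)]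
  rw [this]
  exact h

lemma integrable_abs_hker (x : ℝ) :
    Integrable (fun z => |z - x| * hker x z) := by
  have : (fun z => |z - x| * hker x z)
      = fun z => (fun w => |w| * Real.exp (-(1/4) * w^2)) (z - x) := by
    funext z; rw [ker_eq]
  rw [this]
  exact integrable_abs_g0.comp_sub_right x

lemma integral_abs_hker (x : ℝ) :
    ∫ z, |z - x| * hker x z = ∫ w, |w| * Real.exp (-(1/4) * w^2) := by
  simp_rw [ker_eq]
  exact integral_sub_right_eq_self (fun w => |w| * Real.exp (-(1/4) * w^2)) x

-- Step A
lemma rescale (u₀ : ℝ → ℝ) (l x : ℝ) (hl : 0 < l) :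
    (1 / (2 * Real.sqrt (π * l^2))) * ∫ y : ℝ, Real.exp (-(l*x - y)^2 / (4 * l^2)) * u₀ y
      = (1 / (2 * Real.sqrt π)) * ∫ z : ℝ, hker x z * u₀ (l * z) := by
  have hsq : Real.sqrt (π * l^2) = Real.sqrt π * l := by
    rw [Real.sqrt_mul Real.pi_pos.le, Real.sqrt_sq hl.le]
  have hcomp : (fun z => hker x z * u₀ (l * z))
      = fun z => (fun y => Real.exp (-(l*x - y)^2 / (4 * l^2)) * u₀ y) (l * z) := by
    funext z
    simp only [hker]
    congr 2
    field_simp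
  have hcv : ∫ z : ℝ, hker x z * u₀ (l * z)
      = |l⁻¹| • ∫ y : ℝ, Real.exp (-(l*x - y)^2 / (4 * l^2)) * u₀ y := by
    rw [hcomp]
    exact MeasureTheory.Measure.integral_comp_mul_left (F := ℝ)
      (fun y => Real.exp (-(l*x - y)^2 / (4 * l^2)) * u₀ y) l
  rw [hcv, hsq, abs_of_pos (inv_pos.mpr hl), smul_eq_mul]
  have hA : Real.sqrt π ≠ 0 := ne_of_gt (Real.sqrt_pos.mpr Real.pi_pos)
  have hl' : l ≠ 0 := ne_of_gt hl
  have hs : (1:ℝ)/(2*(Real.sqrt π * l)) = 1/(2*Real.sqrt π) * l⁻¹ := by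
    field_simp
  rw [hs, mul_assoc]

noncomputable def gfun (α β : ℝ) : ℝ → ℝ := fun z => if z < 0 then α else β

lemma gfun_meas (α β : ℝ) : Measurable (gfun α β) :=
  Measurable.ite measurableSet_Iio measurable_const measurable_const

lemma gfun_bd (α β : ℝ) (z : ℝ) : |gfun α β z| ≤ max |α| |β| := by
  unfold gfun
  split
  · exact le_max_left _ _
  · exact le_max_right _ _

lemma integrable_hker_mul_bdd (x : ℝ) (v : ℝ → ℝ) (hv : AEStronglyMeasurable v volume)
    (B : ℝ) (hB : ∀ z, |v z| ≤ B) :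
    Integrable (fun z => hker x z * v z) := by
  have h := (integrable_hker x).bdd_mul hv (Eventually.of_forall fun z => (Real.norm_eq_abs _).le.trans (hB z))
  have he : (fun z => hker x z * v z) = fun z => v z * hker x z :=
    funext fun z => mul_comm _ _
  rw [he]; exact h

lemma fker_eq (x z : ℝ) : hker x z = Real.exp (-(z - x)^2 / 4) := by
  unfold hker; congr 1; ring

lemma setint_Iio (x : ℝ) :
    ∫ z in Iio (0:ℝ), hker x z = ∫ y in Iio (-x), Real.exp (-y^2 / 4) := by
  have key : (fun z => indicator (Iio (0:ℝ)) (fun z => hker x z) z)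
      = fun z => indicator (Iio (-x)) (fun y => Real.exp (-y^2 / 4)) (z - x) := by
    funext z
    by_cases hz : z < 0
    · rw [indicator_of_mem (mem_Iio.mpr hz), indicator_of_mem (mem_Iio.mpr (by linarith))]
      rw [fker_eq]
    · rw [indicator_of_notMem (by simpa using hz),
        indicator_of_notMem (by simp; linarith [not_lt.mp hz])]
  rw [← integral_indicator measurableSet_Iio, ← integral_indicator measurableSet_Iio]
  rw [key]
  exact integral_sub_right_eq_self (indicator (Iio (-x)) (fun y => Real.exp (-y^2 / 4))) x

lemma setint_Ici (x : ℝ) :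
    ∫ z in Ici (0:ℝ), hker x z = ∫ y in Iio x, Real.exp (-y^2 / 4) := by
  have key : (fun z => indicator (Ici (0:ℝ)) (fun z => hker x z) z)
      = fun z => indicator (Ici (-x)) (fun y => Real.exp (-y^2 / 4)) (z - x) := by
    funext z
    by_cases hz : 0 ≤ z
    · rw [indicator_of_mem (mem_Ici.mpr hz), indicator_of_mem (mem_Ici.mpr (by linarith))]
      rw [fker_eq]
    · rw [indicator_of_notMem (by simpa using hz),
        indicator_of_notMem (by simp; linarith [lt_of_not_ge hz])]
  have step1 : ∫ z in Ici (0:ℝ), hker x z = ∫ y in Ici (-x), Real.exp (-y^2 / 4) := by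
    rw [← integral_indicator measurableSet_Ici, ← integral_indicator measurableSet_Ici, key]
    exact integral_sub_right_eq_self (indicator (Ici (-x)) (fun y => Real.exp (-y^2 / 4))) x
  have key2 : (fun z => indicator (Iic x) (fun y => Real.exp (-y^2 / 4)) z)
      = fun z => indicator (Ici (-x)) (fun y => Real.exp (-y^2 / 4)) (-z) := by
    funext z
    by_cases hz : z ≤ x
    · rw [indicator_of_mem (mem_Iic.mpr hz), indicator_of_mem (mem_Ici.mpr (by linarith))]
      congr 1
      ring
    · rw [indicator_of_notMem (by simpa using hz),
        indicator_of_notMem (by simp; linarith [lt_of_not_ge hz])]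
  have step2 : ∫ y in Ici (-x), Real.exp (-y^2 / 4) = ∫ y in Iic x, Real.exp (-y^2 / 4) := by
    rw [← integral_indicator measurableSet_Ici, ← integral_indicator measurableSet_Iic, key2]
    exact (integral_neg_eq_self (indicator (Ici (-x)) (fun y => Real.exp (-y^2 / 4))) volume).symm
  have step3 : ∫ y in Iic x, Real.exp (-y^2 / 4) = ∫ y in Iio x, Real.exp (-y^2 / 4) :=
    setIntegral_congr_set (Iio_ae_eq_Iic (a := x)).symm
  rw [step1, step2, step3]

lemma limit_eq (α β x : ℝ) :
    α * (∫ y in Iio (-x), Real.exp (-y^2 / 4)) + β * (∫ y in Iio x, Real.exp (-y^2 / 4))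
      = ∫ z : ℝ, hker x z * gfun α β z := by
  have hint : Integrable (fun z => hker x z * gfun α β z) :=
    integrable_hker_mul_bdd x _ (gfun_meas α β).aestronglyMeasurable (max |α| |β|) (gfun_bd α β)
  have hsplit : ∫ z : ℝ, hker x z * gfun α β z
      = (∫ z in Iio (0:ℝ), hker x z * gfun α β z)
        + ∫ z in Ici (0:ℝ), hker x z * gfun α β z := by
    rw [← integral_add_compl measurableSet_Iio hint, compl_Iio]
  have h1 : ∫ z in Iio (0:ℝ), hker x z * gfun α β z = α * ∫ z in Iio (0:ℝ), hker x z := by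
    rw [← MeasureTheory.integral_const_mul]
    apply setIntegral_congr_fun measurableSet_Iio
    intro z hz
    simp only [gfun, if_pos (mem_Iio.mp hz)]
    ring
  have h2 : ∫ z in Ici (0:ℝ), hker x z * gfun α β z = β * ∫ z in Ici (0:ℝ), hker x z := by
    rw [← MeasureTheory.integral_const_mul]
    apply setIntegral_congr_fun measurableSet_Ici
    intro z hz
    simp only [gfun, if_neg (not_lt.mpr (mem_Ici.mp hz))]
    ring
  rw [hsplit, h1, h2, setint_Iio, setint_Ici]

lemma hker_cont (x : ℝ) : Continuous (fun z => hker x z) := by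
  unfold hker
  continuity

lemma integrable_abs_mul_ker (x : ℝ) : Integrable (fun z => |z| * hker x z) := by
  apply Integrable.mono' (((integrable_hker x).const_mul |x|).add (integrable_abs_hker x))
  · exact ((continuous_abs.mul (hker_cont x))).aestronglyMeasurable
  · filter_upwards with z
    rw [Real.norm_eq_abs, abs_of_nonneg (mul_nonneg (abs_nonneg z) (hker_nonneg x z))]
    have h1 : |z| ≤ |x| + |z - x| := by
      calc |z| = |x + (z - x)| := by ring_nf
        _ ≤ |x| + |z - x| := abs_add_le _ _
    calc |z| * hker x z ≤ (|x| + |z - x|) * hker x z :=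
          mul_le_mul_of_nonneg_right h1 (hker_nonneg x z)
      _ = |x| * hker x z + |z - x| * hker x z := by ring

lemma main_est (u₀ : ℝ → ℝ) (hmeas : Measurable u₀) (C : ℝ) (hbd : ∀ x, |u₀ x| ≤ C)
    (hC1 : ContDiffOn ℝ 1 u₀ {(0:ℝ)}ᶜ) (α β l δ ε' R x : ℝ)
    (hl : 0 < l) (hδ : 0 < δ) (hδ1 : δ ≤ 1) (hε' : 0 ≤ ε') (hR : 0 ≤ R) (hx : |x| ≤ R)
    (H : ∀ s : ℝ, l * δ ≤ |s| → |s * deriv u₀ s| ≤ ε') :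
    |(∫ z, hker x z * u₀ (l * z)) - ∫ z, hker x z * gfun α β z|
      ≤ (C + max |α| |β|) * (2 * δ)
        + (ε' * Real.log δ⁻¹ + (|u₀ (-l) - α| + |u₀ l - β|)) * (∫ w, Real.exp (-(1/4) * w^2))
        + ε' * (R * (∫ w, Real.exp (-(1/4) * w^2)) + ∫ w, |w| * Real.exp (-(1/4) * w^2)) := by
  set G := max |α| |β| with hG
  set aa := |u₀ (-l) - α| with haa
  set bb := |u₀ l - β| with hbb
  set I := ∫ w, Real.exp (-(1/4) * w^2) with hI
  set J := ∫ w, |w| * Real.exp (-(1/4) * w^2) with hJ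
  have hC0 : 0 ≤ C := le_trans (abs_nonneg _) (hbd 0)
  have hG0 : 0 ≤ G := le_trans (abs_nonneg α) (le_max_left _ _)
  have hlog0 : 0 ≤ Real.log δ⁻¹ := Real.log_nonneg (one_le_inv_iff₀.mpr ⟨hδ, hδ1⟩)
  have haa0 : 0 ≤ aa := abs_nonneg _
  have hbb0 : 0 ≤ bb := abs_nonneg _
  have hI0 : 0 ≤ I := integral_nonneg (fun w => (Real.exp_pos _).le)
  -- integrability
  have hv : AEStronglyMeasurable (fun z => u₀ (l * z)) volume :=
    (hmeas.comp (measurable_const_mul l)).aestronglyMeasurable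
  have hint1 : Integrable (fun z => hker x z * u₀ (l * z)) :=
    integrable_hker_mul_bdd x _ hv C (fun z => hbd _)
  have hint2 : Integrable (fun z => hker x z * gfun α β z) :=
    integrable_hker_mul_bdd x _ (gfun_meas α β).aestronglyMeasurable G (gfun_bd α β)
  -- majorant
  set Φ : ℝ → ℝ := fun z =>
    (C + G) * indicator (Icc (-δ) δ) (fun z => hker x z) z
      + ((ε' * Real.log δ⁻¹ + (aa + bb)) * hker x z + ε' * (|z| * hker x z)) with hΦ
  have hΦint1 : Integrable (fun z => indicator (Icc (-δ) δ) (fun z => hker x z) z) :=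
    (integrable_hker x).indicator measurableSet_Icc
  have hΦint : Integrable Φ := by
    apply Integrable.add
    · exact hΦint1.const_mul _
    · exact (((integrable_hker x).const_mul _).add ((integrable_abs_mul_ker x).const_mul _))
  -- pointwise bound
  have hpt : ∀ z, |hker x z * u₀ (l * z) - hker x z * gfun α β z| ≤ Φ z := by
    intro z
    have hknn := hker_nonneg x z
    have hdiff : |hker x z * u₀ (l * z) - hker x z * gfun α β z|
        = hker x z * |u₀ (l * z) - gfun α β z| := by
      rw [← mul_sub, abs_mul, abs_of_nonneg hknn]
    rw [hdiff]
    simp only [hΦ]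
    by_cases hz : |z| ≤ δ
    · have hmem : z ∈ Icc (-δ) δ := mem_Icc.mpr (abs_le.mp hz)
      rw [indicator_of_mem hmem]
      have hb1 : |u₀ (l * z) - gfun α β z| ≤ C + G :=
        le_trans (abs_sub _ _) (add_le_add (hbd _) (gfun_bd α β z))
      have hterm2 : 0 ≤ (ε' * Real.log δ⁻¹ + (aa + bb)) * hker x z + ε' * (|z| * hker x z) := by
        positivity
      calc hker x z * |u₀ (l * z) - gfun α β z| ≤ hker x z * (C + G) :=
            mul_le_mul_of_nonneg_left hb1 hknn
        _ = (C + G) * hker x z := mul_comm _ _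
        _ ≤ (C + G) * hker x z
            + ((ε' * Real.log δ⁻¹ + (aa + bb)) * hker x z + ε' * (|z| * hker x z)) := by
            linarith
    · push_neg at hz
      rw [indicator_of_notMem (fun hm => (not_le.mpr hz) (abs_le.mpr (mem_Icc.mp hm)))]
      have hzd : δ ≤ |z| := hz.le
      have hkey : |u₀ (l * z) - gfun α β z| ≤ ε' * (Real.log δ⁻¹ + |z|) + (aa + bb) := by
        rcases lt_or_ge z 0 with hzneg | hzpos
        · have hgz : gfun α β z = α := if_pos hzneg
          have hz' : z ≤ -δ := by
            rw [abs_of_neg hzneg] at hzd; linarith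
          have h1 := osc_neg u₀ hC1 l δ ε' z hl hδ hδ1 hz' hε' H
          have h2 := log_abs_le δ z hδ hδ1 hzd
          calc |u₀ (l * z) - gfun α β z| = |(u₀ (l * z) - u₀ (-l)) + (u₀ (-l) - α)| := by
                rw [hgz]; ring_nf
            _ ≤ |u₀ (l * z) - u₀ (-l)| + aa := abs_add_le _ _
            _ ≤ ε' * |Real.log (abs z)| + aa := by linarith
            _ ≤ ε' * (Real.log δ⁻¹ + |z|) + aa := by nlinarith
            _ ≤ ε' * (Real.log δ⁻¹ + |z|) + (aa + bb) := by linarith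
        · have hgz : gfun α β z = β := if_neg (not_lt.mpr hzpos)
          have hz' : δ ≤ z := by
            rw [abs_of_nonneg hzpos] at hzd; linarith
          have h1 := osc_pos u₀ hC1 l δ ε' z hl hδ hδ1 hz' hε' H
          have h2 := log_abs_le δ z hδ hδ1 hzd
          calc |u₀ (l * z) - gfun α β z| = |(u₀ (l * z) - u₀ l) + (u₀ l - β)| := by
                rw [hgz]; ring_nf
            _ ≤ |u₀ (l * z) - u₀ l| + bb := abs_add_le _ _
            _ ≤ ε' * |Real.log (abs z)| + bb := by linarith
            _ ≤ ε' * (Real.log δ⁻¹ + |z|) + bb := by nlinarith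
            _ ≤ ε' * (Real.log δ⁻¹ + |z|) + (aa + bb) := by linarith
      calc hker x z * |u₀ (l * z) - gfun α β z|
          ≤ hker x z * (ε' * (Real.log δ⁻¹ + |z|) + (aa + bb)) :=
            mul_le_mul_of_nonneg_left hkey hknn
        _ = (ε' * Real.log δ⁻¹ + (aa + bb)) * hker x z + ε' * (|z| * hker x z) := by ring
        _ = (C + G) * 0 + ((ε' * Real.log δ⁻¹ + (aa + bb)) * hker x z + ε' * (|z| * hker x z)) := by
            ring
  -- conclusion chain
  have step1 : |(∫ z, hker x z * u₀ (l * z)) - ∫ z, hker x z * gfun α β z|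
      ≤ ∫ z, Φ z := by
    rw [← integral_sub hint1 hint2]
    calc |∫ z, (hker x z * u₀ (l * z) - hker x z * gfun α β z)|
        ≤ ∫ z, |hker x z * u₀ (l * z) - hker x z * gfun α β z| := by
          simpa [Real.norm_eq_abs] using
            norm_integral_le_integral_norm (fun z => hker x z * u₀ (l * z) - hker x z * gfun α β z)
      _ ≤ ∫ z, Φ z := integral_mono (hint1.sub hint2).abs hΦint hpt
  have hsplitΦ : ∫ z, Φ z = (C + G) * (∫ z, indicator (Icc (-δ) δ) (fun z => hker x z) z)
      + ((ε' * Real.log δ⁻¹ + (aa + bb)) * I + ε' * ∫ z, |z| * hker x z) := by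
    have i1 : Integrable (fun z => (C + G) * indicator (Icc (-δ) δ) (fun z => hker x z) z) :=
      hΦint1.const_mul _
    have i2 : Integrable (fun z => (ε' * Real.log δ⁻¹ + (aa + bb)) * hker x z) :=
      (integrable_hker x).const_mul _
    have i3 : Integrable (fun z => ε' * (|z| * hker x z)) :=
      (integrable_abs_mul_ker x).const_mul _
    have i23 : Integrable (fun z =>
        (ε' * Real.log δ⁻¹ + (aa + bb)) * hker x z + ε' * (|z| * hker x z)) := i2.add i3
    simp only [hΦ]
    rw [integral_add i1 i23, integral_add i2 i3,
      MeasureTheory.integral_const_mul, MeasureTheory.integral_const_mul,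
      MeasureTheory.integral_const_mul, integral_hker]
  have hind : (∫ z, indicator (Icc (-δ) δ) (fun z => hker x z) z) ≤ 2 * δ := by
    rw [integral_indicator measurableSet_Icc]
    have := norm_setIntegral_le_of_norm_le_const (μ := volume) (s := Icc (-δ) δ)
      (f := fun z => hker x z) (C := 1)
      (by rw [Real.volume_Icc]; exact ENNReal.ofReal_lt_top)
      (fun z _ => by rw [Real.norm_eq_abs, abs_of_nonneg (hker_nonneg x z)]; exact hker_le_one x z)
    rw [Real.norm_eq_abs] at this
    have h2 : (volume (Icc (-δ) δ)).toReal = 2 * δ := by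
      rw [Real.volume_Icc, ENNReal.toReal_ofReal (by linarith)]
      ring
    calc (∫ z in Icc (-δ) δ, hker x z) ≤ |∫ z in Icc (-δ) δ, hker x z| := le_abs_self _
      _ ≤ 1 * (volume (Icc (-δ) δ)).toReal := this
      _ = 2 * δ := by rw [h2]; ring
  have habs : (∫ z, |z| * hker x z) ≤ R * I + J := by
    have hmono : ∀ z, |z| * hker x z ≤ |x| * hker x z + |z - x| * hker x z := by
      intro z
      have h1 : |z| ≤ |x| + |z - x| := by
        calc |z| = |x + (z - x)| := by ring_nf
          _ ≤ |x| + |z - x| := abs_add_le _ _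
      calc |z| * hker x z ≤ (|x| + |z - x|) * hker x z :=
            mul_le_mul_of_nonneg_right h1 (hker_nonneg x z)
        _ = |x| * hker x z + |z - x| * hker x z := by ring
    calc (∫ z, |z| * hker x z)
        ≤ ∫ z, (|x| * hker x z + |z - x| * hker x z) :=
          integral_mono (integrable_abs_mul_ker x)
            (((integrable_hker x).const_mul _).add (integrable_abs_hker x)) hmono
      _ = |x| * I + J := by
          rw [integral_add ((integrable_hker x).const_mul _) (integrable_abs_hker x),
            MeasureTheory.integral_const_mul, integral_hker, integral_abs_hker]
      _ ≤ R * I + J := by nlinarith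
  calc |(∫ z, hker x z * u₀ (l * z)) - ∫ z, hker x z * gfun α β z| ≤ ∫ z, Φ z := step1
    _ = (C + G) * (∫ z, indicator (Icc (-δ) δ) (fun z => hker x z) z)
        + ((ε' * Real.log δ⁻¹ + (aa + bb)) * I + ε' * ∫ z, |z| * hker x z) := hsplitΦ
    _ ≤ (C + G) * (2 * δ) + ((ε' * Real.log δ⁻¹ + (aa + bb)) * I + ε' * (R * I + J)) := by
        have h1 := mul_le_mul_of_nonneg_left hind (by linarith : (0:ℝ) ≤ C + G)
        have h2 := mul_le_mul_of_nonneg_left habs hε'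
        linarith
    _ = (C + G) * (2 * δ) + (ε' * Real.log δ⁻¹ + (aa + bb)) * I + ε' * (R * I + J) := by ring

theorem stmt_16 (u₀ : ℝ → ℝ) (hmeas : Measurable u₀) (C : ℝ) (hbd : ∀ x, |u₀ x| ≤ C)
    (hC1 : ContDiffOn ℝ 1 u₀ {(0:ℝ)}ᶜ)
    (hosc : Tendsto (fun x => |x * deriv u₀ x|) (cocompact ℝ) (nhds 0))
    (u : ℝ → ℝ → ℝ)
    (hu : ∀ x t, 0 < t →
      u x t = (1 / (2 * Real.sqrt (π * t))) * ∫ y : ℝ, Real.exp (-(x - y)^2 / (4 * t)) * u₀ y)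
    (F : ℝ → ℝ) (hF : ∀ z, F z = (1 / (2 * Real.sqrt π)) * ∫ y in Iio z, Real.exp (-y^2 / 4))
    (α β : ℝ) (lam : ℕ → ℝ) (hlampos : ∀ n, 0 < lam n)
    (hlam : Tendsto lam atTop atTop)
    (hα : Tendsto (fun n => u₀ (-(lam n))) atTop (nhds α))
    (hβ : Tendsto (fun n => u₀ (lam n)) atTop (nhds β)) :
    ∀ K : Set ℝ, IsCompact K →
      TendstoUniformlyOn
        (fun n x => u (Real.sqrt ((lam n)^2) * x) ((lam n)^2))
        (fun x => α * F (-x) + β * F x) atTop K := by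
  intro K hK
  -- constants
  set c : ℝ := 1 / (2 * Real.sqrt π) with hc
  have hcpos : 0 < c := by
    rw [hc]
    positivity
  set I : ℝ := ∫ w, Real.exp (-(1/4) * w^2) with hI
  set J : ℝ := ∫ w, |w| * Real.exp (-(1/4) * w^2) with hJ
  have hI0 : 0 ≤ I := integral_nonneg (fun w => (Real.exp_pos _).le)
  have hJ0 : 0 ≤ J := integral_nonneg (fun w => mul_nonneg (abs_nonneg _) (Real.exp_pos _).le)
  set G : ℝ := max |α| |β| with hG
  have hC0 : 0 ≤ C := le_trans (abs_nonneg _) (hbd 0)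
  have hG0 : 0 ≤ G := le_trans (abs_nonneg α) (le_max_left _ _)
  obtain ⟨r, hr⟩ := hK.isBounded.subset_closedBall 0
  set R : ℝ := max r 0 with hR
  have hR0 : 0 ≤ R := le_max_right _ _
  have hKR : ∀ x ∈ K, |x| ≤ R := by
    intro x hx
    have := hr hx
    rw [Metric.mem_closedBall, Real.dist_eq, sub_zero] at this
    exact le_trans this (le_max_left _ _)
  -- uniform convergence
  rw [Metric.tendstoUniformlyOn_iff]
  intro ε hε
  -- choose δ
  set δ : ℝ := min 1 (ε / (6 * c * (C + G + 1))) with hδdef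
  have hδpos : 0 < δ := lt_min one_pos (by positivity)
  have hδ1 : δ ≤ 1 := min_le_left _ _
  have hδsmall : c * ((C + G) * (2 * δ)) ≤ ε / 3 := by
    have h1 : δ ≤ ε / (6 * c * (C + G + 1)) := min_le_right _ _
    have h2 : 0 < 6 * c * (C + G + 1) := by positivity
    rw [le_div_iff₀ h2] at h1
    nlinarith
  have hlog0 : 0 ≤ Real.log δ⁻¹ := Real.log_nonneg (one_le_inv_iff₀.mpr ⟨hδpos, hδ1⟩)
  -- choose ε'
  set M : ℝ := c * (Real.log δ⁻¹ * I + (R * I + J)) + 1 with hM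
  have hM0 : 0 < M := by positivity
  set ε' : ℝ := ε / (3 * M) with hε'def
  have hε'pos : 0 < ε' := by positivity
  have hε'small : c * (ε' * Real.log δ⁻¹ * I + ε' * (R * I + J)) ≤ ε / 3 := by
    have : c * (ε' * Real.log δ⁻¹ * I + ε' * (R * I + J)) = ε' * (M - 1) := by
      rw [hM]; ring
    rw [this, hε'def]
    rw [div_mul_eq_mul_div, div_le_div_iff₀ (by positivity) (by norm_num : (0:ℝ) < 3)]
    nlinarith
  -- get threshold A from hosc
  have hev : (fun s => |s * deriv u₀ s|) ⁻¹' (Iio ε') ∈ cocompact ℝ :=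
    hosc (Iio_mem_nhds hε'pos)
  obtain ⟨t, htc, hsubt⟩ := mem_cocompact.mp hev
  obtain ⟨r₀, hr₀⟩ := htc.isBounded.subset_closedBall 0
  set A : ℝ := max r₀ 0 + 1 with hA
  have hosc' : ∀ s : ℝ, A ≤ |s| → |s * deriv u₀ s| ≤ ε' := by
    intro s hs
    have hst : s ∉ t := by
      intro hst
      have := hr₀ hst
      rw [Metric.mem_closedBall, Real.dist_eq, sub_zero] at this
      have : |s| ≤ max r₀ 0 := le_trans this (le_max_left _ _)
      linarith [le_max_right r₀ 0]
    exact (le_of_lt (hsubt hst))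
  -- eventual bounds
  have hab : Tendsto (fun n => |u₀ (-(lam n)) - α| + |u₀ (lam n) - β|) atTop (nhds 0) := by
    have h1 : Tendsto (fun n => |u₀ (-(lam n)) - α|) atTop (nhds 0) := by
      have := (hα.sub (tendsto_const_nhds (x := α))).abs
      simpa using this
    have h2 : Tendsto (fun n => |u₀ (lam n) - β|) atTop (nhds 0) := by
      have := (hβ.sub (tendsto_const_nhds (x := β))).abs
      simpa using this
    simpa using h1.add h2
  have hev2 : ∀ᶠ n in atTop,
      |u₀ (-(lam n)) - α| + |u₀ (lam n) - β| < ε / (3 * (c * I + 1)) :=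
    hab.eventually (Iio_mem_nhds (by positivity))
  have hev1 : ∀ᶠ n in atTop, A / δ ≤ lam n := hlam.eventually_ge_atTop _
  filter_upwards [hev1, hev2] with n hn1 hn2
  intro x hx
  -- rewrite both sides
  have hl := hlampos n
  have hsq : Real.sqrt ((lam n)^2) = lam n := Real.sqrt_sq hl.le
  have hupos : (0:ℝ) < (lam n)^2 := by positivity
  have hurw : u (Real.sqrt ((lam n)^2) * x) ((lam n)^2)
      = c * ∫ z : ℝ, hker x z * u₀ (lam n * z) := by
    rw [hsq, hu (lam n * x) ((lam n)^2) hupos]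
    exact rescale u₀ (lam n) x hl
  have hLrw : α * F (-x) + β * F x = c * ∫ z : ℝ, hker x z * gfun α β z := by
    rw [hF (-x), hF x, ← limit_eq α β x]
    ring
  rw [Real.dist_eq, hurw, hLrw]
  have hest := main_est u₀ hmeas C hbd hC1 α β (lam n) δ ε' R x hl hδpos hδ1 hε'pos.le
    hR0 (hKR x hx)
    (by
      intro s hs
      apply hosc' s
      have hAd : A ≤ lam n * δ := by
        rw [div_le_iff₀ hδpos] at hn1
        linarith
      linarith)
  have habs : |c * (∫ z : ℝ, hker x z * gfun α β z) - c * ∫ z : ℝ, hker x z * u₀ (lam n * z)|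
      = c * |(∫ z : ℝ, hker x z * u₀ (lam n * z)) - ∫ z : ℝ, hker x z * gfun α β z| := by
    rw [← mul_sub, abs_mul, abs_of_pos hcpos, abs_sub_comm]
  rw [habs]
  rw [← hI, ← hJ, ← hG] at hest
  set ab : ℝ := |u₀ (-(lam n)) - α| + |u₀ (lam n) - β| with hab2
  have hnn : 0 ≤ ab := by positivity
  have e3 : c * (ab * I) < ε / 3 := by
    calc c * (ab * I) = ab * (c * I) := by ring
      _ ≤ ab * (c * I + 1) := mul_le_mul_of_nonneg_left (by linarith) hnn
      _ < ε / (3 * (c * I + 1)) * (c * I + 1) := by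
          apply mul_lt_mul_of_pos_right hn2 (by positivity)
      _ = ε / 3 := by field_simp
  have hfinal : c * ((C + G) * (2 * δ) + (ε' * Real.log δ⁻¹ + ab) * I + ε' * (R * I + J))
      < ε := by
    have hsplit : c * ((C + G) * (2 * δ) + (ε' * Real.log δ⁻¹ + ab) * I + ε' * (R * I + J))
        = c * ((C + G) * (2 * δ)) + c * (ε' * Real.log δ⁻¹ * I + ε' * (R * I + J))
          + c * (ab * I) := by ring
    rw [hsplit]
    linarith [hδsmall, hε'small, e3]
  calc c * |(∫ z : ℝ, hker x z * u₀ (lam n * z)) - ∫ z : ℝ, hker x z * gfun α β z|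
      ≤ c * ((C + G) * (2 * δ) + (ε' * Real.log δ⁻¹ + ab) * I + ε' * (R * I + J)) :=
        mul_le_mul_of_nonneg_left hest hcpos.le
      _ < ε := hfinal
end
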